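/- arXiv:1501.02151 — 6 statements merged into one kernel-verified Lean document; each statement's English description precedes it below -/
import Mathlib

section
/- Let X_k = a_k X_{k-1} + u_k be a PAR(1) time series with periodic coefficients of period P, φ = ∏_{r=1}^P a_r with |φ| > 1, X_0 square-integrable, and {u_k} centered periodically distributed with second moments. Then for each r = 1,…,P, φ^{-n} X_{nP+r} converges almost surely and in quadratic mean to A_1^r (X_0 + ζ), where ζ = lim_n ∑_{l=0}^{n} φ^{-l-1} U_l^{(P)} (limit a.s. and in L²). -/
open MeasureTheory Filter Topology
open scoped ENNReal NNReal

private lemma integral_sq_eq_sq {Ω : Type*} [MeasurableSpace Ω] (μ : Measure Ω)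
    (f : Ω → ℝ) (hf : AEStronglyMeasurable f μ) :
    ∫ ω, f ω ^ 2 ∂μ = ((eLpNorm f 2 μ).toReal) ^ 2 := by
  have hsq : AEStronglyMeasurable (fun ω => f ω ^ 2) μ := by
    have := hf.mul hf
    simpa [pow_two, Pi.mul_def] using this
  rw [integral_eq_lintegral_of_nonneg_ae (ae_of_all _ fun ω => sq_nonneg (f ω)) hsq]
  have h1 : ∀ ω, ENNReal.ofReal (f ω ^ 2) = (‖f ω‖₊ : ℝ≥0∞) ^ 2 := by
    intro ω
    rw [← enorm_eq_nnnorm, Real.enorm_eq_ofReal_abs, ← ENNReal.ofReal_pow (abs_nonneg _), sq_abs]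
  simp_rw [h1]
  rw [eLpNorm_eq_lintegral_rpow_enorm_toReal (by norm_num) (by norm_num)]
  simp only [enorm_eq_nnnorm]
  have h2 : (2 : ℝ≥0∞).toReal = (2 : ℝ) := by norm_num
  rw [h2]
  have h3 : ∀ ω, ((‖f ω‖₊ : ℝ≥0∞)) ^ (2 : ℝ) = (‖f ω‖₊ : ℝ≥0∞) ^ (2 : ℕ) := by
    intro ω
    rw [← ENNReal.rpow_natCast]
    norm_num
  simp_rw [h3]
  set L : ℝ≥0∞ := ∫⁻ ω, (‖f ω‖₊ : ℝ≥0∞) ^ (2 : ℕ) ∂μ with hL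
  rw [← ENNReal.toReal_rpow]
  rw [← Real.rpow_natCast (L.toReal ^ (1 / (2:ℝ))) 2, ← Real.rpow_mul ENNReal.toReal_nonneg]
  norm_num

/-- Proposition 1: in the explosive PAR(1) model with |φ| > 1,
φ^{-n} X_{nP+r} → A_1^r (X_0 + ζ) a.s. and in quadratic mean, where
ζ is the a.s./L² limit of Z_n = ∑_{l=0}^n φ^{-l-1} U_l^{(P)}. -/
theorem stmt6 {Ω : Type*} [MeasurableSpace Ω] (μ : Measure Ω) [IsProbabilityMeasure μ]
    (P : ℕ) (hP : 1 ≤ P) (a : ℕ → ℝ) (hper : ∀ k, a (k + P) = a k)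
    (φ : ℝ) (hφdef : φ = ∏ j ∈ Finset.Icc 1 P, a j) (hφ : 1 < |φ|)
    (u : ℕ → Ω → ℝ) (humeas : ∀ k, Measurable (u k)) (huL2 : ∀ k, MemLp (u k) 2 μ)
    (hucent : ∀ k, ∫ ω, u k ω ∂μ = 0)
    -- the innovation is periodically distributed with period P
    (hpd : ∀ m : ℕ,
      Measure.map (fun ω => fun i : Fin m => u ((i : ℕ) + P) ω) μ
        = Measure.map (fun ω => fun i : Fin m => u (i : ℕ) ω) μ)
    (X : ℕ → Ω → ℝ) (hX0 : MemLp (X 0) 2 μ)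
    (hrec : ∀ k ω, X (k + 1) ω = a (k + 1) * X k ω + u (k + 1) ω)
    (U : ℕ → ℕ → Ω → ℝ)
    (hU : ∀ n r ω, U n r ω
      = ∑ s ∈ Finset.Icc 1 r, (∏ j ∈ Finset.Icc (s + 1) r, a j) * u (n * P + s) ω)
    (Z : ℕ → Ω → ℝ)
    (hZ : ∀ n ω, Z n ω = ∑ l ∈ Finset.range (n + 1), (φ ^ (l + 1))⁻¹ * U l P ω) :
    ∃ ζ : Ω → ℝ, MemLp ζ 2 μ ∧
      (∀ᵐ ω ∂μ, Tendsto (fun n => Z n ω) atTop (𝓝 (ζ ω))) ∧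
      Tendsto (fun n => ∫ ω, (Z n ω - ζ ω) ^ 2 ∂μ) atTop (𝓝 0) ∧
      ∀ r : ℕ, 1 ≤ r → r ≤ P →
        (∀ᵐ ω ∂μ, Tendsto (fun n => (φ ^ n)⁻¹ * X (n * P + r) ω) atTop
          (𝓝 ((∏ j ∈ Finset.Icc 1 r, a j) * (X 0 ω + ζ ω)))) ∧
        Tendsto (fun n => ∫ ω,
            ((φ ^ n)⁻¹ * X (n * P + r) ω
              - (∏ j ∈ Finset.Icc 1 r, a j) * (X 0 ω + ζ ω)) ^ 2 ∂μ)
          atTop (𝓝 0) := by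
  classical
  have hφ0 : φ ≠ 0 := by
    intro h
    rw [h] at hφ
    simp at hφ
    linarith
  -- the geometric ratio
  set q : ℝ≥0∞ := ENNReal.ofReal |φ|⁻¹ with hqdef
  have hqlt : q < 1 := by
    rw [hqdef]
    rw [ENNReal.ofReal_lt_one]
    rw [inv_lt_one_iff₀]
    right; exact hφ
  have hqtop : q ≠ ∞ := (lt_of_lt_of_le hqlt le_top).ne
  have hqpow : ∀ n : ℕ, (‖(φ ^ n)⁻¹‖₊ : ℝ≥0∞) = q ^ n := by
    intro n
    rw [← enorm_eq_nnnorm, Real.enorm_eq_ofReal_abs, abs_inv, abs_pow, ← inv_pow, hqdef,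
      ← ENNReal.ofReal_pow (inv_nonneg.mpr (abs_nonneg _))]
  have hgeo : ∑' i : ℕ, q ^ i = (1 - q)⁻¹ := ENNReal.tsum_geometric q
  have hgeofin : (1 - q)⁻¹ ≠ ∞ := by
    rw [Ne, ENNReal.inv_eq_top]
    exact (tsub_pos_of_lt hqlt).ne'
  -- measurability
  have hUmeas : ∀ n r, Measurable (U n r) := by
    intro n r
    have h : U n r = fun ω => ∑ s ∈ Finset.Icc 1 r,
        (∏ j ∈ Finset.Icc (s + 1) r, a j) * u (n * P + s) ω := funext (hU n r)
    rw [h]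
    exact Finset.measurable_sum _ fun s _ => (humeas _).const_mul _
  have hZmeas : ∀ n, Measurable (Z n) := by
    intro n
    have h : Z n = fun ω => ∑ l ∈ Finset.range (n + 1),
        (φ ^ (l + 1))⁻¹ * U l P ω := funext (hZ n)
    rw [h]
    exact Finset.measurable_sum _ fun l _ => (hUmeas l P).const_mul _
  -- equality of laws of the innovations along periods
  have hlaw1 : ∀ k, Measure.map (u (k + P)) μ = Measure.map (u k) μ := by
    intro k
    have h := hpd (k + 1)
    have hm1 : Measurable fun ω => fun i : Fin (k + 1) => u ((i : ℕ) + P) ω :=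
      measurable_pi_lambda _ fun i => humeas _
    have hm2 : Measurable fun ω => fun i : Fin (k + 1) => u (i : ℕ) ω :=
      measurable_pi_lambda _ fun i => humeas _
    have hev : Measurable fun v : Fin (k + 1) → ℝ => v ⟨k, Nat.lt_succ_self k⟩ :=
      measurable_pi_apply _
    have h2 := congrArg (Measure.map (fun v : Fin (k + 1) → ℝ => v ⟨k, Nat.lt_succ_self k⟩)) h
    rwa [Measure.map_map hev hm1, Measure.map_map hev hm2] at h2
  have hlaw : ∀ s l, Measure.map (u (l * P + s)) μ = Measure.map (u s) μ := by
    intro s l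
    induction l with
    | zero => simp
    | succ m ih =>
      have h1 : (m + 1) * P + s = (m * P + s) + P := by ring
      rw [h1, hlaw1, ih]
  have hnorm_u : ∀ l s, eLpNorm (u (l * P + s)) 2 μ = eLpNorm (u s) 2 μ := by
    intro l s
    have h1 : eLpNorm (u (l * P + s)) 2 μ = eLpNorm (id : ℝ → ℝ) 2 (Measure.map (u (l * P + s)) μ) :=
      (eLpNorm_map_measure aestronglyMeasurable_id (humeas _).aemeasurable).symm
    have h2 : eLpNorm (u s) 2 μ = eLpNorm (id : ℝ → ℝ) 2 (Measure.map (u s) μ) :=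
      (eLpNorm_map_measure aestronglyMeasurable_id (humeas _).aemeasurable).symm
    rw [h1, h2, hlaw]
  -- the uniform bound on the L² norms of U n r
  set M : ℕ → ℝ≥0∞ := fun r => ∑ s ∈ Finset.Icc 1 r,
    (‖∏ j ∈ Finset.Icc (s + 1) r, a j‖₊ : ℝ≥0∞) * eLpNorm (u s) 2 μ with hMdef
  have hMfin : ∀ r, M r ≠ ∞ := by
    intro r
    rw [hMdef]
    refine (ENNReal.sum_lt_top.mpr fun s _ => ?_).ne
    exact ENNReal.mul_lt_top ENNReal.coe_lt_top (huL2 s).2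
  have hUbound : ∀ n r, eLpNorm (U n r) 2 μ ≤ M r := by
    intro n r
    have hrepr : U n r = ∑ s ∈ Finset.Icc 1 r,
        (∏ j ∈ Finset.Icc (s + 1) r, a j) • u (n * P + s) := by
      funext ω
      rw [hU]
      simp [smul_eq_mul]
    rw [hrepr]
    refine (eLpNorm_sum_le
      (fun s _ => ((humeas _).const_smul _).aestronglyMeasurable) one_le_two).trans ?_
    refine Finset.sum_le_sum fun s _ => ?_
    rw [eLpNorm_const_smul, hnorm_u]
    exact le_rfl
  have hUmem : ∀ n r, MemLp (U n r) 2 μ :=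
    fun n r => ⟨(hUmeas n r).aestronglyMeasurable, (hUbound n r).trans_lt (hMfin r).lt_top⟩
  clear_value M
  -- the summands of Z
  set t : ℕ → Ω → ℝ := fun l ω => (φ ^ (l + 1))⁻¹ * U l P ω with htdef
  have htmeas : ∀ l, Measurable (t l) := fun l => (hUmeas l P).const_mul _
  have htbound : ∀ l, eLpNorm (t l) 2 μ ≤ q ^ (l + 1) * M P := by
    intro l
    have h : t l = (φ ^ (l + 1))⁻¹ • U l P := by
      funext ω; simp [htdef, smul_eq_mul]
    rw [h, eLpNorm_const_smul, enorm_eq_nnnorm, hqpow]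
    exact mul_le_mul_right (hUbound l P) _
  have hZt : ∀ n ω, Z n ω = ∑ l ∈ Finset.range (n + 1), t l ω := fun n ω => hZ n ω
  -- the scaled remainders
  have hUs : ∀ n r, eLpNorm (fun ω => (φ ^ n)⁻¹ * U n r ω) 2 μ ≤ q ^ n * M r := by
    intro n r
    have h : (fun ω => (φ ^ n)⁻¹ * U n r ω) = (φ ^ n)⁻¹ • U n r := by
      funext ω; simp [smul_eq_mul]
    rw [h, eLpNorm_const_smul, enorm_eq_nnnorm, hqpow]
    exact mul_le_mul_right (hUbound n r) _
  -- the limit ζ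
  set ζ : Ω → ℝ := fun ω => ∑' l, t l ω with hζdef
  -- a.e. summability
  have haes : ∀ᵐ ω ∂μ, Summable fun l => t l ω := by
    have hmeas : Measurable fun ω => ∑' l, (‖t l ω‖₊ : ℝ≥0∞) :=
      Measurable.ennreal_tsum fun l => (htmeas l).enorm
    have hL1t : ∀ l, ∫⁻ ω, (‖t l ω‖₊ : ℝ≥0∞) ∂μ ≤ q ^ (l + 1) * M P := by
      intro l
      calc ∫⁻ ω, (‖t l ω‖₊ : ℝ≥0∞) ∂μ = eLpNorm (t l) 1 μ :=
            (eLpNorm_one_eq_lintegral_enorm (f := t l)).symm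
        _ ≤ eLpNorm (t l) 2 μ :=
            eLpNorm_le_eLpNorm_of_exponent_le one_le_two (htmeas l).aestronglyMeasurable
        _ ≤ q ^ (l + 1) * M P := htbound l
    have hfin : ∑' l : ℕ, (q ^ (l + 1) * M P) ≠ ∞ := by
      rw [ENNReal.tsum_mul_right, ENNReal.tsum_geometric_add_one]
      exact ENNReal.mul_ne_top (ENNReal.mul_ne_top hqtop hgeofin) (hMfin P)
    have hint : ∫⁻ ω, ∑' l, (‖t l ω‖₊ : ℝ≥0∞) ∂μ ≠ ∞ := by
      simp only [← enorm_eq_nnnorm]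
      rw [lintegral_tsum fun l => ((htmeas l).enorm).aemeasurable]
      exact ne_top_of_le_ne_top hfin (ENNReal.tsum_le_tsum fun l => hL1t l)
    filter_upwards [ae_lt_top hmeas hint] with ω hω
    have h1 : Summable fun l => ‖t l ω‖₊ := ENNReal.tsum_coe_ne_top_iff_summable.mp hω.ne
    exact Summable.of_nnnorm h1
  -- a.e. convergence of Z to ζ
  have haeZ : ∀ᵐ ω ∂μ, Tendsto (fun n => Z n ω) atTop (𝓝 (ζ ω)) := by
    filter_upwards [haes] with ω hω
    have h1 : Tendsto (fun n => ∑ l ∈ Finset.range n, t l ω) atTop (𝓝 (ζ ω)) :=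
      hω.hasSum.tendsto_sum_nat
    have h2 : Tendsto (fun n => ∑ l ∈ Finset.range (n + 1), t l ω) atTop (𝓝 (ζ ω)) :=
      h1.comp (tendsto_add_atTop_nat 1)
    have h3 : (fun n => Z n ω) = fun n => ∑ l ∈ Finset.range (n + 1), t l ω :=
      funext fun n => hZt n ω
    rw [h3]
    exact h2
  -- measurability of ζ
  have hζaesm : AEStronglyMeasurable ζ μ :=
    aestronglyMeasurable_of_tendsto_ae atTop (fun n => (hZmeas n).aestronglyMeasurable) haeZ
  -- the L² bound on Z n - ζ
  have hZζ : ∀ n, eLpNorm (fun ω => Z n ω - ζ ω) 2 μ ≤ q ^ n * (M P * (1 - q)⁻¹) := by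
    intro n
    have hcomm : eLpNorm (fun ω => Z n ω - ζ ω) 2 μ = eLpNorm (fun ω => ζ ω - Z n ω) 2 μ :=
      eLpNorm_sub_comm (Z n) ζ 2 μ
    rw [hcomm]
    have hfae : ∀ᵐ ω ∂μ, Tendsto (fun m => Z (m + (n + 1)) ω - Z n ω) atTop
        (𝓝 (ζ ω - Z n ω)) := by
      filter_upwards [haeZ] with ω hω
      exact (hω.comp (tendsto_add_atTop_nat (n + 1))).sub tendsto_const_nhds
    refine le_trans (Lp.eLpNorm_lim_le_liminf_eLpNorm
      (fun m => ((hZmeas (m + (n + 1))).sub (hZmeas n)).aestronglyMeasurable) _ hfae) ?_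
    have hbd : ∀ m, eLpNorm (fun ω => Z (m + (n + 1)) ω - Z n ω) 2 μ
        ≤ q ^ n * (M P * (1 - q)⁻¹) := by
      intro m
      have hfun : (fun ω => Z (m + (n + 1)) ω - Z n ω)
          = ∑ l ∈ Finset.Ico (n + 1) (m + (n + 1) + 1), t l := by
        funext ω
        rw [Finset.sum_apply]
        rw [Finset.sum_Ico_eq_sub _ (by omega : n + 1 ≤ m + (n + 1) + 1)]
        rw [hZt, hZt]
      rw [hfun]
      refine (eLpNorm_sum_le (fun l _ => (htmeas l).aestronglyMeasurable) one_le_two).trans ?_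
      calc ∑ l ∈ Finset.Ico (n + 1) (m + (n + 1) + 1), eLpNorm (t l) 2 μ
          ≤ ∑ l ∈ Finset.Ico (n + 1) (m + (n + 1) + 1), q ^ (l + 1) * M P :=
            Finset.sum_le_sum fun l _ => htbound l
        _ = ∑ i ∈ Finset.range (m + 1), q ^ ((n + 1 + i) + 1) * M P := by
            rw [Finset.sum_Ico_eq_sum_range]
            have h5 : m + (n + 1) + 1 - (n + 1) = m + 1 := by omega
            rw [h5]
        _ ≤ ∑ i ∈ Finset.range (m + 1), q ^ n * (q ^ i * M P) := by
            refine Finset.sum_le_sum fun i _ => ?_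
            have h6 : q ^ ((n + 1 + i) + 1) = q ^ n * q ^ i * q ^ 2 := by ring
            rw [h6]
            calc q ^ n * q ^ i * q ^ 2 * M P ≤ q ^ n * q ^ i * 1 * M P := by
                  refine mul_le_mul_left (mul_le_mul_right ?_ _) _
                  exact pow_le_one' hqlt.le 2
              _ = q ^ n * (q ^ i * M P) := by ring
        _ = q ^ n * ((∑ i ∈ Finset.range (m + 1), q ^ i) * M P) := by
            rw [Finset.sum_mul, Finset.mul_sum]
        _ ≤ q ^ n * ((1 - q)⁻¹ * M P) := by
            refine mul_le_mul_right (mul_le_mul_left ?_ _) _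
            rw [← hgeo]
            exact ENNReal.sum_le_tsum _
        _ = q ^ n * (M P * (1 - q)⁻¹) := by ring
    refine le_trans (Filter.liminf_le_liminf (Filter.Eventually.of_forall hbd)) ?_
    simp [Filter.liminf_const]
  have hCfin : M P * (1 - q)⁻¹ ≠ ∞ := ENNReal.mul_ne_top (hMfin P) hgeofin
  -- MemLp of ζ
  have hζmem : MemLp ζ 2 μ := by
    refine ⟨hζaesm, ?_⟩
    have h1 : ζ = (fun ω => ζ ω - Z 0 ω) + Z 0 := by
      funext ω; simp
    rw [h1]
    refine (eLpNorm_add_le (hζaesm.sub (hZmeas 0).aestronglyMeasurable)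
      (hZmeas 0).aestronglyMeasurable one_le_two).trans_lt ?_
    have h2 : eLpNorm (fun ω => ζ ω - Z 0 ω) 2 μ < ∞ := by
      have hc : eLpNorm (fun ω => ζ ω - Z 0 ω) 2 μ = eLpNorm (fun ω => Z 0 ω - ζ ω) 2 μ :=
        eLpNorm_sub_comm ζ (Z 0) 2 μ
      rw [hc]
      refine (hZζ 0).trans_lt ?_
      simpa using hCfin.lt_top
    have h3 : eLpNorm (Z 0) 2 μ < ∞ := by
      have h4 : Z 0 = (φ ^ (0 + 1))⁻¹ • U 0 P := by
        funext ω; rw [hZ]; simp [smul_eq_mul]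
      rw [h4, eLpNorm_const_smul]
      exact ENNReal.mul_lt_top ENNReal.coe_lt_top (hUmem 0 P).2
    exact ENNReal.add_lt_top.mpr ⟨h2, h3⟩
  -- eLpNorm convergence of Z to ζ
  have htend0 : Tendsto (fun n => eLpNorm (fun ω => Z n ω - ζ ω) 2 μ) atTop (𝓝 0) := by
    have h1 : Tendsto (fun n : ℕ => q ^ n * (M P * (1 - q)⁻¹)) atTop (𝓝 0) := by
      have h2 := ENNReal.Tendsto.mul_const
        (ENNReal.tendsto_pow_atTop_nhds_zero_of_lt_one hqlt) (Or.inr hCfin)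
      simpa using h2
    exact tendsto_of_tendsto_of_tendsto_of_le_of_le tendsto_const_nhds h1
      (fun n => zero_le) (fun n => hZζ n)
  -- L² (integral form) convergence of Z to ζ
  have hint1 : Tendsto (fun n => ∫ ω, (Z n ω - ζ ω) ^ 2 ∂μ) atTop (𝓝 0) := by
    have heq : ∀ n, ∫ ω, (Z n ω - ζ ω) ^ 2 ∂μ
        = ((eLpNorm (fun ω => Z n ω - ζ ω) 2 μ).toReal) ^ 2 := fun n =>
      integral_sq_eq_sq μ _ ((hZmeas n).aestronglyMeasurable.sub hζaesm)
    simp_rw [heq]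
    have h2 : Tendsto (fun n => (eLpNorm (fun ω => Z n ω - ζ ω) 2 μ).toReal) atTop (𝓝 0) := by
      have := (ENNReal.tendsto_toReal ENNReal.zero_ne_top).comp htend0
      simpa [Function.comp_def] using this
    have h3 := h2.pow 2
    simpa using h3
  -- a.e. convergence to zero of the scaled remainders
  have haeU : ∀ᵐ ω ∂μ, ∀ r, Tendsto (fun n => (φ ^ n)⁻¹ * U n r ω) atTop (𝓝 0) := by
    rw [ae_all_iff]
    intro r
    have hmeas : Measurable fun ω => ∑' n, (‖(φ ^ n)⁻¹ * U n r ω‖₊ : ℝ≥0∞) :=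
      Measurable.ennreal_tsum fun n => ((hUmeas n r).const_mul _).enorm
    have hL1 : ∀ n, ∫⁻ ω, (‖(φ ^ n)⁻¹ * U n r ω‖₊ : ℝ≥0∞) ∂μ ≤ q ^ n * M r := by
      intro n
      calc ∫⁻ ω, (‖(φ ^ n)⁻¹ * U n r ω‖₊ : ℝ≥0∞) ∂μ
          = eLpNorm (fun ω => (φ ^ n)⁻¹ * U n r ω) 1 μ := (eLpNorm_one_eq_lintegral_enorm (f := fun ω => (φ ^ n)⁻¹ * U n r ω)).symm
        _ ≤ eLpNorm (fun ω => (φ ^ n)⁻¹ * U n r ω) 2 μ :=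
            eLpNorm_le_eLpNorm_of_exponent_le one_le_two
              ((hUmeas n r).const_mul _).aestronglyMeasurable
        _ ≤ q ^ n * M r := hUs n r
    have hfin : ∑' n : ℕ, (q ^ n * M r) ≠ ∞ := by
      rw [ENNReal.tsum_mul_right, hgeo]
      exact ENNReal.mul_ne_top hgeofin (hMfin r)
    have hint : ∫⁻ ω, ∑' n, (‖(φ ^ n)⁻¹ * U n r ω‖₊ : ℝ≥0∞) ∂μ ≠ ∞ := by
      simp only [← enorm_eq_nnnorm]
      rw [lintegral_tsum fun n => (((hUmeas n r).const_mul _).enorm).aemeasurable]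
      exact ne_top_of_le_ne_top hfin (ENNReal.tsum_le_tsum fun n => hL1 n)
    filter_upwards [ae_lt_top hmeas hint] with ω hω
    have h1 : Summable fun n => ‖(φ ^ n)⁻¹ * U n r ω‖₊ :=
      ENNReal.tsum_coe_ne_top_iff_summable.mp hω.ne
    exact (Summable.of_nnnorm h1).tendsto_atTop_zero
  -- AESM of X
  have hXaesm : ∀ k, AEStronglyMeasurable (X k) μ := by
    intro k
    induction k with
    | zero => exact hX0.1
    | succ m ih =>
      have h : X (m + 1) = fun ω => a (m + 1) * X m ω + u (m + 1) ω :=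
        funext fun ω => hrec m ω
      rw [h]
      exact (ih.const_mul _).add (humeas (m + 1)).aestronglyMeasurable
  -- periodicity of a
  have hashift : ∀ l j, a (l * P + j) = a j := by
    intro l j
    induction l with
    | zero => simp
    | succ m ih =>
      have h1 : (m + 1) * P + j = (m * P + j) + P := by ring
      rw [h1, hper, ih]
  -- decomposition of X at n*P + r
  have hXdec : ∀ n r ω, X (n * P + r) ω
      = (∏ j ∈ Finset.Icc 1 r, a j) * X (n * P) ω + U n r ω := by
    intro n r ω
    induction r with
    | zero => simp [hU]
    | succ m ih =>
      have h1 : n * P + (m + 1) = (n * P + m) + 1 := by ring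
      rw [h1, hrec, ih]
      have h2 : a (n * P + m + 1) = a (m + 1) := by
        have h3 : n * P + m + 1 = n * P + (m + 1) := by ring
        rw [h3, hashift]
      rw [h2, hU n m, hU n (m + 1)]
      rw [Finset.prod_Icc_succ_top (Nat.le_add_left 1 m)]
      rw [Finset.sum_Icc_succ_top (Nat.le_add_left 1 m), h1]
      have hsum : ∑ s ∈ Finset.Icc 1 m,
          (∏ j ∈ Finset.Icc (s + 1) (m + 1), a j) * u (n * P + s) ω
          = a (m + 1) * ∑ s ∈ Finset.Icc 1 m,
            (∏ j ∈ Finset.Icc (s + 1) m, a j) * u (n * P + s) ω := by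
        rw [Finset.mul_sum]
        refine Finset.sum_congr rfl fun s hs => ?_
        have hsm : s ≤ m := (Finset.mem_Icc.mp hs).2
        rw [Finset.prod_Icc_succ_top (Nat.succ_le_succ hsm)]
        ring
      rw [hsum]
      have hemp : (∏ j ∈ Finset.Icc (m + 1 + 1) (m + 1), a j) = 1 := by
        rw [Finset.Icc_eq_empty (by omega)]
        exact Finset.prod_empty
      rw [hemp]
      ring
  -- X at full periods
  have hXP : ∀ n ω, X ((n + 1) * P) ω = φ * X (n * P) ω + U n P ω := by
    intro n ω
    have h1 : (n + 1) * P = n * P + P := by ring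
    rw [h1, hXdec n P ω, ← hφdef]
  -- the normalized full-period process
  have hY : ∀ n ω, (φ ^ (n + 1))⁻¹ * X ((n + 1) * P) ω = X 0 ω + Z n ω := by
    intro n ω
    induction n with
    | zero =>
      rw [hXP 0 ω, hZ]
      simp only [Nat.zero_mul, Finset.range_one, Finset.sum_singleton, pow_one, zero_add]
      field_simp
    | succ m ih =>
      rw [hXP (m + 1) ω]
      have hZsucc : Z (m + 1) ω = Z m ω + (φ ^ (m + 1 + 1))⁻¹ * U (m + 1) P ω := by
        rw [hZ, hZ, Finset.sum_range_succ]
      rw [hZsucc, ← add_assoc, ← ih]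
      have hφp : φ ^ (m + 1) ≠ 0 := pow_ne_zero _ hφ0
      field_simp
      ring
  -- key identity
  have hkey : ∀ m r ω, (φ ^ (m + 1))⁻¹ * X ((m + 1) * P + r) ω
      = (∏ j ∈ Finset.Icc 1 r, a j) * (X 0 ω + Z m ω)
        + (φ ^ (m + 1))⁻¹ * U (m + 1) r ω := by
    intro m r ω
    rw [hXdec (m + 1) r ω, ← hY m ω]
    ring
  refine ⟨ζ, hζmem, haeZ, hint1, ?_⟩
  intro r hr1 hrP
  constructor
  · -- a.s. convergence
    filter_upwards [haeZ, haeU] with ω hωZ hωU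
    have h1 : Tendsto (fun m => (φ ^ (m + 1))⁻¹ * X ((m + 1) * P + r) ω) atTop
        (𝓝 ((∏ j ∈ Finset.Icc 1 r, a j) * (X 0 ω + ζ ω))) := by
      have hfun : (fun m => (φ ^ (m + 1))⁻¹ * X ((m + 1) * P + r) ω)
          = fun m => (∏ j ∈ Finset.Icc 1 r, a j) * (X 0 ω + Z m ω)
            + (φ ^ (m + 1))⁻¹ * U (m + 1) r ω := funext fun m => hkey m r ω
      rw [hfun]
      have h2 : Tendsto (fun m => (∏ j ∈ Finset.Icc 1 r, a j) * (X 0 ω + Z m ω)) atTop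
          (𝓝 ((∏ j ∈ Finset.Icc 1 r, a j) * (X 0 ω + ζ ω))) :=
        (tendsto_const_nhds.add hωZ).const_mul _
      have h3 : Tendsto (fun m => (φ ^ (m + 1))⁻¹ * U (m + 1) r ω) atTop (𝓝 0) :=
        (hωU r).comp (tendsto_add_atTop_nat 1)
      simpa using h2.add h3
    exact (tendsto_add_atTop_iff_nat
      (f := fun n => (φ ^ n)⁻¹ * X (n * P + r) ω) 1).mp h1
  · -- quadratic mean convergence
    set A : ℝ := ∏ j ∈ Finset.Icc 1 r, a j with hAdef
    have hgaesm : ∀ n, AEStronglyMeasurable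
        (fun ω => (φ ^ n)⁻¹ * X (n * P + r) ω - A * (X 0 ω + ζ ω)) μ := fun n =>
      ((hXaesm _).const_mul _).sub ((hX0.1.add hζaesm).const_mul _)
    have heq : ∀ n, ∫ ω, ((φ ^ n)⁻¹ * X (n * P + r) ω - A * (X 0 ω + ζ ω)) ^ 2 ∂μ
        = ((eLpNorm (fun ω => (φ ^ n)⁻¹ * X (n * P + r) ω - A * (X 0 ω + ζ ω)) 2 μ).toReal) ^ 2 :=
      fun n => integral_sq_eq_sq μ _ (hgaesm n)
    simp_rw [heq]
    have hnorm : Tendsto (fun n => eLpNorm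
        (fun ω => (φ ^ n)⁻¹ * X (n * P + r) ω - A * (X 0 ω + ζ ω)) 2 μ) atTop (𝓝 0) := by
      have hbd : ∀ m, eLpNorm
          (fun ω => (φ ^ (m + 1))⁻¹ * X ((m + 1) * P + r) ω - A * (X 0 ω + ζ ω)) 2 μ
          ≤ (‖A‖₊ : ℝ≥0∞) * eLpNorm (fun ω => Z m ω - ζ ω) 2 μ + q ^ (m + 1) * M r := by
        intro m
        have hfun : (fun ω => (φ ^ (m + 1))⁻¹ * X ((m + 1) * P + r) ω - A * (X 0 ω + ζ ω))
            = (fun ω => A * (Z m ω - ζ ω)) + fun ω => (φ ^ (m + 1))⁻¹ * U (m + 1) r ω := by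
          funext ω
          simp only [Pi.add_apply]
          rw [hkey m r ω, ← hAdef]
          ring
        rw [hfun]
        refine (eLpNorm_add_le
          ((((hZmeas m).aestronglyMeasurable.sub hζaesm).const_mul _))
          (((hUmeas (m + 1) r).const_mul _).aestronglyMeasurable) one_le_two).trans ?_
        refine add_le_add ?_ (hUs (m + 1) r)
        exact le_of_eq (eLpNorm_const_smul A (fun ω => Z m ω - ζ ω) 2 μ)
      have hupper : Tendsto (fun m => (‖A‖₊ : ℝ≥0∞) * eLpNorm (fun ω => Z m ω - ζ ω) 2 μ
          + q ^ (m + 1) * M r) atTop (𝓝 0) := by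
        have h6 : Tendsto (fun m => (‖A‖₊ : ℝ≥0∞) * eLpNorm (fun ω => Z m ω - ζ ω) 2 μ)
            atTop (𝓝 0) := by
          have h6' := ENNReal.Tendsto.const_mul (a := (‖A‖₊ : ℝ≥0∞)) htend0
            (Or.inr ENNReal.coe_ne_top)
          simpa using h6'
        have h7 : Tendsto (fun m : ℕ => q ^ (m + 1) * M r) atTop (𝓝 0) := by
          have h8 := ENNReal.Tendsto.mul_const
            (ENNReal.tendsto_pow_atTop_nhds_zero_of_lt_one hqlt) (Or.inr (hMfin r))
          have h9 := (h8.comp (tendsto_add_atTop_nat 1))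
          simpa [Function.comp_def] using h9
        simpa using h6.add h7
      have h10 : Tendsto (fun m => eLpNorm
          (fun ω => (φ ^ (m + 1))⁻¹ * X ((m + 1) * P + r) ω - A * (X 0 ω + ζ ω)) 2 μ)
          atTop (𝓝 0) :=
        tendsto_of_tendsto_of_tendsto_of_le_of_le tendsto_const_nhds hupper
          (fun m => zero_le) hbd
      exact (tendsto_add_atTop_iff_nat
        (f := fun n => eLpNorm
          (fun ω => (φ ^ n)⁻¹ * X (n * P + r) ω - A * (X 0 ω + ζ ω)) 2 μ) 1).mp h10
    have h11 : Tendsto (fun n => (eLpNorm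
        (fun ω => (φ ^ n)⁻¹ * X (n * P + r) ω - A * (X 0 ω + ζ ω)) 2 μ).toReal)
        atTop (𝓝 0) := by
      have := (ENNReal.tendsto_toReal ENNReal.zero_ne_top).comp hnorm
      simpa [Function.comp_def] using this
    have h12 := h11.pow 2
    simpa using h12
end

section
/- In the explosive PAR(1) model with |φ| > 1, the discrepancy satisfies X_{nP+r} - φ^n A_1^r (X_0 + ζ) = U_n^{(r)} - A_1^r ∑_{l=0}^{∞} φ^{-l-1} U_{n+l}^{(P)} for each n and r = 1,…,P (the series converging a.s. and in L²). -/
open MeasureTheory Filter Topology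
open scoped ENNReal NNReal

/-- discrepancy identity
X_{nP+r} - φ^n A_1^r (X_0 + ζ) = U_n^{(r)} - A_1^r ∑_{l=0}^∞ φ^{-l-1} U_{n+l}^{(P)},
the series converging a.s. and in L². -/
theorem stmt7 {Ω : Type*} [MeasurableSpace Ω] (μ : Measure Ω) [IsProbabilityMeasure μ]
    (P : ℕ) (hP : 1 ≤ P) (a : ℕ → ℝ) (hper : ∀ k, a (k + P) = a k)
    (φ : ℝ) (hφdef : φ = ∏ j ∈ Finset.Icc 1 P, a j) (hφ : 1 < |φ|)
    (u : ℕ → Ω → ℝ) (humeas : ∀ k, Measurable (u k)) (huL2 : ∀ k, MemLp (u k) 2 μ)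
    (hucent : ∀ k, ∫ ω, u k ω ∂μ = 0)
    (hpd : ∀ m : ℕ,
      Measure.map (fun ω => fun i : Fin m => u ((i : ℕ) + P) ω) μ
        = Measure.map (fun ω => fun i : Fin m => u (i : ℕ) ω) μ)
    (X : ℕ → Ω → ℝ) (hX0 : MemLp (X 0) 2 μ)
    (hrec : ∀ k ω, X (k + 1) ω = a (k + 1) * X k ω + u (k + 1) ω)
    (U : ℕ → ℕ → Ω → ℝ)
    (hU : ∀ n r ω, U n r ω
      = ∑ s ∈ Finset.Icc 1 r, (∏ j ∈ Finset.Icc (s + 1) r, a j) * u (n * P + s) ω)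
    (Z : ℕ → Ω → ℝ)
    (hZ : ∀ n ω, Z n ω = ∑ l ∈ Finset.range (n + 1), (φ ^ (l + 1))⁻¹ * U l P ω)
    (ζ : Ω → ℝ)
    (hζ : ∀ᵐ ω ∂μ, Tendsto (fun n => Z n ω) atTop (𝓝 (ζ ω))) :
    ∀ n r : ℕ, 1 ≤ r → r ≤ P →
      (∀ᵐ ω ∂μ,
        Summable (fun l : ℕ => (φ ^ (l + 1))⁻¹ * U (n + l) P ω) ∧
        X (n * P + r) ω - φ ^ n * (∏ j ∈ Finset.Icc 1 r, a j) * (X 0 ω + ζ ω)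
          = U n r ω
            - (∏ j ∈ Finset.Icc 1 r, a j) * ∑' l : ℕ, (φ ^ (l + 1))⁻¹ * U (n + l) P ω) ∧
      Tendsto (fun m => ∫ ω,
          (∑ l ∈ Finset.range m, (φ ^ (l + 1))⁻¹ * U (n + l) P ω
            - ∑' l : ℕ, (φ ^ (l + 1))⁻¹ * U (n + l) P ω) ^ 2 ∂μ)
        atTop (𝓝 0) := by
  have hφ0 : φ ≠ 0 := by rintro rfl; norm_num at hφ
  -- periodicity of a with multiples of P
  have hperM : ∀ k m, a (k + m * P) = a k := by
    intro k m
    induction m with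
    | zero => simp
    | succ m ih =>
      have h : k + (m + 1) * P = (k + m * P) + P := by ring
      rw [h, hper, ih]
  -- measurability of U
  have hUmeas : ∀ m r, Measurable (U m r) := by
    intro m r
    have h : U m r = fun ω => ∑ s ∈ Finset.Icc 1 r,
        (∏ j ∈ Finset.Icc (s + 1) r, a j) * u (m * P + s) ω := funext fun ω => hU m r ω
    rw [h]
    exact Finset.measurable_sum _ fun s _ => (humeas _).const_mul _
  -- recursion within a period
  have claimX : ∀ (m : ℕ) (ω : Ω) (r' : ℕ), X (m * P + r') ω
      = (∏ j ∈ Finset.Icc 1 r', a j) * X (m * P) ω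
        + ∑ s ∈ Finset.Icc 1 r', (∏ j ∈ Finset.Icc (s + 1) r', a j) * u (m * P + s) ω := by
    intro m ω r'
    induction r' with
    | zero => simp
    | succ t ih =>
      have h1 : m * P + (t + 1) = (m * P + t) + 1 := by ring
      rw [h1, hrec]
      have h2 : a (m * P + t + 1) = a (t + 1) := by
        have h : m * P + t + 1 = (t + 1) + m * P := by ring
        rw [h, hperM]
      rw [h2, ih, Finset.prod_Icc_succ_top (Nat.le_add_left 1 t),
        Finset.sum_Icc_succ_top (Nat.le_add_left 1 t)]
      have h4 : Finset.Icc (t + 1 + 1) (t + 1) = ∅ := by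
        rw [Finset.Icc_eq_empty]; omega
      rw [h4, Finset.prod_empty]
      have h3 : ∑ s ∈ Finset.Icc 1 t, (∏ j ∈ Finset.Icc (s + 1) (t + 1), a j) * u (m * P + s) ω
          = ∑ s ∈ Finset.Icc 1 t, ((∏ j ∈ Finset.Icc (s + 1) t, a j) * a (t + 1)) * u (m * P + s) ω := by
        refine Finset.sum_congr rfl fun s hs => ?_
        have hs' := (Finset.mem_Icc.mp hs).2
        rw [Finset.prod_Icc_succ_top (by omega)]
      rw [h3]
      have h5 : a (t + 1) * (∑ s ∈ Finset.Icc 1 t, (∏ j ∈ Finset.Icc (s + 1) t, a j) * u (m * P + s) ω)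
          = ∑ s ∈ Finset.Icc 1 t, ((∏ j ∈ Finset.Icc (s + 1) t, a j) * a (t + 1)) * u (m * P + s) ω := by
        rw [Finset.mul_sum]
        exact Finset.sum_congr rfl fun s _ => by ring
      rw [mul_add, h5]
      ring_nf
  -- closed form for X at multiples of P
  have claimXn : ∀ (ω : Ω) (m : ℕ), X (m * P) ω
      = φ ^ m * (X 0 ω + ∑ l ∈ Finset.range m, (φ ^ (l + 1))⁻¹ * U l P ω) := by
    intro ω m
    induction m with
    | zero => simp
    | succ t ih =>
      have h1 : (t + 1) * P = t * P + P := by ring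
      rw [h1, claimX t ω P, ← hU t P ω, ← hφdef, ih, Finset.sum_range_succ]
      have hφp : φ ^ (t + 1) ≠ 0 := pow_ne_zero _ hφ0
      field_simp
      ring
  -- distribution invariance under shift by P
  have hmap : ∀ k, Measure.map (u (k + P)) μ = Measure.map (u k) μ := by
    intro k
    have hvecP : Measurable (fun ω => fun i : Fin (k + 1) => u ((i : ℕ) + P) ω) :=
      measurable_pi_lambda _ fun i => humeas _
    have hvec : Measurable (fun ω => fun i : Fin (k + 1) => u (i : ℕ) ω) :=
      measurable_pi_lambda _ fun i => humeas _
    have hproj : Measurable (fun v : Fin (k + 1) → ℝ => v ⟨k, Nat.lt_succ_self k⟩) :=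
      measurable_pi_apply _
    calc Measure.map (u (k + P)) μ
        = Measure.map (fun v : Fin (k + 1) → ℝ => v ⟨k, Nat.lt_succ_self k⟩)
            (Measure.map (fun ω => fun i : Fin (k + 1) => u ((i : ℕ) + P) ω) μ) :=
          (Measure.map_map hproj hvecP).symm
      _ = Measure.map (fun v : Fin (k + 1) → ℝ => v ⟨k, Nat.lt_succ_self k⟩)
            (Measure.map (fun ω => fun i : Fin (k + 1) => u (i : ℕ) ω) μ) := by rw [hpd]
      _ = Measure.map (u k) μ := Measure.map_map hproj hvec
  have hmapM : ∀ k m, Measure.map (u (k + m * P)) μ = Measure.map (u k) μ := by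
    intro k m
    induction m with
    | zero => simp
    | succ m ih =>
      have h : k + (m + 1) * P = (k + m * P) + P := by ring
      rw [h, hmap, ih]
  -- eLpNorm invariance
  have humap : ∀ s m, eLpNorm (u (s + m * P)) 2 μ = eLpNorm (u s) 2 μ := by
    intro s m
    have h1 : eLpNorm (id : ℝ → ℝ) 2 (Measure.map (u (s + m * P)) μ) = eLpNorm (u (s + m * P)) 2 μ :=
      eLpNorm_map_measure aestronglyMeasurable_id (humeas _).aemeasurable
    have h2 : eLpNorm (id : ℝ → ℝ) 2 (Measure.map (u s) μ) = eLpNorm (u s) 2 μ :=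
      eLpNorm_map_measure aestronglyMeasurable_id (humeas _).aemeasurable
    rw [← h1, ← h2, hmapM]
  -- the constant K
  set K : ℝ≥0∞ := ∑ s ∈ Finset.Icc 1 P,
      (‖(∏ j ∈ Finset.Icc (s + 1) P, a j)‖₊ : ℝ≥0∞) * eLpNorm (u s) 2 μ with hKdef
  have hKlt : K ≠ ∞ := by
    rw [hKdef]
    refine (ENNReal.sum_lt_top.mpr fun s _ => ?_).ne
    exact ENNReal.mul_lt_top ENNReal.coe_lt_top (huL2 s).2
  have hnormU : ∀ m, eLpNorm (U m P) 2 μ ≤ K := by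
    intro m
    have hfun : U m P = ∑ s ∈ Finset.Icc 1 P,
        (fun ω => (∏ j ∈ Finset.Icc (s + 1) P, a j) * u (m * P + s) ω) := by
      funext ω
      rw [hU m P ω, Finset.sum_apply]
    rw [hfun]
    refine (eLpNorm_sum_le (fun s _ => ((humeas _).const_mul _).aestronglyMeasurable)
      one_le_two).trans ?_
    refine Finset.sum_le_sum fun s _ => ?_
    have h : (fun ω => (∏ j ∈ Finset.Icc (s + 1) P, a j) * u (m * P + s) ω)
        = (∏ j ∈ Finset.Icc (s + 1) P, a j) • u (m * P + s) := rfl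
    rw [h, eLpNorm_const_smul]
    have h2 : m * P + s = s + m * P := by ring
    rw [h2, humap, enorm_eq_nnnorm]
  -- geometric bound on the coefficients
  set ε : ℝ≥0∞ := ENNReal.ofReal |φ|⁻¹ with hεdef
  have hεlt : ε < 1 := by
    rw [hεdef]
    refine ENNReal.ofReal_lt_one.mpr ?_
    rw [inv_lt_one_iff₀]
    right; exact hφ
  have hcl : ∀ (n' l : ℕ),
      eLpNorm (fun ω => (φ ^ (l + 1))⁻¹ * U (n' + l) P ω) 2 μ ≤ ε ^ (l + 1) * K := by
    intro n' l
    have h : (fun ω => (φ ^ (l + 1))⁻¹ * U (n' + l) P ω)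
        = ((φ ^ (l + 1))⁻¹ : ℝ) • U (n' + l) P := rfl
    rw [h, eLpNorm_const_smul]
    have hn : (‖(φ ^ (l + 1))⁻¹‖₊ : ℝ≥0∞) = ε ^ (l + 1) := by
      rw [← enorm_eq_nnnorm, Real.enorm_eq_ofReal_abs, hεdef, abs_inv, abs_pow, ← inv_pow,
        ENNReal.ofReal_pow (inv_nonneg.mpr (abs_nonneg _))]
    rw [enorm_eq_nnnorm, hn]
    exact mul_le_mul_right (hnormU _) _
  have hgeo : ∑' l : ℕ, ε ^ (l + 1) * K ≠ ∞ := by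
    rw [ENNReal.tsum_mul_right, ENNReal.tsum_geometric_add_one]
    refine ENNReal.mul_ne_top (ENNReal.mul_ne_top ?_ ?_) hKlt
    · exact (hεlt.trans_le le_top).ne
    · rw [Ne, ENNReal.inv_eq_top, tsub_eq_zero_iff_le]
      exact fun h => absurd (lt_of_lt_of_le hεlt h) (lt_irrefl _)
  -- almost sure absolute summability
  have hsum_ae : ∀ n' : ℕ, ∀ᵐ ω ∂μ,
      Summable (fun l : ℕ => ‖(φ ^ (l + 1))⁻¹ * U (n' + l) P ω‖₊) := by
    intro n'
    have hmeasg : ∀ l : ℕ, Measurable (fun ω => (φ ^ (l + 1))⁻¹ * U (n' + l) P ω) :=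
      fun l => (hUmeas _ _).const_mul _
    have hlin : ∫⁻ ω, ∑' l : ℕ, (‖(φ ^ (l + 1))⁻¹ * U (n' + l) P ω‖₊ : ℝ≥0∞) ∂μ
        = ∑' l : ℕ, ∫⁻ ω, (‖(φ ^ (l + 1))⁻¹ * U (n' + l) P ω‖₊ : ℝ≥0∞) ∂μ :=
      lintegral_tsum fun l => (hmeasg l).nnnorm.coe_nnreal_ennreal.aemeasurable
    have hbnd : ∫⁻ ω, ∑' l : ℕ, (‖(φ ^ (l + 1))⁻¹ * U (n' + l) P ω‖₊ : ℝ≥0∞) ∂μ ≠ ∞ := by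
      rw [hlin]
      refine ne_top_of_le_ne_top hgeo (ENNReal.tsum_le_tsum fun l => ?_)
      calc ∫⁻ ω, (‖(φ ^ (l + 1))⁻¹ * U (n' + l) P ω‖₊ : ℝ≥0∞) ∂μ
          = eLpNorm (fun ω => (φ ^ (l + 1))⁻¹ * U (n' + l) P ω) 1 μ :=
            by rw [eLpNorm_one_eq_lintegral_enorm]; simp only [enorm_eq_nnnorm]
        _ ≤ eLpNorm (fun ω => (φ ^ (l + 1))⁻¹ * U (n' + l) P ω) 2 μ :=
            eLpNorm_le_eLpNorm_of_exponent_le one_le_two (hmeasg l).aestronglyMeasurable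
        _ ≤ ε ^ (l + 1) * K := hcl n' l
    have hae := ae_lt_top (Measurable.ennreal_tsum fun l => (hmeasg l).nnnorm.coe_nnreal_ennreal) hbnd
    filter_upwards [hae] with ω hω
    exact ENNReal.tsum_coe_ne_top_iff_summable.mp hω.ne
  intro n r hr1 hrP
  constructor
  · -- almost-sure part
    filter_upwards [hsum_ae 0, hsum_ae n, hζ] with ω h0 hn' hzω
    have hbsum : Summable (fun l : ℕ => (φ ^ (l + 1))⁻¹ * U l P ω) := by
      have h := Summable.of_nnnorm h0
      simpa using h
    have hgsum : Summable (fun l : ℕ => (φ ^ (l + 1))⁻¹ * U (n + l) P ω) :=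
      Summable.of_nnnorm hn'
    refine ⟨hgsum, ?_⟩
    have hζeq : ζ ω = ∑' l : ℕ, (φ ^ (l + 1))⁻¹ * U l P ω := by
      have ht1 : Tendsto (fun m => ∑ l ∈ Finset.range m, (φ ^ (l + 1))⁻¹ * U l P ω) atTop
          (𝓝 (∑' l : ℕ, (φ ^ (l + 1))⁻¹ * U l P ω)) := hbsum.hasSum.tendsto_sum_nat
      have ht2 : Tendsto (fun m : ℕ => ∑ l ∈ Finset.range (m + 1), (φ ^ (l + 1))⁻¹ * U l P ω)
          atTop (𝓝 (∑' l : ℕ, (φ ^ (l + 1))⁻¹ * U l P ω)) :=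
        ht1.comp (tendsto_add_atTop_nat 1)
      have hz' : Tendsto (fun m : ℕ => ∑ l ∈ Finset.range (m + 1), (φ ^ (l + 1))⁻¹ * U l P ω)
          atTop (𝓝 (ζ ω)) := by simpa only [hZ] using hzω
      exact tendsto_nhds_unique hz' ht2
    have hshift : ∀ l : ℕ, (φ ^ (l + 1))⁻¹ * U (n + l) P ω
        = φ ^ n * ((φ ^ (n + l + 1))⁻¹ * U (n + l) P ω) := by
      intro l
      have hp : (φ : ℝ) ^ (n + l + 1) = φ ^ n * φ ^ (l + 1) := by
        rw [← pow_add]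
        congr 1
      rw [hp, mul_inv, ← mul_assoc, ← mul_assoc, mul_inv_cancel₀ (pow_ne_zero n hφ0), one_mul]
    have htail : ∑' l : ℕ, (φ ^ (l + 1))⁻¹ * U (n + l) P ω
        = φ ^ n * ((∑' l : ℕ, (φ ^ (l + 1))⁻¹ * U l P ω)
            - ∑ l ∈ Finset.range n, (φ ^ (l + 1))⁻¹ * U l P ω) := by
      have h1 : ∑' l : ℕ, (φ ^ (l + 1))⁻¹ * U (n + l) P ω
          = ∑' l : ℕ, φ ^ n * ((φ ^ (n + l + 1))⁻¹ * U (n + l) P ω) := tsum_congr hshift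
      rw [h1, tsum_mul_left]
      congr 1
      have h2 : ∑' l : ℕ, (φ ^ (n + l + 1))⁻¹ * U (n + l) P ω
          = ∑' l : ℕ, (φ ^ ((l + n) + 1))⁻¹ * U (l + n) P ω := by
        refine tsum_congr fun l => ?_
        rw [add_comm n l]
      have h3 := Summable.sum_add_tsum_nat_add (f := fun l : ℕ => (φ ^ (l + 1))⁻¹ * U l P ω) n hbsum
      rw [h2]
      linarith
    rw [claimX n ω r, ← hU n r ω, claimXn ω n, hζeq, htail]
    ring
  · -- L² part
    have hSmeas : ∀ m : ℕ,
        Measurable (fun ω => ∑ l ∈ Finset.range m, (φ ^ (l + 1))⁻¹ * U (n + l) P ω) :=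
      fun m => Finset.measurable_sum _ fun l _ => (hUmeas _ _).const_mul _
    have hconv : ∀ᵐ ω ∂μ, Tendsto
        (fun m => ∑ l ∈ Finset.range m, (φ ^ (l + 1))⁻¹ * U (n + l) P ω) atTop
        (𝓝 (∑' l : ℕ, (φ ^ (l + 1))⁻¹ * U (n + l) P ω)) := by
      filter_upwards [hsum_ae n] with ω hω
      exact (Summable.of_nnnorm hω).hasSum.tendsto_sum_nat
    have hTaesm : AEStronglyMeasurable
        (fun ω => ∑' l : ℕ, (φ ^ (l + 1))⁻¹ * U (n + l) P ω) μ :=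
      aestronglyMeasurable_of_tendsto_ae atTop (fun m => (hSmeas m).aestronglyMeasurable) hconv
    have hbound : ∀ m : ℕ,
        eLpNorm (fun ω => (∑ l ∈ Finset.range m, (φ ^ (l + 1))⁻¹ * U (n + l) P ω)
          - ∑' l : ℕ, (φ ^ (l + 1))⁻¹ * U (n + l) P ω) 2 μ
          ≤ ∑' l : ℕ, ε ^ (l + m + 1) * K := by
      intro m
      have hneg : (fun ω => (∑ l ∈ Finset.range m, (φ ^ (l + 1))⁻¹ * U (n + l) P ω)
            - ∑' l : ℕ, (φ ^ (l + 1))⁻¹ * U (n + l) P ω)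
          = -(fun ω => (∑' l : ℕ, (φ ^ (l + 1))⁻¹ * U (n + l) P ω)
            - ∑ l ∈ Finset.range m, (φ ^ (l + 1))⁻¹ * U (n + l) P ω) := by
        funext ω; simp
      rw [hneg, eLpNorm_neg]
      refine le_trans (Lp.eLpNorm_lim_le_liminf_eLpNorm
        (f := fun k => fun ω => (∑ l ∈ Finset.range k, (φ ^ (l + 1))⁻¹ * U (n + l) P ω)
          - ∑ l ∈ Finset.range m, (φ ^ (l + 1))⁻¹ * U (n + l) P ω)
        (fun k => ((hSmeas k).sub (hSmeas m)).aestronglyMeasurable) _ ?_) ?_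
      · filter_upwards [hconv] with ω hω
        exact hω.sub_const _
      · refine le_trans liminf_le_limsup (limsup_le_of_le ?_ ?_)
        · isBoundedDefault
        · filter_upwards [eventually_ge_atTop m] with k hk
          have hk1 : (fun ω => (∑ l ∈ Finset.range k, (φ ^ (l + 1))⁻¹ * U (n + l) P ω)
                - ∑ l ∈ Finset.range m, (φ ^ (l + 1))⁻¹ * U (n + l) P ω)
              = ∑ l ∈ Finset.Ico m k, (fun ω => (φ ^ (l + 1))⁻¹ * U (n + l) P ω) := by
            funext ω
            rw [Finset.sum_apply, Finset.sum_Ico_eq_sub _ hk]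
          rw [hk1]
          refine le_trans (eLpNorm_sum_le
            (fun l _ => ((hUmeas _ _).const_mul _).aestronglyMeasurable) one_le_two) ?_
          calc ∑ l ∈ Finset.Ico m k,
                eLpNorm (fun ω => (φ ^ (l + 1))⁻¹ * U (n + l) P ω) 2 μ
              ≤ ∑ l ∈ Finset.Ico m k, ε ^ (l + 1) * K :=
                Finset.sum_le_sum fun l _ => hcl n l
            _ = ∑ l ∈ Finset.range (k - m), ε ^ ((m + l) + 1) * K :=
                Finset.sum_Ico_eq_sum_range (fun l => ε ^ (l + 1) * K) m k
            _ ≤ ∑' l : ℕ, ε ^ ((m + l) + 1) * K := ENNReal.sum_le_tsum _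
            _ = ∑' l : ℕ, ε ^ (l + m + 1) * K := by
                refine tsum_congr fun l => ?_
                rw [add_comm m l]
    have hR0 : Tendsto (fun m => ∑' l : ℕ, ε ^ (l + m + 1) * K) atTop (𝓝 0) := by
      have h := ENNReal.tendsto_sum_nat_add (fun l => ε ^ (l + 1) * K) hgeo
      have hEq : ∀ m : ℕ, (∑' l : ℕ, ε ^ ((l + m) + 1) * K)
          = ∑' l : ℕ, ε ^ (l + m + 1) * K := fun m => rfl
      simpa only [hEq] using h
    have heq2 : ∀ f : Ω → ℝ, (∫⁻ ω, (‖f ω‖₊ : ℝ≥0∞) ^ (2 : ℕ) ∂μ) = eLpNorm f 2 μ ^ (2 : ℕ) := by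
      intro f
      rw [eLpNorm_eq_lintegral_rpow_enorm_toReal two_ne_zero ENNReal.ofNat_ne_top,
        ENNReal.toReal_ofNat, ← ENNReal.rpow_natCast _ 2, ← ENNReal.rpow_mul]
      norm_num
      simp only [enorm_eq_nnnorm]
    have hJle : ∀ m : ℕ,
        (∫⁻ ω, (‖(∑ l ∈ Finset.range m, (φ ^ (l + 1))⁻¹ * U (n + l) P ω)
          - ∑' l : ℕ, (φ ^ (l + 1))⁻¹ * U (n + l) P ω‖₊ : ℝ≥0∞) ^ (2 : ℕ) ∂μ)
          ≤ (∑' l : ℕ, ε ^ (l + m + 1) * K) ^ (2 : ℕ) := by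
      intro m
      rw [heq2]
      exact pow_le_pow_left' (hbound m) 2
    have hsq : Tendsto (fun m => (∑' l : ℕ, ε ^ (l + m + 1) * K) ^ (2 : ℕ)) atTop (𝓝 0) := by
      have h := ENNReal.Tendsto.pow (n := 2) hR0
      simpa using h
    have hJ0 : Tendsto (fun m => ∫⁻ ω, (‖(∑ l ∈ Finset.range m, (φ ^ (l + 1))⁻¹ * U (n + l) P ω)
        - ∑' l : ℕ, (φ ^ (l + 1))⁻¹ * U (n + l) P ω‖₊ : ℝ≥0∞) ^ (2 : ℕ) ∂μ) atTop (𝓝 0) :=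
      tendsto_of_tendsto_of_tendsto_of_le_of_le tendsto_const_nhds hsq (fun m => zero_le) hJle
    have hint : ∀ m : ℕ,
        (∫ ω, ((∑ l ∈ Finset.range m, (φ ^ (l + 1))⁻¹ * U (n + l) P ω)
          - ∑' l : ℕ, (φ ^ (l + 1))⁻¹ * U (n + l) P ω) ^ 2 ∂μ)
        = (∫⁻ ω, (‖(∑ l ∈ Finset.range m, (φ ^ (l + 1))⁻¹ * U (n + l) P ω)
          - ∑' l : ℕ, (φ ^ (l + 1))⁻¹ * U (n + l) P ω‖₊ : ℝ≥0∞) ^ (2 : ℕ) ∂μ).toReal := by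
      intro m
      have hd : AEStronglyMeasurable (fun ω =>
          (∑ l ∈ Finset.range m, (φ ^ (l + 1))⁻¹ * U (n + l) P ω)
          - ∑' l : ℕ, (φ ^ (l + 1))⁻¹ * U (n + l) P ω) μ :=
        (hSmeas m).aestronglyMeasurable.sub hTaesm
      have hd2 : AEStronglyMeasurable (fun ω =>
          ((∑ l ∈ Finset.range m, (φ ^ (l + 1))⁻¹ * U (n + l) P ω)
          - ∑' l : ℕ, (φ ^ (l + 1))⁻¹ * U (n + l) P ω) ^ 2) μ := by
        simpa [pow_two, Pi.mul_def] using hd.mul hd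
      rw [integral_eq_lintegral_of_nonneg_ae (ae_of_all μ fun ω => sq_nonneg _) hd2]
      congr 1
      refine lintegral_congr fun ω => ?_
      rw [← sq_abs, ENNReal.ofReal_pow (abs_nonneg _), ← Real.enorm_eq_ofReal_abs, enorm_eq_nnnorm]
    have hfin : Tendsto (fun m =>
        (∫⁻ ω, (‖(∑ l ∈ Finset.range m, (φ ^ (l + 1))⁻¹ * U (n + l) P ω)
          - ∑' l : ℕ, (φ ^ (l + 1))⁻¹ * U (n + l) P ω‖₊ : ℝ≥0∞) ^ (2 : ℕ) ∂μ).toReal)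
        atTop (𝓝 0) := by
      have h := (ENNReal.tendsto_toReal (by norm_num : (0 : ℝ≥0∞) ≠ ∞)).comp hJ0
      simpa [Function.comp_def] using h
    simpa only [hint] using hfin
end

section
/- In the explosive PAR(1) model with |φ| > 1, for each r = 1,…,P, φ^{-2n} B_n^{(r)} converges almost surely and in L¹ to (A_1^{r-1})² (X_0 + ζ)² / (φ² - 1), where B_n^{(r)} = ∑_{j=0}^{n-1} (X_{jP+r-1})². -/
open MeasureTheory Filter Topology

lemma toeplitz_zero {q : ℝ} (hq : 1 < q) {e : ℕ → ℝ} (he : Tendsto e atTop (𝓝 0)) :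
    Tendsto (fun n => (q ^ n)⁻¹ * ∑ j ∈ Finset.range n, q ^ j * e j) atTop (𝓝 0) := by
  have hq0 : (0:ℝ) < q := lt_trans one_pos hq
  have hq1 : (0:ℝ) < q - 1 := sub_pos.2 hq
  rw [Metric.tendsto_atTop]
  intro ε hε
  set ε' : ℝ := ε * (q - 1) / (2 * q) with hε'def
  have hε' : 0 < ε' := by positivity
  rw [Metric.tendsto_atTop] at he
  obtain ⟨N, hN⟩ := he ε' hε'
  set C : ℝ := ∑ j ∈ Finset.range N, q ^ j * |e j| with hC
  have hC0 : 0 ≤ C := Finset.sum_nonneg fun j _ => by positivity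
  have hgeo : Tendsto (fun n : ℕ => C * (q ^ n)⁻¹) atTop (𝓝 0) := by
    have : Tendsto (fun n : ℕ => (q⁻¹) ^ n) atTop (𝓝 0) := by
      apply tendsto_pow_atTop_nhds_zero_of_lt_one (by positivity)
      rw [inv_lt_one_iff₀]; right; exact hq
    have := this.const_mul C
    simpa [inv_pow] using this
  rw [Metric.tendsto_atTop] at hgeo
  obtain ⟨N2, hN2⟩ := hgeo (ε/2) (by positivity)
  refine ⟨max N N2, fun n hn => ?_⟩
  have hnN : N ≤ n := le_trans (le_max_left _ _) hn
  have hnN2 : N2 ≤ n := le_trans (le_max_right _ _) hn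
  have hqn : (0:ℝ) < q ^ n := by positivity
  rw [Real.dist_eq, sub_zero]
  have h1 : |(q ^ n)⁻¹ * ∑ j ∈ Finset.range n, q ^ j * e j|
      ≤ (q ^ n)⁻¹ * ∑ j ∈ Finset.range n, q ^ j * |e j| := by
    rw [abs_mul, abs_of_pos (by positivity : (0:ℝ) < (q ^ n)⁻¹)]
    gcongr
    refine (Finset.abs_sum_le_sum_abs _ _).trans ?_
    apply le_of_eq
    exact Finset.sum_congr rfl fun j _ => by rw [abs_mul, abs_of_pos (by positivity)]
  have hsplit : ∑ j ∈ Finset.range n, q ^ j * |e j|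
      = C + ∑ j ∈ Finset.Ico N n, q ^ j * |e j| := by
    rw [hC, Finset.sum_range_add_sum_Ico _ hnN]
  have htail : ∑ j ∈ Finset.Ico N n, q ^ j * |e j| ≤ ε' * (q ^ n / (q - 1)) := by
    calc ∑ j ∈ Finset.Ico N n, q ^ j * |e j|
        ≤ ∑ j ∈ Finset.Ico N n, q ^ j * ε' := by
          apply Finset.sum_le_sum
          intro j hj
          have := hN j (Finset.mem_Ico.1 hj).1
          rw [Real.dist_eq, sub_zero] at this
          have : |e j| ≤ ε' := le_of_lt this
          nlinarith [pow_pos hq0 j]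
      _ ≤ (∑ j ∈ Finset.range n, q ^ j) * ε' := by
          rw [← Finset.sum_mul]
          apply mul_le_mul_of_nonneg_right _ hε'.le
          apply Finset.sum_le_sum_of_subset_of_nonneg
          · intro x hx; exact Finset.mem_range.2 (Finset.mem_Ico.1 hx).2
          · intros; positivity
      _ = (q ^ n - 1) / (q - 1) * ε' := by rw [geom_sum_eq (ne_of_gt hq)]
      _ ≤ ε' * (q ^ n / (q - 1)) := by
          rw [mul_comm]
          gcongr
          linarith
  calc |(q ^ n)⁻¹ * ∑ j ∈ Finset.range n, q ^ j * e j|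
      ≤ (q ^ n)⁻¹ * (C + ε' * (q ^ n / (q - 1))) := by
        refine h1.trans ?_
        rw [hsplit]; gcongr
    _ = C * (q ^ n)⁻¹ + ε' / (q - 1) := by field_simp
    _ < ε / 2 + ε / 2 := by
        have h2 := hN2 n hnN2
        rw [Real.dist_eq, sub_zero, abs_of_nonneg (by positivity)] at h2
        have : ε' / (q - 1) = ε / (2 * q) * (q-1)/(q-1) := by rw [hε'def]; ring
        have h3 : ε' / (q - 1) ≤ ε / 2 := by
          rw [hε'def]
          rw [div_le_iff₀ hq1] at *
          have : ε / (2 * q) ≤ ε / 2 := by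
            apply div_le_div_of_nonneg_left hε.le (by norm_num)
            nlinarith
          calc ε * (q - 1) / (2 * q) = ε / (2*q) * (q-1) := by ring
            _ ≤ ε / 2 * (q - 1) := by nlinarith [div_pos hε (by positivity : (0:ℝ) < 2*q)]
        exact add_lt_add_of_lt_of_le h2 h3
    _ = ε := by ring

lemma toeplitz_lim {q : ℝ} (hq : 1 < q) {c : ℕ → ℝ} {L : ℝ} (hc : Tendsto c atTop (𝓝 L)) :
    Tendsto (fun n => (q ^ n)⁻¹ * ∑ j ∈ Finset.range n, q ^ j * c j) atTop
      (𝓝 (L / (q - 1))) := by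
  have hq0 : (0:ℝ) < q := lt_trans one_pos hq
  have hq1 : q - 1 ≠ 0 := ne_of_gt (sub_pos.2 hq)
  have hqn : ∀ n : ℕ, (q:ℝ) ^ n ≠ 0 := fun n => by positivity
  have h0 : Tendsto (fun n => (q ^ n)⁻¹ * ∑ j ∈ Finset.range n, q ^ j * (c j - L))
      atTop (𝓝 0) := toeplitz_zero hq (by simpa using hc.sub_const L)
  have h1 : Tendsto (fun n : ℕ => L / (q - 1) * (1 - (q ^ n)⁻¹)) atTop (𝓝 (L / (q-1))) := by
    have hg : Tendsto (fun n : ℕ => (q ^ n)⁻¹) atTop (𝓝 0) := by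
      have : Tendsto (fun n : ℕ => (q⁻¹) ^ n) atTop (𝓝 0) :=
        tendsto_pow_atTop_nhds_zero_of_lt_one (by positivity)
          (by rw [inv_lt_one_iff₀]; right; exact hq)
      simpa [inv_pow] using this
    have := ((tendsto_const_nhds (x := (1:ℝ))).sub hg).const_mul (L / (q-1))
    simpa using this
  have key : ∀ n, (q ^ n)⁻¹ * ∑ j ∈ Finset.range n, q ^ j * c j
      = (q ^ n)⁻¹ * ∑ j ∈ Finset.range n, q ^ j * (c j - L) + L / (q - 1) * (1 - (q ^ n)⁻¹) := by
    intro n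
    have hs : ∑ j ∈ Finset.range n, q ^ j * c j
        = ∑ j ∈ Finset.range n, q ^ j * (c j - L) + (q ^ n - 1) / (q - 1) * L := by
      rw [← geom_sum_eq (ne_of_gt hq), Finset.sum_mul, ← Finset.sum_add_distrib]
      exact Finset.sum_congr rfl fun j _ => by ring
    rw [hs]
    field_simp
  simp only [key]
  simpa using h0.add h1

lemma abs_sq_sub_sq_le {δ : ℝ} (hδ : 0 < δ) (y g : ℝ) :
    |y ^ 2 - g ^ 2| ≤ (1 + δ⁻¹) * (y - g) ^ 2 + δ * g ^ 2 := by
  have h1 : |y ^ 2 - g ^ 2| = |y - g| * |y + g| := by rw [← abs_mul]; ring_nf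
  have h2 : |y + g| ≤ |y - g| + 2 * |g| := by
    calc |y + g| = |(y - g) + 2 * g| := by ring_nf
      _ ≤ |y - g| + |2 * g| := abs_add_le _ _
      _ = |y - g| + 2 * |g| := by rw [abs_mul]; norm_num
  have h3 : 2 * (|y - g| * |g|) ≤ δ⁻¹ * (y - g) ^ 2 + δ * g ^ 2 := by
    have h4 : 2 * δ * (|y - g| * |g|) ≤ (y - g) ^ 2 + δ ^ 2 * g ^ 2 := by
      nlinarith [sq_nonneg (δ * |g| - |y - g|), sq_abs (y - g), sq_abs g]
    have h5 : 2 * (|y - g| * |g|) = (2 * δ * (|y - g| * |g|)) / δ := by field_simp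
    rw [h5]
    rw [div_le_iff₀ hδ]
    calc 2 * δ * (|y - g| * |g|) ≤ (y - g) ^ 2 + δ ^ 2 * g ^ 2 := h4
      _ = (δ⁻¹ * (y - g) ^ 2 + δ * g ^ 2) * δ := by field_simp
  calc |y ^ 2 - g ^ 2| = |y - g| * |y + g| := h1
    _ ≤ |y - g| * (|y - g| + 2 * |g|) := by
        apply mul_le_mul_of_nonneg_left h2 (abs_nonneg _)
    _ = (y - g) ^ 2 + 2 * (|y - g| * |g|) := by rw [mul_add, ← sq_abs (y - g)]; ring
    _ ≤ (y - g) ^ 2 + (δ⁻¹ * (y - g) ^ 2 + δ * g ^ 2) := by linarith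
    _ = (1 + δ⁻¹) * (y - g) ^ 2 + δ * g ^ 2 := by ring

lemma ae_tendsto_zero_sq {Ω : Type*} [MeasurableSpace Ω] (μ : Measure Ω)
    (f : ℕ → Ω → ℝ) (hmeas : ∀ n, Measurable (f n))
    (hint : ∀ n, Integrable (fun ω => f n ω ^ 2) μ)
    (hsum : Summable (fun n => ∫ ω, f n ω ^ 2 ∂μ)) :
    ∀ᵐ ω ∂μ, Tendsto (fun n => f n ω) atTop (𝓝 0) := by
  set g : ℕ → Ω → ENNReal := fun n ω => ENNReal.ofReal (f n ω ^ 2) with hg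
  have hgmeas : ∀ n, Measurable (g n) :=
    fun n => ENNReal.measurable_ofReal.comp ((hmeas n).pow_const 2)
  have hlint : ∀ n, ∫⁻ ω, g n ω ∂μ = ENNReal.ofReal (∫ ω, f n ω ^ 2 ∂μ) := fun n =>
    (ofReal_integral_eq_lintegral_ofReal (hint n)
      (Filter.Eventually.of_forall fun ω => sq_nonneg _)).symm
  have htop : ∫⁻ ω, ∑' n, g n ω ∂μ ≠ ⊤ := by
    rw [MeasureTheory.lintegral_tsum (fun n => (hgmeas n).aemeasurable)]
    simp_rw [hlint]
    rw [← ENNReal.ofReal_tsum_of_nonneg (fun n => integral_nonneg fun ω => sq_nonneg _) hsum]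
    exact ENNReal.ofReal_ne_top
  have hae : ∀ᵐ ω ∂μ, ∑' n, g n ω < ⊤ :=
    ae_lt_top (Measurable.ennreal_tsum hgmeas) htop
  filter_upwards [hae] with ω hω
  have hsummable : Summable (fun n => f n ω ^ 2) := by
    have h := ENNReal.summable_toReal hω.ne
    have heq : (fun n => (g n ω).toReal) = fun n => f n ω ^ 2 := by
      funext n; exact ENNReal.toReal_ofReal (sq_nonneg _)
    rwa [heq] at h
  have h0 : Tendsto (fun n => f n ω ^ 2) atTop (𝓝 0) := hsummable.tendsto_atTop_zero
  have habs : Tendsto (fun n => |f n ω|) atTop (𝓝 0) := by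
    have := h0.sqrt
    simpa [Real.sqrt_sq_eq_abs] using this
  exact squeeze_zero_norm (fun n => le_of_eq (Real.norm_eq_abs _)) habs
set_option maxHeartbeats 2000000 in
/-- Lemma 1: φ^{-2n} B_n^{(r)} → (A_1^{r-1})² (X_0+ζ)²/(φ²-1)
a.s. and in L¹, where B_n^{(r)} = ∑_{j=0}^{n-1} X_{jP+r-1}². -/
theorem stmt10 {Ω : Type*} [MeasurableSpace Ω] (μ : Measure Ω) [IsProbabilityMeasure μ]
    (P : ℕ) (hP : 1 ≤ P) (a : ℕ → ℝ) (hper : ∀ k, a (k + P) = a k)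
    (φ : ℝ) (hφdef : φ = ∏ j ∈ Finset.Icc 1 P, a j) (hφ : 1 < |φ|)
    (u : ℕ → Ω → ℝ) (humeas : ∀ k, Measurable (u k)) (huL2 : ∀ k, MemLp (u k) 2 μ)
    (hucent : ∀ k, ∫ ω, u k ω ∂μ = 0)
    (hpd : ∀ m : ℕ,
      Measure.map (fun ω => fun i : Fin m => u ((i : ℕ) + P) ω) μ
        = Measure.map (fun ω => fun i : Fin m => u (i : ℕ) ω) μ)
    (X : ℕ → Ω → ℝ) (hX0 : MemLp (X 0) 2 μ)
    (hrec : ∀ k ω, X (k + 1) ω = a (k + 1) * X k ω + u (k + 1) ω)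
    (U : ℕ → ℕ → Ω → ℝ)
    (hU : ∀ n r ω, U n r ω
      = ∑ s ∈ Finset.Icc 1 r, (∏ j ∈ Finset.Icc (s + 1) r, a j) * u (n * P + s) ω)
    (Z : ℕ → Ω → ℝ)
    (hZ : ∀ n ω, Z n ω = ∑ l ∈ Finset.range (n + 1), (φ ^ (l + 1))⁻¹ * U l P ω)
    (ζ : Ω → ℝ) (hζmem : MemLp ζ 2 μ)
    (hζas : ∀ᵐ ω ∂μ, Tendsto (fun n => Z n ω) atTop (𝓝 (ζ ω)))
    (hζL2 : Tendsto (fun n => ∫ ω, (Z n ω - ζ ω) ^ 2 ∂μ) atTop (𝓝 0)) :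
    ∀ r : ℕ, 1 ≤ r → r ≤ P →
      (∀ᵐ ω ∂μ, Tendsto
          (fun n => ((φ ^ 2) ^ n)⁻¹ * ∑ j ∈ Finset.range n, (X (j * P + r - 1) ω) ^ 2)
          atTop
          (𝓝 ((∏ j ∈ Finset.Icc 1 (r - 1), a j) ^ 2 * (X 0 ω + ζ ω) ^ 2 / (φ ^ 2 - 1)))) ∧
      Tendsto (fun n => ∫ ω,
          |((φ ^ 2) ^ n)⁻¹ * ∑ j ∈ Finset.range n, (X (j * P + r - 1) ω) ^ 2
            - (∏ j ∈ Finset.Icc 1 (r - 1), a j) ^ 2 * (X 0 ω + ζ ω) ^ 2 / (φ ^ 2 - 1)| ∂μ)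
        atTop (𝓝 0) := by
  -- basic facts
  have hφ0 : φ ≠ 0 := fun h => by simp [h] at hφ; linarith
  have hq : 1 < φ ^ 2 := by nlinarith [sq_abs φ, hφ, abs_nonneg φ]
  have hq0 : (0:ℝ) < φ ^ 2 := lt_trans one_pos hq
  have hq1 : (0:ℝ) < φ ^ 2 - 1 := sub_pos.2 hq
  have hqn0 : ∀ n : ℕ, ((φ:ℝ) ^ 2) ^ n ≠ 0 := fun n => pow_ne_zero _ (ne_of_gt hq0)
  have hφn0 : ∀ n : ℕ, (φ:ℝ) ^ n ≠ 0 := fun n => pow_ne_zero _ hφ0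
  have hsqinv : ∀ j : ℕ, ((φ ^ j)⁻¹) ^ 2 = ((φ ^ 2) ^ j)⁻¹ := by
    intro j; rw [inv_pow, pow_right_comm]
  have hIoc1 : ∀ t : ℕ, Finset.Icc 1 t = Finset.Ioc 0 t := by
    intro t; rw [← Finset.Icc_add_one_left_eq_Ioc]; rfl
  -- periodicity
  have haper : ∀ n k : ℕ, a (k + n * P) = a k := by
    intro n
    induction n with
    | zero => intro k; simp
    | succ n ih =>
      intro k
      have h1 : k + (n + 1) * P = (k + n * P) + P := by ring
      rw [h1, hper, ih]
  have hprodshift : ∀ (n s t : ℕ),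
      (∏ j ∈ Finset.Ioc (s + n * P) (t + n * P), a j) = ∏ j ∈ Finset.Ioc s t, a j := by
    intro n s t
    rw [← Finset.map_add_right_Ioc, Finset.prod_map]
    exact Finset.prod_congr rfl fun j _ => by simp [addRightEmbedding, haper n j]
  have hsumshift : ∀ (c s t : ℕ) (F : ℕ → ℝ),
      (∑ j ∈ Finset.Ioc (s + c) (t + c), F j) = ∑ j ∈ Finset.Ioc s t, F (j + c) := by
    intro c s t F
    rw [← Finset.map_add_right_Ioc, Finset.sum_map]
    exact Finset.sum_congr rfl fun j _ => by simp [addRightEmbedding]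
  have hblock : ∀ n : ℕ, (∏ j ∈ Finset.Ioc (n * P) (n * P + P), a j) = φ := by
    intro n
    have h1 : n * P + P = P + n * P := Nat.add_comm _ _
    have h2 : n * P = 0 + n * P := (Nat.zero_add _).symm
    rw [h1]
    rw (occs := .pos [1]) [h2]
    rw [hprodshift n 0 P, hφdef, hIoc1]
  have hφpow : ∀ n : ℕ, (∏ j ∈ Finset.Ioc 0 (n * P), a j) = φ ^ n := by
    intro n
    induction n with
    | zero => simp
    | succ n ih =>
      have h1 : (n + 1) * P = n * P + P := Nat.succ_mul n P
      rw [h1, ← Finset.prod_Ioc_consecutive a (Nat.zero_le (n * P)) (Nat.le_add_right _ P),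
        ih, hblock n, pow_succ]
  -- explicit solution
  have hsol : ∀ k ω, X k ω = (∏ j ∈ Finset.Ioc 0 k, a j) * X 0 ω
      + ∑ s ∈ Finset.Ioc 0 k, (∏ j ∈ Finset.Ioc s k, a j) * u s ω := by
    intro k
    induction k with
    | zero => intro ω; simp
    | succ k ih =>
      intro ω
      rw [hrec k ω, ih ω, Finset.prod_Ioc_succ_top (Nat.zero_le k),
        Finset.sum_Ioc_succ_top (Nat.zero_le k)]
      have hterm : ∀ s ∈ Finset.Ioc 0 k,
          (∏ j ∈ Finset.Ioc s (k + 1), a j) * u s ω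
            = a (k + 1) * ((∏ j ∈ Finset.Ioc s k, a j) * u s ω) := by
        intro s hs
        rw [Finset.prod_Ioc_succ_top (Finset.mem_Ioc.1 hs).2]; ring
      rw [Finset.sum_congr rfl hterm, ← Finset.mul_sum]
      simp [Finset.Ioc_self]
      ring
  -- U in Ioc form
  have hUIoc : ∀ n ω, U n P ω
      = ∑ s ∈ Finset.Ioc 0 P, (∏ j ∈ Finset.Ioc s P, a j) * u (n * P + s) ω := by
    intro n ω
    rw [hU, hIoc1]
    exact Finset.sum_congr rfl fun s _ => by rw [Finset.Icc_add_one_left_eq_Ioc]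
  -- the partial noise sums
  set S : ℕ → Ω → ℝ := fun n ω =>
    ∑ s ∈ Finset.Ioc 0 (n * P), (∏ j ∈ Finset.Ioc s (n * P), a j) * u s ω with hSdef
  have hS : ∀ n ω, S (n + 1) ω = φ * S n ω + U n P ω := by
    intro n ω
    have h1 : (n + 1) * P = n * P + P := Nat.succ_mul n P
    simp only [hSdef, h1]
    rw [← Finset.sum_Ioc_consecutive _ (Nat.zero_le (n * P)) (Nat.le_add_right (n * P) P)]
    congr 1
    · rw [Finset.mul_sum]
      apply Finset.sum_congr rfl
      intro s hs
      rw [← Finset.prod_Ioc_consecutive a (Finset.mem_Ioc.1 hs).2 (Nat.le_add_right _ _),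
        hblock n]
      ring
    · rw [hUIoc n ω]
      have h2 : n * P = 0 + n * P := (Nat.zero_add _).symm
      have h3 : n * P + P = P + n * P := Nat.add_comm _ _
      rw (occs := .pos [1]) [h2]
      rw [h3, hsumshift (n * P) 0 P]
      apply Finset.sum_congr rfl
      intro t ht
      rw [← h3]
      have h4 : n * P + P = P + n * P := Nat.add_comm _ _
      rw [h4, hprodshift n t P, Nat.add_comm t (n * P)]
  have hSZ : ∀ n ω, S (n + 1) ω = φ ^ (n + 1) * Z n ω := by
    intro n
    induction n with
    | zero =>
      intro ω
      rw [hS 0 ω, hZ 0 ω]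
      simp only [hSdef]
      simp [Finset.Ioc_self, pow_one, mul_inv_cancel_left₀ hφ0]
    | succ n ih =>
      intro ω
      rw [hS (n + 1) ω, ih ω, hZ (n + 1) ω]
      rw [Finset.sum_range_succ, ← hZ n ω]
      have h5 : (φ : ℝ) ^ (n + 1 + 1) ≠ 0 := hφn0 _
      field_simp
      ring
  -- now fix r
  intro r hr1 hrP
  obtain ⟨m, rfl⟩ : ∃ m, r = m + 1 := ⟨r - 1, by omega⟩
  have hidx : ∀ j : ℕ, j * P + (m + 1) - 1 = j * P + m := fun j => by omega
  have hidx2 : m + 1 - 1 = m := by omega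
  simp only [hidx, hidx2, hIoc1]
  set A : ℝ := ∏ j ∈ Finset.Ioc 0 m, a j with hAdef
  set R : ℕ → Ω → ℝ := fun n ω =>
    ∑ s ∈ Finset.Ioc 0 m, (∏ j ∈ Finset.Ioc s m, a j) * u (n * P + s) ω with hRdef
  -- key formula
  have hkey : ∀ n ω, X ((n + 1) * P + m) ω
      = φ ^ (n + 1) * (A * (X 0 ω + Z n ω)) + R (n + 1) ω := by
    intro n ω
    set c : ℕ := (n + 1) * P with hc
    have hc0 : 0 ≤ c := Nat.zero_le _
    have hcm : c ≤ c + m := Nat.le_add_right _ _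
    have hcomm : c + m = m + c := Nat.add_comm _ _
    have hshiftA : (∏ j ∈ Finset.Ioc c (c + m), a j) = A := by
      have h2 : c = 0 + c := (Nat.zero_add _).symm
      rw (occs := .pos [1]) [h2]
      rw [hcomm, hc, hprodshift (n + 1) 0 m, hAdef]
    rw [hsol (c + m) ω]
    have hprod : (∏ j ∈ Finset.Ioc 0 (c + m), a j) = φ ^ (n + 1) * A := by
      rw [← Finset.prod_Ioc_consecutive a hc0 hcm, hc, hφpow (n + 1), ← hc, hshiftA]
    have hsum : (∑ s ∈ Finset.Ioc 0 (c + m), (∏ j ∈ Finset.Ioc s (c + m), a j) * u s ω)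
        = A * S (n + 1) ω + R (n + 1) ω := by
      rw [← Finset.sum_Ioc_consecutive _ hc0 hcm]
      congr 1
      · simp only [hSdef, ← hc, Finset.mul_sum]
        apply Finset.sum_congr rfl
        intro s hs
        rw [← Finset.prod_Ioc_consecutive a (Finset.mem_Ioc.1 hs).2 hcm, hshiftA]
        ring
      · have h2 : c = 0 + c := (Nat.zero_add _).symm
        rw (occs := .pos [1]) [h2]
        rw [hcomm, hsumshift c 0 m]
        apply Finset.sum_congr rfl
        intro t ht
        rw [← hcomm]
        have h4 : c + m = m + c := hcomm
        rw [h4, hc, hprodshift (n + 1) t m, Nat.add_comm t ((n + 1) * P)]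
    rw [hprod, hsum, hSZ n ω]
    ring
  -- equal second moments via equal distribution
  have hmap : ∀ k : ℕ, Measure.map (u (k + P)) μ = Measure.map (u k) μ := by
    intro k
    have h := hpd (k + 1)
    have hmeasF : ∀ (v : ℕ → Ω → ℝ), (∀ j, Measurable (v j)) →
        Measurable (fun ω => fun i : Fin (k + 1) => v (i : ℕ) ω) := by
      intro v hv
      exact measurable_pi_lambda _ fun i => hv _
    have h1 : Measure.map (fun x : Fin (k + 1) → ℝ => x ⟨k, Nat.lt_succ_self k⟩)
        (Measure.map (fun ω => fun i : Fin (k + 1) => u ((i : ℕ) + P) ω) μ)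
        = Measure.map (u (k + P)) μ := by
      rw [Measure.map_map (measurable_pi_apply _)
        (hmeasF (fun j => u (j + P)) (fun j => humeas _))]
      rfl
    have h2 : Measure.map (fun x : Fin (k + 1) → ℝ => x ⟨k, Nat.lt_succ_self k⟩)
        (Measure.map (fun ω => fun i : Fin (k + 1) => u (i : ℕ) ω) μ)
        = Measure.map (u k) μ := by
      rw [Measure.map_map (measurable_pi_apply _) (hmeasF u humeas)]
      rfl
    rw [← h1, ← h2, h]
  have hmapn : ∀ n k : ℕ, Measure.map (u (k + n * P)) μ = Measure.map (u k) μ := by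
    intro n
    induction n with
    | zero => intro k; simp
    | succ n ih =>
      intro k
      have h1 : k + (n + 1) * P = (k + n * P) + P := by ring
      rw [h1, hmap, ih]
  have hint2 : ∀ n k : ℕ, ∫ ω, (u (k + n * P) ω) ^ 2 ∂μ = ∫ ω, (u k ω) ^ 2 ∂μ := by
    intro n k
    have hg : Measurable fun x : ℝ => x ^ 2 := measurable_id.pow_const 2
    have h1 : ∫ ω, (u (k + n * P) ω) ^ 2 ∂μ
        = ∫ x, x ^ 2 ∂(Measure.map (u (k + n * P)) μ) :=
      (integral_map (humeas _).aemeasurable hg.aestronglyMeasurable).symm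
    have h2 : ∫ ω, (u k ω) ^ 2 ∂μ = ∫ x, x ^ 2 ∂(Measure.map (u k) μ) :=
      (integral_map (humeas _).aemeasurable hg.aestronglyMeasurable).symm
    rw [h1, h2, hmapn n k]
  -- Borel–Cantelli
  have hBC : ∀ᵐ ω ∂μ, ∀ s : ℕ, Tendsto (fun n => (φ ^ n)⁻¹ * u (n * P + s) ω) atTop (𝓝 0) := by
    rw [ae_all_iff]
    intro s
    apply ae_tendsto_zero_sq μ (fun n ω => (φ ^ n)⁻¹ * u (n * P + s) ω)
      (fun n => (humeas _).const_mul _)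
      (fun n => ((huL2 _).const_mul _).integrable_sq)
    have hintn : ∀ n : ℕ, ∫ ω, ((φ ^ n)⁻¹ * u (n * P + s) ω) ^ 2 ∂μ
        = ((φ ^ 2) ^ n)⁻¹ * ∫ ω, (u s ω) ^ 2 ∂μ := by
      intro n
      have h1 : ∀ ω, ((φ ^ n)⁻¹ * u (n * P + s) ω) ^ 2
          = ((φ ^ 2) ^ n)⁻¹ * (u (n * P + s) ω) ^ 2 := by
        intro ω; rw [mul_pow, hsqinv n]
      simp_rw [h1]
      rw [MeasureTheory.integral_const_mul]
      congr 1
      rw [Nat.add_comm (n * P) s, hint2 n s]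
    apply Summable.congr (f := fun n => ((φ ^ 2) ^ n)⁻¹ * ∫ ω, (u s ω) ^ 2 ∂μ)
    · apply Summable.mul_right
      have h2 : ∀ n : ℕ, ((φ ^ 2) ^ n)⁻¹ = ((φ ^ 2)⁻¹) ^ n := fun n => by rw [inv_pow]
      simp_rw [h2]
      exact summable_geometric_of_lt_one (by positivity) (by
        rw [inv_lt_one_iff₀]; right; exact hq)
    · intro n; exact (hintn n).symm
  -- almost sure convergence
  have hAS : ∀ᵐ ω ∂μ, Tendsto
      (fun n => ((φ ^ 2) ^ n)⁻¹ * ∑ j ∈ Finset.range n, (X (j * P + m) ω) ^ 2) atTop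
      (𝓝 (A ^ 2 * (X 0 ω + ζ ω) ^ 2 / (φ ^ 2 - 1))) := by
    filter_upwards [hζas, hBC] with ω hω hbc
    have hy : Tendsto (fun j => (φ ^ j)⁻¹ * X (j * P + m) ω) atTop
        (𝓝 (A * (X 0 ω + ζ ω))) := by
      rw [← tendsto_add_atTop_iff_nat 1]
      have heq : ∀ n : ℕ, (φ ^ (n + 1))⁻¹ * X ((n + 1) * P + m) ω
          = A * (X 0 ω + Z n ω) + ∑ s ∈ Finset.Ioc 0 m,
              (∏ j ∈ Finset.Ioc s m, a j) * ((φ ^ (n + 1))⁻¹ * u ((n + 1) * P + s) ω) := by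
        intro n
        rw [hkey n ω]
        simp only [hRdef]
        rw [mul_add, ← mul_assoc, inv_mul_cancel₀ (hφn0 (n + 1)), one_mul, Finset.mul_sum]
        congr 1
        exact Finset.sum_congr rfl fun s _ => by ring
      simp only [heq]
      have h6 : Tendsto (fun n => A * (X 0 ω + Z n ω)) atTop (𝓝 (A * (X 0 ω + ζ ω))) :=
        (tendsto_const_nhds.add hω).const_mul A
      have h7 : Tendsto (fun n => ∑ s ∈ Finset.Ioc 0 m,
          (∏ j ∈ Finset.Ioc s m, a j) * ((φ ^ (n + 1))⁻¹ * u ((n + 1) * P + s) ω))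
          atTop (𝓝 0) := by
        have h0 : (0 : ℝ) = ∑ s ∈ Finset.Ioc 0 m, 0 := by simp
        rw [h0]
        apply tendsto_finset_sum
        intro s _
        have h8 : Tendsto (fun n => (φ ^ (n + 1))⁻¹ * u ((n + 1) * P + s) ω) atTop (𝓝 0) :=
          (tendsto_add_atTop_iff_nat 1).2 (hbc s)
        simpa using h8.const_mul ((∏ j ∈ Finset.Ioc s m, a j))
      simpa using h6.add h7
    have hc : Tendsto (fun j => ((φ ^ 2) ^ j)⁻¹ * (X (j * P + m) ω) ^ 2) atTop
        (𝓝 (A ^ 2 * (X 0 ω + ζ ω) ^ 2)) := by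
      have hmul := hy.mul hy
      have heq : ∀ j, ((φ ^ j)⁻¹ * X (j * P + m) ω) * ((φ ^ j)⁻¹ * X (j * P + m) ω)
          = ((φ ^ 2) ^ j)⁻¹ * (X (j * P + m) ω) ^ 2 := by
        intro j; rw [← hsqinv j]; ring
      simp only [heq] at hmul
      convert hmul using 2
      ring
    have htl := toeplitz_lim hq hc
    refine htl.congr fun n => ?_
    congr 1
    apply Finset.sum_congr rfl
    intro j _
    rw [← mul_assoc, mul_inv_cancel₀ (hqn0 j), one_mul]
  -- L² membership facts
  have hXmem : ∀ k, MemLp (X k) 2 μ := by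
    intro k
    induction k with
    | zero => exact hX0
    | succ k ih =>
      have hfe : X (k + 1) = fun ω => a (k + 1) * X k ω + u (k + 1) ω := funext (hrec k)
      rw [hfe]
      exact (ih.const_mul _).add (huL2 _)
  have hRmem : ∀ n, MemLp (R n) 2 μ := by
    intro n
    exact memLp_finset_sum _ fun s _ => (huL2 _).const_mul _
  have hZmem : ∀ n, MemLp (Z n) 2 μ := by
    intro n
    have hUmem : ∀ l, MemLp (U l P) 2 μ := by
      intro l
      have hfe : U l P = fun ω =>
          ∑ s ∈ Finset.Ioc 0 P, (∏ j ∈ Finset.Ioc s P, a j) * u (l * P + s) ω :=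
        funext (hUIoc l)
      rw [hfe]
      exact memLp_finset_sum _ fun s _ => (huL2 _).const_mul _
    have hfe : Z n = fun ω => ∑ l ∈ Finset.range (n + 1), (φ ^ (l + 1))⁻¹ * U l P ω :=
      funext (hZ n)
    rw [hfe]
    exact memLp_finset_sum _ fun l _ => (hUmem l).const_mul _
  have hgmem : MemLp (fun ω => A * (X 0 ω + ζ ω)) 2 μ := (hX0.add hζmem).const_mul A
  have hGint : Integrable (fun ω => (A * (X 0 ω + ζ ω)) ^ 2) μ := hgmem.integrable_sq
  -- uniform bound on second moments of R
  set K : ℝ := ((Finset.Ioc 0 m).card : ℝ) * ∑ s ∈ Finset.Ioc 0 m,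
      (∏ j ∈ Finset.Ioc s m, a j) ^ 2 * ∫ ω, (u s ω) ^ 2 ∂μ with hKdef
  have hK0 : 0 ≤ K := by
    apply mul_nonneg (Nat.cast_nonneg _)
    apply Finset.sum_nonneg; intro s _
    exact mul_nonneg (sq_nonneg _) (integral_nonneg fun ω => sq_nonneg _)
  have hR2 : ∀ n : ℕ, ∫ ω, (R n ω) ^ 2 ∂μ ≤ K := by
    intro n
    have hpt : ∀ ω, (R n ω) ^ 2 ≤ ((Finset.Ioc 0 m).card : ℝ) *
        ∑ s ∈ Finset.Ioc 0 m, (∏ j ∈ Finset.Ioc s m, a j) ^ 2 * (u (n * P + s) ω) ^ 2 := by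
      intro ω
      have hcs := Finset.sum_mul_sq_le_sq_mul_sq (Finset.Ioc 0 m) (fun _ => (1 : ℝ))
        (fun s => (∏ j ∈ Finset.Ioc s m, a j) * u (n * P + s) ω)
      simp only [one_mul, one_pow] at hcs
      rw [Finset.sum_const, nsmul_eq_mul, mul_one] at hcs
      calc (R n ω) ^ 2
          = (∑ s ∈ Finset.Ioc 0 m, (∏ j ∈ Finset.Ioc s m, a j) * u (n * P + s) ω) ^ 2 := rfl
        _ ≤ ((Finset.Ioc 0 m).card : ℝ) *
            ∑ s ∈ Finset.Ioc 0 m, ((∏ j ∈ Finset.Ioc s m, a j) * u (n * P + s) ω) ^ 2 := hcs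
        _ = ((Finset.Ioc 0 m).card : ℝ) *
            ∑ s ∈ Finset.Ioc 0 m, (∏ j ∈ Finset.Ioc s m, a j) ^ 2 * (u (n * P + s) ω) ^ 2 := by
            congr 1
            exact Finset.sum_congr rfl fun s _ => by rw [mul_pow]
    have hintRHS : Integrable (fun ω => ((Finset.Ioc 0 m).card : ℝ) *
        ∑ s ∈ Finset.Ioc 0 m, (∏ j ∈ Finset.Ioc s m, a j) ^ 2 * (u (n * P + s) ω) ^ 2) μ := by
      apply Integrable.const_mul
      apply integrable_finset_sum
      intro s _
      exact ((huL2 _).integrable_sq).const_mul _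
    calc ∫ ω, (R n ω) ^ 2 ∂μ
        ≤ ∫ ω, ((Finset.Ioc 0 m).card : ℝ) *
            ∑ s ∈ Finset.Ioc 0 m, (∏ j ∈ Finset.Ioc s m, a j) ^ 2 * (u (n * P + s) ω) ^ 2 ∂μ :=
          integral_mono ((hRmem n).integrable_sq) hintRHS hpt
      _ = ((Finset.Ioc 0 m).card : ℝ) * ∑ s ∈ Finset.Ioc 0 m,
            (∏ j ∈ Finset.Ioc s m, a j) ^ 2 * ∫ ω, (u (n * P + s) ω) ^ 2 ∂μ := by
          rw [MeasureTheory.integral_const_mul,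
            integral_finset_sum _ (fun s _ => ((huL2 _).integrable_sq).const_mul _)]
          congr 1
          exact Finset.sum_congr rfl fun s _ => by rw [MeasureTheory.integral_const_mul]
      _ = K := by
          rw [hKdef]
          congr 1
          apply Finset.sum_congr rfl
          intro s _
          rw [show n * P + s = s + n * P from Nat.add_comm _ _, hint2 n s]
  -- L² convergence of the normalized X along the subsequence
  have hDmem : ∀ j, MemLp (fun ω => (φ ^ j)⁻¹ * X (j * P + m) ω - A * (X 0 ω + ζ ω)) 2 μ :=
    fun j => ((hXmem _).const_mul _).sub hgmem
  have hE : Tendsto (fun j => ∫ ω,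
      ((φ ^ j)⁻¹ * X (j * P + m) ω - A * (X 0 ω + ζ ω)) ^ 2 ∂μ) atTop (𝓝 0) := by
    rw [← tendsto_add_atTop_iff_nat 1]
    apply squeeze_zero (g := fun n => 2 * A ^ 2 * (∫ ω, (Z n ω - ζ ω) ^ 2 ∂μ)
        + 2 * ((φ ^ 2) ^ (n + 1))⁻¹ * K)
      (fun n => integral_nonneg fun ω => sq_nonneg _) ?_ ?_
    · intro n
      have hD : ∀ ω, (φ ^ (n + 1))⁻¹ * X ((n + 1) * P + m) ω - A * (X 0 ω + ζ ω)
          = A * (Z n ω - ζ ω) + (φ ^ (n + 1))⁻¹ * R (n + 1) ω := by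
        intro ω
        rw [hkey n ω]
        have h5 : (φ ^ (n + 1))⁻¹ * (φ ^ (n + 1)) = 1 := inv_mul_cancel₀ (hφn0 _)
        rw [mul_add, ← mul_assoc, h5, one_mul]
        ring
      simp only [hD]
      have hZζint : Integrable (fun ω => (Z n ω - ζ ω) ^ 2) μ :=
        ((hZmem n).sub hζmem).integrable_sq
      have hRint : Integrable (fun ω => (R (n + 1) ω) ^ 2) μ := (hRmem _).integrable_sq
      have hpt : ∀ ω, (A * (Z n ω - ζ ω) + (φ ^ (n + 1))⁻¹ * R (n + 1) ω) ^ 2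
          ≤ (2 * A ^ 2) * (Z n ω - ζ ω) ^ 2 + (2 * ((φ ^ 2) ^ (n + 1))⁻¹) * (R (n + 1) ω) ^ 2 := by
        intro ω
        have h7 : ((φ ^ (n + 1))⁻¹ * R (n + 1) ω) ^ 2
            = ((φ ^ 2) ^ (n + 1))⁻¹ * (R (n + 1) ω) ^ 2 := by rw [mul_pow, hsqinv]
        nlinarith [sq_nonneg (A * (Z n ω - ζ ω) - (φ ^ (n + 1))⁻¹ * R (n + 1) ω),
          sq_nonneg (A * (Z n ω - ζ ω) + (φ ^ (n + 1))⁻¹ * R (n + 1) ω)]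
      have hLHSint : Integrable
          (fun ω => (A * (Z n ω - ζ ω) + (φ ^ (n + 1))⁻¹ * R (n + 1) ω) ^ 2) μ :=
        ((((hZmem n).sub hζmem).const_mul A).add ((hRmem (n + 1)).const_mul _)).integrable_sq
      calc ∫ ω, (A * (Z n ω - ζ ω) + (φ ^ (n + 1))⁻¹ * R (n + 1) ω) ^ 2 ∂μ
          ≤ ∫ ω, ((2 * A ^ 2) * (Z n ω - ζ ω) ^ 2
              + (2 * ((φ ^ 2) ^ (n + 1))⁻¹) * (R (n + 1) ω) ^ 2) ∂μ :=
            integral_mono hLHSint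
              ((hZζint.const_mul _).add (hRint.const_mul _)) hpt
        _ = (2 * A ^ 2) * (∫ ω, (Z n ω - ζ ω) ^ 2 ∂μ)
              + (2 * ((φ ^ 2) ^ (n + 1))⁻¹) * ∫ ω, (R (n + 1) ω) ^ 2 ∂μ := by
            rw [integral_add (hZζint.const_mul _) (hRint.const_mul _),
              MeasureTheory.integral_const_mul, MeasureTheory.integral_const_mul]
        _ ≤ 2 * A ^ 2 * (∫ ω, (Z n ω - ζ ω) ^ 2 ∂μ) + 2 * ((φ ^ 2) ^ (n + 1))⁻¹ * K := by
            have h9 : (0:ℝ) < ((φ ^ 2) ^ (n + 1))⁻¹ := by positivity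
            have := hR2 (n + 1)
            nlinarith
    · have t1 : Tendsto (fun n => 2 * A ^ 2 * ∫ ω, (Z n ω - ζ ω) ^ 2 ∂μ) atTop (𝓝 0) := by
        simpa using hζL2.const_mul (2 * A ^ 2)
      have t2 : Tendsto (fun n : ℕ => 2 * ((φ ^ 2) ^ (n + 1))⁻¹ * K) atTop (𝓝 0) := by
        have tg : Tendsto (fun n : ℕ => ((φ ^ 2)⁻¹) ^ (n + 1)) atTop (𝓝 0) :=
          (tendsto_add_atTop_iff_nat 1).2 (tendsto_pow_atTop_nhds_zero_of_lt_one
            (by positivity) (by rw [inv_lt_one_iff₀]; right; exact hq))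
        have := (tg.const_mul 2).mul_const K
        simpa [inv_pow, mul_assoc] using this
      simpa using t1.add t2
  -- integrability of the relevant quantities
  have hcint : ∀ j, Integrable (fun ω => ((φ ^ 2) ^ j)⁻¹ * (X (j * P + m) ω) ^ 2) μ :=
    fun j => ((hXmem _).integrable_sq).const_mul _
  have hLint : Integrable (fun ω => A ^ 2 * (X 0 ω + ζ ω) ^ 2) μ :=
    ((hX0.add hζmem).integrable_sq).const_mul _
  have hdint : ∀ j, Integrable (fun ω =>
      |((φ ^ 2) ^ j)⁻¹ * (X (j * P + m) ω) ^ 2 - A ^ 2 * (X 0 ω + ζ ω) ^ 2|) μ :=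
    fun j => ((hcint j).sub hLint).abs
  have hcy : ∀ (j : ℕ) (ω : Ω), ((φ ^ 2) ^ j)⁻¹ * (X (j * P + m) ω) ^ 2
      = ((φ ^ j)⁻¹ * X (j * P + m) ω) ^ 2 := by
    intro j ω; rw [mul_pow, hsqinv]
  -- L¹ convergence of the squares
  set eseq : ℕ → ℝ := fun j => ∫ ω,
      |((φ ^ 2) ^ j)⁻¹ * (X (j * P + m) ω) ^ 2 - A ^ 2 * (X 0 ω + ζ ω) ^ 2| ∂μ with heseq
  have he : Tendsto eseq atTop (𝓝 0) := by
    rw [Metric.tendsto_atTop]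
    intro ε hε
    set G : ℝ := ∫ ω, (A * (X 0 ω + ζ ω)) ^ 2 ∂μ with hGdef
    have hG0 : 0 ≤ G := integral_nonneg fun ω => sq_nonneg _
    set δ : ℝ := ε / (2 * (G + 1)) with hδdef
    have hδ : 0 < δ := by positivity
    have hδG : δ * G < ε / 2 := by
      have h1 : δ * (G + 1) = ε / 2 := by rw [hδdef]; field_simp
      nlinarith
    rw [Metric.tendsto_atTop] at hE
    obtain ⟨N, hN⟩ := hE (ε / (2 * (1 + δ⁻¹))) (by positivity)
    refine ⟨N, fun j hj => ?_⟩
    have hEj := hN j hj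
    rw [Real.dist_eq, sub_zero,
      abs_of_nonneg (integral_nonneg fun ω => sq_nonneg _)] at hEj
    rw [Real.dist_eq, sub_zero, heseq,
      abs_of_nonneg (integral_nonneg fun ω => abs_nonneg _)]
    have hpt : ∀ ω, |((φ ^ 2) ^ j)⁻¹ * (X (j * P + m) ω) ^ 2 - A ^ 2 * (X 0 ω + ζ ω) ^ 2|
        ≤ (1 + δ⁻¹) * ((φ ^ j)⁻¹ * X (j * P + m) ω - A * (X 0 ω + ζ ω)) ^ 2
          + δ * (A * (X 0 ω + ζ ω)) ^ 2 := by
      intro ω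
      rw [hcy j ω, show A ^ 2 * (X 0 ω + ζ ω) ^ 2 = (A * (X 0 ω + ζ ω)) ^ 2 from by ring]
      exact abs_sq_sub_sq_le hδ _ _
    have hDsqint : Integrable
        (fun ω => ((φ ^ j)⁻¹ * X (j * P + m) ω - A * (X 0 ω + ζ ω)) ^ 2) μ :=
      (hDmem j).integrable_sq
    have hint2' : Integrable (fun ω =>
        (1 + δ⁻¹) * ((φ ^ j)⁻¹ * X (j * P + m) ω - A * (X 0 ω + ζ ω)) ^ 2
          + δ * (A * (X 0 ω + ζ ω)) ^ 2) μ :=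
      (hDsqint.const_mul _).add (hGint.const_mul _)
    calc ∫ ω, |((φ ^ 2) ^ j)⁻¹ * (X (j * P + m) ω) ^ 2 - A ^ 2 * (X 0 ω + ζ ω) ^ 2| ∂μ
        ≤ ∫ ω, ((1 + δ⁻¹) * ((φ ^ j)⁻¹ * X (j * P + m) ω - A * (X 0 ω + ζ ω)) ^ 2
            + δ * (A * (X 0 ω + ζ ω)) ^ 2) ∂μ := integral_mono (hdint j) hint2' hpt
      _ = (1 + δ⁻¹) * (∫ ω, ((φ ^ j)⁻¹ * X (j * P + m) ω - A * (X 0 ω + ζ ω)) ^ 2 ∂μ)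
            + δ * G := by
          rw [integral_add (hDsqint.const_mul _) (hGint.const_mul _),
            MeasureTheory.integral_const_mul, MeasureTheory.integral_const_mul, hGdef]
      _ < ε := by
          have h8 : (1 + δ⁻¹) * (∫ ω,
              ((φ ^ j)⁻¹ * X (j * P + m) ω - A * (X 0 ω + ζ ω)) ^ 2 ∂μ)
              < (1 + δ⁻¹) * (ε / (2 * (1 + δ⁻¹))) :=
            mul_lt_mul_of_pos_left hEj (by positivity)
          have h9 : (1 + δ⁻¹) * (ε / (2 * (1 + δ⁻¹))) = ε / 2 := by
            have hne : (1 : ℝ) + δ⁻¹ ≠ 0 := by positivity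
            field_simp
          linarith
  refine ⟨hAS, ?_⟩
  -- L¹ convergence of the Toeplitz means
  set IL : ℝ := ∫ ω, |A ^ 2 * (X 0 ω + ζ ω) ^ 2| ∂μ with hILdef
  have hIL0 : 0 ≤ IL := integral_nonneg fun ω => abs_nonneg _
  apply squeeze_zero (g := fun n => ((φ ^ 2) ^ n)⁻¹ * ∑ j ∈ Finset.range n, (φ ^ 2) ^ j * eseq j
      + ((φ ^ 2) ^ n)⁻¹ * (IL / (φ ^ 2 - 1)))
    (fun n => integral_nonneg fun ω => abs_nonneg _) ?_ ?_
  · intro n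
    have hid : ∀ ω, ((φ ^ 2) ^ n)⁻¹ * ∑ j ∈ Finset.range n, (X (j * P + m) ω) ^ 2
        - A ^ 2 * (X 0 ω + ζ ω) ^ 2 / (φ ^ 2 - 1)
        = ((φ ^ 2) ^ n)⁻¹ * (∑ j ∈ Finset.range n, (φ ^ 2) ^ j *
            (((φ ^ 2) ^ j)⁻¹ * (X (j * P + m) ω) ^ 2 - A ^ 2 * (X 0 ω + ζ ω) ^ 2))
          - ((φ ^ 2) ^ n)⁻¹ * (A ^ 2 * (X 0 ω + ζ ω) ^ 2 / (φ ^ 2 - 1)) := by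
      intro ω
      have hs1 : ∑ j ∈ Finset.range n, (φ ^ 2) ^ j *
          (((φ ^ 2) ^ j)⁻¹ * (X (j * P + m) ω) ^ 2 - A ^ 2 * (X 0 ω + ζ ω) ^ 2)
          = (∑ j ∈ Finset.range n, (X (j * P + m) ω) ^ 2)
            - (((φ ^ 2) ^ n - 1) / (φ ^ 2 - 1)) * (A ^ 2 * (X 0 ω + ζ ω) ^ 2) := by
        have hterm : ∀ j ∈ Finset.range n, (φ ^ 2) ^ j *
            (((φ ^ 2) ^ j)⁻¹ * (X (j * P + m) ω) ^ 2 - A ^ 2 * (X 0 ω + ζ ω) ^ 2)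
            = (X (j * P + m) ω) ^ 2 - (φ ^ 2) ^ j * (A ^ 2 * (X 0 ω + ζ ω) ^ 2) := by
          intro j _
          rw [mul_sub, ← mul_assoc, mul_inv_cancel₀ (hqn0 j), one_mul]
        rw [Finset.sum_congr rfl hterm, Finset.sum_sub_distrib, ← Finset.sum_mul,
          geom_sum_eq (ne_of_gt hq) n]
      rw [hs1]
      have hqn : ((φ:ℝ) ^ 2) ^ n ≠ 0 := hqn0 n
      have hq1' : (φ:ℝ) ^ 2 - 1 ≠ 0 := ne_of_gt hq1
      field_simp
      ring
    have habs : ∀ ω, |((φ ^ 2) ^ n)⁻¹ * ∑ j ∈ Finset.range n, (X (j * P + m) ω) ^ 2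
        - A ^ 2 * (X 0 ω + ζ ω) ^ 2 / (φ ^ 2 - 1)|
        ≤ ((φ ^ 2) ^ n)⁻¹ * ∑ j ∈ Finset.range n, (φ ^ 2) ^ j *
            |((φ ^ 2) ^ j)⁻¹ * (X (j * P + m) ω) ^ 2 - A ^ 2 * (X 0 ω + ζ ω) ^ 2|
          + ((φ ^ 2) ^ n)⁻¹ * (|A ^ 2 * (X 0 ω + ζ ω) ^ 2| / (φ ^ 2 - 1)) := by
      intro ω
      rw [hid ω]
      have hqninv : (0:ℝ) < (((φ:ℝ) ^ 2) ^ n)⁻¹ := by positivity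
      refine (abs_sub _ _).trans ?_
      gcongr
      · rw [abs_mul, abs_of_pos hqninv]
        gcongr
        refine (Finset.abs_sum_le_sum_abs _ _).trans ?_
        apply le_of_eq
        apply Finset.sum_congr rfl
        intro j _
        rw [abs_mul, abs_of_pos (by positivity : (0:ℝ) < ((φ:ℝ) ^ 2) ^ j)]
      · rw [abs_mul, abs_of_pos hqninv, abs_div, abs_of_pos hq1]
    have hsumint : Integrable (fun ω =>
        ((φ ^ 2) ^ n)⁻¹ * ∑ j ∈ Finset.range n, (X (j * P + m) ω) ^ 2
          - A ^ 2 * (X 0 ω + ζ ω) ^ 2 / (φ ^ 2 - 1)) μ := by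
      apply Integrable.sub
      · exact (integrable_finset_sum _ fun j _ => (hXmem _).integrable_sq).const_mul _
      · exact hLint.div_const _
    have hRHSint : Integrable (fun ω =>
        ((φ ^ 2) ^ n)⁻¹ * ∑ j ∈ Finset.range n, (φ ^ 2) ^ j *
            |((φ ^ 2) ^ j)⁻¹ * (X (j * P + m) ω) ^ 2 - A ^ 2 * (X 0 ω + ζ ω) ^ 2|
          + ((φ ^ 2) ^ n)⁻¹ * (|A ^ 2 * (X 0 ω + ζ ω) ^ 2| / (φ ^ 2 - 1))) μ := by
      apply Integrable.add
      · exact (integrable_finset_sum _ fun j _ => (hdint j).const_mul _).const_mul _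
      · exact ((hLint.abs.div_const _).const_mul _)
    calc ∫ ω, |((φ ^ 2) ^ n)⁻¹ * ∑ j ∈ Finset.range n, (X (j * P + m) ω) ^ 2
          - A ^ 2 * (X 0 ω + ζ ω) ^ 2 / (φ ^ 2 - 1)| ∂μ
        ≤ ∫ ω, (((φ ^ 2) ^ n)⁻¹ * ∑ j ∈ Finset.range n, (φ ^ 2) ^ j *
              |((φ ^ 2) ^ j)⁻¹ * (X (j * P + m) ω) ^ 2 - A ^ 2 * (X 0 ω + ζ ω) ^ 2|
            + ((φ ^ 2) ^ n)⁻¹ * (|A ^ 2 * (X 0 ω + ζ ω) ^ 2| / (φ ^ 2 - 1))) ∂μ :=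
          integral_mono hsumint.abs hRHSint habs
      _ = ((φ ^ 2) ^ n)⁻¹ * ∑ j ∈ Finset.range n, (φ ^ 2) ^ j * eseq j
            + ((φ ^ 2) ^ n)⁻¹ * (IL / (φ ^ 2 - 1)) := by
          rw [integral_add ((integrable_finset_sum _ fun j _ =>
              (hdint j).const_mul _).const_mul _) ((hLint.abs.div_const _).const_mul _),
            MeasureTheory.integral_const_mul, MeasureTheory.integral_const_mul,
            integral_finset_sum _ (fun j _ => (hdint j).const_mul _)]
          congr 2
          · exact Finset.sum_congr rfl fun j _ => by rw [MeasureTheory.integral_const_mul]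
          · rw [integral_div, hILdef]
  · have hb1 := toeplitz_zero hq he
    have hb2 : Tendsto (fun n : ℕ => ((φ ^ 2) ^ n)⁻¹ * (IL / (φ ^ 2 - 1))) atTop (𝓝 0) := by
      have tg : Tendsto (fun n : ℕ => ((φ ^ 2)⁻¹) ^ n) atTop (𝓝 0) :=
        tendsto_pow_atTop_nhds_zero_of_lt_one (by positivity)
          (by rw [inv_lt_one_iff₀]; right; exact hq)
      have := tg.mul_const (IL / (φ ^ 2 - 1))
      simpa [inv_pow] using this
    simpa using hb1.add hb2
end

section
/- If X_n → X in probability (or in distribution) and Y_n is asymptotically independent of X_n in the sense that sup over Borel sets A, B of |P[X_n ∈ A, Y_n ∈ B] − P[X_n ∈ A]P[Y_n ∈ B]| → 0, and Y_n converges in distribution to Y, then (X_n, Y_n) converges in distribution to (X', Y') where X' has the law of X, Y' the law of Y, and X', Y' are independent; consequently X_n Y_n converges in distribution to X'·Y'. -/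
set_option maxHeartbeats 1000000

open MeasureTheory Filter Topology BoundedContinuousFunction

section Aux

variable {W : Type*} [MeasurableSpace W]

/-- integrability from a uniform bound -/
lemma aux_integrable_of_bounded (ρ : Measure W) [IsFiniteMeasure ρ] {g : W → ℝ}
    (hg : AEStronglyMeasurable g ρ) {C : ℝ} (h : ∀ ω, |g ω| ≤ C) : Integrable g ρ :=
  (integrable_const C).mono' hg (Eventually.of_forall (by simpa [Real.norm_eq_abs] using h))

lemma aux_countable_atoms (ν : Measure ℝ) [SFinite ν] :
    {x : ℝ | ν {x} ≠ 0}.Countable := by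
  have h := Measure.countable_meas_level_set_pos (μ := ν) (g := (id : ℝ → ℝ)) measurable_id
  have heq : {x : ℝ | ν {x} ≠ 0} = {t : ℝ | 0 < ν {a : ℝ | id a = t}} := by
    ext x
    simp [Set.setOf_eq_eq_singleton, pos_iff_ne_zero]
  rw [heq]
  exact h

lemma aux_exists_nonatom {D : Set ℝ} (hD : D.Countable) {a b : ℝ} (hab : a < b) :
    ∃ x, x ∈ Set.Ioo a b ∧ x ∉ D := by
  by_contra h
  push_neg at h
  have hsub : Set.Ioo a b ⊆ D := fun x hx => h x hx
  have h0 : (volume : Measure ℝ) (Set.Ioo a b) = 0 :=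
    measure_mono_null hsub (hD.measure_zero _)
  rw [Real.volume_Ioo] at h0
  rw [ENNReal.ofReal_eq_zero] at h0
  linarith

/-- a continuous cutoff dominating the indicator of `{x | M+1 ≤ |x|}` and dominated by the
indicator of `{x | M < |x|}` -/
noncomputable def aux_cutoff (M : ℝ) : ℝ →ᵇ ℝ :=
  ⟨⟨fun x => min 1 (max 0 (|x| - M)), by
      exact (continuous_const.min ((continuous_const.max (continuous_abs.sub continuous_const))))⟩, 1, by
    intro x y
    have h1 : ∀ z : ℝ, 0 ≤ min 1 (max 0 (|z| - M)) := fun z =>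
      le_min zero_le_one (le_max_left _ _)
    have h2 : ∀ z : ℝ, min 1 (max 0 (|z| - M)) ≤ 1 := fun z => min_le_left _ _
    rw [Real.dist_eq, abs_le]
    constructor <;> [linarith [h1 x, h2 y]; linarith [h1 y, h2 x]]⟩

lemma aux_cutoff_apply (M x : ℝ) : aux_cutoff M x = min 1 (max 0 (|x| - M)) := rfl

lemma aux_cutoff_nonneg (M x : ℝ) : 0 ≤ aux_cutoff M x :=
  le_min zero_le_one (le_max_left _ _)

lemma aux_cutoff_le_one (M x : ℝ) : aux_cutoff M x ≤ 1 := min_le_left _ _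

lemma aux_cutoff_eq_zero (M x : ℝ) (h : |x| ≤ M) : aux_cutoff M x = 0 := by
  rw [aux_cutoff_apply]
  rw [max_eq_left (by linarith)]
  simp

lemma aux_cutoff_eq_one (M x : ℝ) (h : M + 1 ≤ |x|) : aux_cutoff M x = 1 := by
  rw [aux_cutoff_apply]
  rw [max_eq_right (by linarith), min_eq_left (by linarith)]

/-- tails of a probability measure on ℝ are small -/
lemma aux_tail (ν : Measure ℝ) [IsProbabilityMeasure ν] {δ : ℝ} (hδ : 0 < δ) :
    ∃ M : ℕ, (ν (Set.Icc (-(M:ℝ)) M)ᶜ).toReal < δ := by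
  have hmeas : ∀ n : ℕ, NullMeasurableSet ((Set.Icc (-(n:ℝ)) n)ᶜ) ν := fun n =>
    measurableSet_Icc.compl.nullMeasurableSet
  have hanti : Antitone (fun n : ℕ => (Set.Icc (-(n:ℝ)) n)ᶜ) := by
    intro m n hmn
    apply Set.compl_subset_compl.2
    apply Set.Icc_subset_Icc
    · simp only [neg_le_neg_iff, Nat.cast_le]; exact hmn
    · exact_mod_cast hmn
  have hint : (⋂ n : ℕ, (Set.Icc (-(n:ℝ)) n)ᶜ) = ∅ := by
    ext x
    simp only [Set.mem_iInter, Set.mem_compl_iff, Set.mem_Icc, Set.mem_empty_iff_false,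
      iff_false, not_forall, not_not]
    refine ⟨⌈|x|⌉₊, ?_, ?_⟩
    · have := Nat.le_ceil |x|
      have := neg_abs_le x
      linarith
    · have := Nat.le_ceil |x|
      have := le_abs_self x
      linarith
  have htend := tendsto_measure_iInter_atTop hmeas hanti ⟨0, measure_ne_top _ _⟩
  rw [hint, measure_empty] at htend
  have h2 : Tendsto (fun n : ℕ => (ν (Set.Icc (-(n:ℝ)) n)ᶜ).toReal) atTop (𝓝 0) := by
    have := (ENNReal.tendsto_toReal (by simp)).comp htend
    simpa [Function.comp_def] using this
  exact (h2.eventually_lt_const hδ).exists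

/-- covering lemma for grids -/
lemma aux_cover {t : ℕ → ℝ} (ht : StrictMono t) {x : ℝ} {k : ℕ}
    (h0 : t 0 ≤ x) (hk : x < t k) : ∃ i, i < k ∧ x ∈ Set.Ico (t i) (t (i + 1)) := by
  induction k with
  | zero => exact absurd (h0.trans_lt hk) (lt_irrefl _)
  | succ k ih =>
    by_cases h : t k ≤ x
    · exact ⟨k, Nat.lt_succ_self k, h, hk⟩
    · obtain ⟨i, hik, hx⟩ := ih (lt_of_not_ge h)
      exact ⟨i, hik.trans (Nat.lt_succ_self k), hx⟩

/-- integral of `e + c·1_S + c·1_T` over a probability measure -/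
lemma aux_int_bound (ρ : Measure W) [IsProbabilityMeasure ρ] {S T : Set W}
    (hS : MeasurableSet S) (hT : MeasurableSet T) (e c : ℝ) :
    ∫ ω, (e + c * S.indicator (fun _ => (1:ℝ)) ω + c * T.indicator (fun _ => (1:ℝ)) ω) ∂ρ
      = e + c * (ρ S).toReal + c * (ρ T).toReal := by
  have hiS : Integrable (S.indicator (fun _ => (1:ℝ))) ρ :=
    (integrable_const (1:ℝ)).indicator hS
  have hiT : Integrable (T.indicator (fun _ => (1:ℝ))) ρ :=
    (integrable_const (1:ℝ)).indicator hT
  have h1 : Integrable (fun ω => e + c * S.indicator (fun _ => (1:ℝ)) ω) ρ :=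
    (integrable_const e).add (hiS.const_mul c)
  have e1 : ∫ ω, (e + c * S.indicator (fun _ => (1:ℝ)) ω + c * T.indicator (fun _ => (1:ℝ)) ω) ∂ρ
      = (∫ ω, (e + c * S.indicator (fun _ => (1:ℝ)) ω) ∂ρ)
        + ∫ ω, c * T.indicator (fun _ => (1:ℝ)) ω ∂ρ :=
    integral_add h1 (hiT.const_mul c)
  have e2 : ∫ ω, (e + c * S.indicator (fun _ => (1:ℝ)) ω) ∂ρ
      = (∫ _, e ∂ρ) + ∫ ω, c * S.indicator (fun _ => (1:ℝ)) ω ∂ρ :=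
    integral_add (integrable_const e) (hiS.const_mul c)
  rw [e1, e2, integral_const, integral_const_mul,
    integral_const_mul,
    integral_indicator_const _ hS, integral_indicator_const _ hT]
  simp [measure_univ, Measure.real]

lemma aux_abs_integral_diff_le (ρ : Measure W) [IsProbabilityMeasure ρ] {u v b : W → ℝ}
    (hu : Integrable u ρ) (hv : Integrable v ρ) (hb : Integrable b ρ)
    (h : ∀ ω, |u ω - v ω| ≤ b ω) :
    |∫ ω, u ω ∂ρ - ∫ ω, v ω ∂ρ| ≤ ∫ ω, b ω ∂ρ := by
  rw [← integral_sub hu hv]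
  have h1 : |∫ ω, (u ω - v ω) ∂ρ| ≤ ∫ ω, |u ω - v ω| ∂ρ := by
    simpa [Real.norm_eq_abs] using norm_integral_le_integral_norm (μ := ρ) (fun ω => u ω - v ω)
  exact h1.trans (integral_mono (hu.sub hv).abs hb h)

end Aux

section TailEvent

/-- eventual tail bound for a sequence converging in distribution -/
lemma aux_tail_event {Ω : Type*} [MeasurableSpace Ω] (μ : Measure Ω) [IsProbabilityMeasure μ]
    (Z : ℕ → Ω → ℝ) (hZ : ∀ n, Measurable (Z n)) (ν : Measure ℝ) [IsProbabilityMeasure ν]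
    (hd : ∀ f : ℝ →ᵇ ℝ, Tendsto (fun n => ∫ ω, f (Z n ω) ∂μ) atTop (𝓝 (∫ x, f x ∂ν)))
    (M : ℕ) {δ : ℝ} (hδ : 0 < δ) (hq : (ν (Set.Icc (-(M:ℝ)) M)ᶜ).toReal < δ) :
    ∀ᶠ n in atTop, (μ (Z n ⁻¹' {x : ℝ | (M:ℝ) + 1 < |x|})).toReal ≤ 2 * δ := by
  set c := aux_cutoff M with hcdef
  have hBmeas' : MeasurableSet {x : ℝ | (M:ℝ) + 1 < |x|} :=
    measurableSet_lt measurable_const continuous_abs.measurable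
  have hIccmeas : MeasurableSet ((Set.Icc (-(M:ℝ)) M)ᶜ) := measurableSet_Icc.compl
  have hLle : ∫ x, c x ∂ν ≤ (ν (Set.Icc (-(M:ℝ)) M)ᶜ).toReal := by
    have hint2 : Integrable ((Set.Icc (-(M:ℝ)) M)ᶜ.indicator fun _ => (1:ℝ)) ν :=
      (integrable_const (1:ℝ)).indicator hIccmeas
    have hle : ∀ x, c x ≤ (Set.Icc (-(M:ℝ)) M)ᶜ.indicator (fun _ => (1:ℝ)) x := by
      intro x
      by_cases hx : x ∈ Set.Icc (-(M:ℝ)) M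
      · rw [Set.indicator_of_notMem (by simpa using hx)]
        have hxM : |x| ≤ (M:ℝ) := abs_le.2 ⟨hx.1, hx.2⟩
        rw [hcdef, aux_cutoff_eq_zero M x hxM]
      · rw [Set.indicator_of_mem (by simpa using hx)]
        exact aux_cutoff_le_one M x
    calc ∫ x, c x ∂ν ≤ ∫ x, (Set.Icc (-(M:ℝ)) M)ᶜ.indicator (fun _ => (1:ℝ)) x ∂ν :=
          integral_mono (c.integrable ν) hint2 hle
      _ = (ν (Set.Icc (-(M:ℝ)) M)ᶜ).toReal := by
          rw [integral_indicator_const _ hIccmeas]; simp [Measure.real]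
  have hL : ∫ x, c x ∂ν < 2*δ := by linarith
  have hev : ∀ᶠ n in atTop, ∫ ω, c (Z n ω) ∂μ < 2*δ := (hd c).eventually_lt_const hL
  filter_upwards [hev] with n hn
  have hSm : MeasurableSet (Z n ⁻¹' {x : ℝ | (M:ℝ) + 1 < |x|}) := (hZ n) hBmeas'
  have h1 : (μ (Z n ⁻¹' {x : ℝ | (M:ℝ) + 1 < |x|})).toReal
      = ∫ ω, Set.indicator (Z n ⁻¹' {x : ℝ | (M:ℝ) + 1 < |x|}) (fun _ => (1:ℝ)) ω ∂μ := by
    rw [integral_indicator_const _ hSm]; simp [Measure.real]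
  rw [h1]
  have hci : Integrable (fun ω => c (Z n ω)) μ := by
    refine aux_integrable_of_bounded μ ?_ (C := 1) (fun ω => ?_)
    · exact (c.continuous.measurable.comp (hZ n)).aestronglyMeasurable
    · rw [hcdef]
      rw [abs_of_nonneg (aux_cutoff_nonneg M _)]; exact aux_cutoff_le_one M _
  refine le_trans (integral_mono ((integrable_const (1:ℝ)).indicator hSm) hci ?_) hn.le
  intro ω
  by_cases hmem : Z n ω ∈ {x : ℝ | (M:ℝ) + 1 < |x|}
  · have hone : c (Z n ω) = 1 := aux_cutoff_eq_one M _ (le_of_lt hmem)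
    show (Z n ⁻¹' {x : ℝ | (M:ℝ) + 1 < |x|}).indicator (fun _ => (1:ℝ)) ω ≤ c (Z n ω)
    rw [hone]
    exact Set.indicator_apply_le' (fun _ => le_rfl) (fun _ => zero_le_one)
  · have h0 : (0:ℝ) ≤ c (Z n ω) := aux_cutoff_nonneg M _
    show (Z n ⁻¹' {x : ℝ | (M:ℝ) + 1 < |x|}).indicator (fun _ => (1:ℝ)) ω ≤ c (Z n ω)
    rw [Set.indicator_of_notMem (fun hc => hmem (Set.mem_preimage.1 hc))]
    exact h0
end TailEvent


/-- if X_n → νX in distribution, Y_n → νY in distribution, and X_n and Y_n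
are asymptotically independent (the mixing-type coefficient over Borel sets tends to 0),
then (X_n, Y_n) converges in distribution to the product νX ⊗ νY, and consequently
X_n Y_n converges in distribution to the law of the product of independent coordinates. -/
theorem stmt14 {Ω : Type*} [MeasurableSpace Ω] (μ : Measure Ω) [IsProbabilityMeasure μ]
    (X Y : ℕ → Ω → ℝ) (νX νY : Measure ℝ)
    [IsProbabilityMeasure νX] [IsProbabilityMeasure νY]
    (hXmeas : ∀ n, Measurable (X n)) (hYmeas : ∀ n, Measurable (Y n))
    (hXd : ∀ f : ℝ →ᵇ ℝ,
      Tendsto (fun n => ∫ ω, f (X n ω) ∂μ) atTop (𝓝 (∫ x, f x ∂νX)))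
    (hYd : ∀ f : ℝ →ᵇ ℝ,
      Tendsto (fun n => ∫ ω, f (Y n ω) ∂μ) atTop (𝓝 (∫ x, f x ∂νY)))
    (hai : ∀ ε > (0 : ℝ), ∃ N : ℕ, ∀ n ≥ N, ∀ A B : Set ℝ,
      MeasurableSet A → MeasurableSet B →
        |(μ ((X n) ⁻¹' A ∩ (Y n) ⁻¹' B)).toReal
          - (μ ((X n) ⁻¹' A)).toReal * (μ ((Y n) ⁻¹' B)).toReal| ≤ ε) :
    (∀ f : (ℝ × ℝ) →ᵇ ℝ,
      Tendsto (fun n => ∫ ω, f (X n ω, Y n ω) ∂μ) atTop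
        (𝓝 (∫ p, f p ∂(νX.prod νY)))) ∧
    (∀ g : ℝ →ᵇ ℝ,
      Tendsto (fun n => ∫ ω, g (X n ω * Y n ω) ∂μ) atTop
        (𝓝 (∫ p : ℝ × ℝ, g (p.1 * p.2) ∂(νX.prod νY)))) := by
  have key : ∀ f : (ℝ × ℝ) →ᵇ ℝ,
      Tendsto (fun n => ∫ ω, f (X n ω, Y n ω) ∂μ) atTop
        (𝓝 (∫ p, f p ∂(νX.prod νY))) := by
    intro f
    -- weak convergence as probability measures
    set PX : ℕ → ProbabilityMeasure ℝ := fun n =>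
      ⟨μ.map (X n), Measure.isProbabilityMeasure_map (hXmeas n).aemeasurable⟩ with hPXdef
    set PY : ℕ → ProbabilityMeasure ℝ := fun n =>
      ⟨μ.map (Y n), Measure.isProbabilityMeasure_map (hYmeas n).aemeasurable⟩ with hPYdef
    have hPX : Tendsto PX atTop (𝓝 (⟨νX, by infer_instance⟩ : ProbabilityMeasure ℝ)) := by
      refine (ProbabilityMeasure.tendsto_iff_forall_integral_tendsto).2 ?_
      intro g
      have hh : (fun n => ∫ x, g x ∂(PX n : Measure ℝ)) = fun n => ∫ ω, g (X n ω) ∂μ := by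
        funext n
        exact integral_map (hXmeas n).aemeasurable g.continuous.measurable.aestronglyMeasurable
      rw [hh]
      exact hXd g
    have hPY : Tendsto PY atTop (𝓝 (⟨νY, by infer_instance⟩ : ProbabilityMeasure ℝ)) := by
      refine (ProbabilityMeasure.tendsto_iff_forall_integral_tendsto).2 ?_
      intro g
      have hh : (fun n => ∫ x, g x ∂(PY n : Measure ℝ)) = fun n => ∫ ω, g (Y n ω) ∂μ := by
        funext n
        exact integral_map (hYmeas n).aemeasurable g.continuous.measurable.aestronglyMeasurable
      rw [hh]
      exact hYd g
    have hportX : ∀ S : Set ℝ, MeasurableSet S → νX (frontier S) = 0 →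
        Tendsto (fun n => (μ (X n ⁻¹' S)).toReal) atTop (𝓝 ((νX S).toReal)) := by
      intro S hS hfr
      have key2 := ProbabilityMeasure.tendsto_measure_of_null_frontier_of_tendsto' hPX hfr
      have h2 : (fun n => ((PX n : Measure ℝ)) S) = fun n => μ (X n ⁻¹' S) := by
        funext n; exact Measure.map_apply (hXmeas n) hS
      rw [h2] at key2
      exact (ENNReal.tendsto_toReal (measure_ne_top νX S)).comp key2
    have hportY : ∀ S : Set ℝ, MeasurableSet S → νY (frontier S) = 0 →
        Tendsto (fun n => (μ (Y n ⁻¹' S)).toReal) atTop (𝓝 ((νY S).toReal)) := by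
      intro S hS hfr
      have key2 := ProbabilityMeasure.tendsto_measure_of_null_frontier_of_tendsto' hPY hfr
      have h2 : (fun n => ((PY n : Measure ℝ)) S) = fun n => μ (Y n ⁻¹' S) := by
        funext n; exact Measure.map_apply (hYmeas n) hS
      rw [h2] at key2
      exact (ENNReal.tendsto_toReal (measure_ne_top νY S)).comp key2
    rw [Metric.tendsto_atTop]
    intro ε hε
    set C := ‖f‖ with hCdef
    have hC : 0 ≤ C := norm_nonneg f
    have hfb : ∀ p : ℝ × ℝ, |f p| ≤ C := fun p => by
      simpa [Real.norm_eq_abs] using f.norm_coe_le_norm p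
    have habs : ∀ u v : ℝ, |u - v| ≤ |u| + |v| := fun u v => by
      calc |u - v| = |u + -v| := by rw [sub_eq_add_neg]
        _ ≤ |u| + |-v| := abs_add_le u (-v)
        _ = |u| + |v| := by rw [abs_neg]
    set δ := ε / (64 * (C + 1)) with hδdef
    have hδ : 0 < δ := div_pos hε (by positivity)
    have hCδ : C * δ ≤ ε / 64 := by
      have h1 : C * δ ≤ (C + 1) * δ := by nlinarith [hδ.le]
      have h2 : (C + 1) * δ = ε / 64 := by
        rw [hδdef]; field_simp
      linarith
    obtain ⟨MX, hMX⟩ := aux_tail νX hδ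
    obtain ⟨MY, hMY⟩ := aux_tail νY hδ
    set M : ℕ := max MX MY with hMdef
    have hsubM : ∀ (ν : Measure ℝ) (M₀ : ℕ), M₀ ≤ M →
        (ν (Set.Icc (-(M:ℝ)) M)ᶜ) ≤ (ν (Set.Icc (-(M₀:ℝ)) M₀)ᶜ) := by
      intro ν M₀ hM₀
      apply measure_mono
      apply Set.compl_subset_compl.2
      apply Set.Icc_subset_Icc
      · simp only [neg_le_neg_iff, Nat.cast_le]; exact hM₀
      · exact_mod_cast hM₀
    have hqX : (νX (Set.Icc (-(M:ℝ)) M)ᶜ).toReal < δ :=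
      lt_of_le_of_lt (ENNReal.toReal_mono (measure_ne_top _ _)
        (hsubM νX MX (le_max_left _ _))) hMX
    have hqY : (νY (Set.Icc (-(M:ℝ)) M)ᶜ).toReal < δ :=
      lt_of_le_of_lt (ENNReal.toReal_mono (measure_ne_top _ _)
        (hsubM νY MY (le_max_right _ _))) hMY
    set M' : ℝ := (M : ℝ) + 1 with hM'def
    have hM'pos : 0 < M' := by positivity
    set B : Set ℝ := {x : ℝ | M' < |x|} with hBdef
    have hBmeas : MeasurableSet B := measurableSet_lt measurable_const continuous_abs.measurable
    have hBsub : B ⊆ (Set.Icc (-(M:ℝ)) M)ᶜ := by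
      intro x hx
      have hx' : M' < |x| := hx
      simp only [Set.mem_compl_iff, Set.mem_Icc, not_and_or, not_le]
      by_contra hcon
      push_neg at hcon
      have hxa : |x| ≤ (M:ℝ) := abs_le.2 ⟨hcon.1, hcon.2⟩
      rw [hM'def] at hx'
      linarith
    have hνXB : (νX B).toReal < δ :=
      lt_of_le_of_lt (ENNReal.toReal_mono (measure_ne_top _ _) (measure_mono hBsub)) hqX
    have hνYB : (νY B).toReal < δ :=
      lt_of_le_of_lt (ENNReal.toReal_mono (measure_ne_top _ _) (measure_mono hBsub)) hqY
    -- eventual tail bounds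
    have htailX : ∀ᶠ n in atTop, (μ (X n ⁻¹' B)).toReal ≤ 2 * δ := by
      have h := aux_tail_event μ X hXmeas νX hXd M hδ hqX
      rw [← hM'def] at h
      exact h
    have htailY : ∀ᶠ n in atTop, (μ (Y n ⁻¹' B)).toReal ≤ 2 * δ := by
      have h := aux_tail_event μ Y hYmeas νY hYd M hδ hqY
      rw [← hM'def] at h
      exact h
    -- uniform continuity on a compact square
    set K : Set (ℝ × ℝ) := Set.Icc (-M'-1) (M'+1) ×ˢ Set.Icc (-M'-1) (M'+1) with hKdef
    have hKcomp : IsCompact K := isCompact_Icc.prod isCompact_Icc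
    have hUC := hKcomp.uniformContinuousOn_of_continuous f.continuous.continuousOn
    rw [Metric.uniformContinuousOn_iff] at hUC
    obtain ⟨δ', hδ'pos, hδ'⟩ := hUC (ε/8) (by linarith)
    -- grid construction
    set h : ℝ := min (δ'/2) (1/2) with hhdef
    have hh : 0 < h := lt_min (by linarith) (by norm_num)
    have hh2 : 2*h ≤ δ' := by
      have := min_le_left (δ'/2) (1/2); rw [hhdef]; linarith
    have hh1 : 2*h ≤ 1 := by
      have := min_le_right (δ'/2) (1/2); rw [hhdef]; linarith
    set D : Set ℝ := {x : ℝ | νX {x} ≠ 0} ∪ {x : ℝ | νY {x} ≠ 0} with hDdef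
    have hD : D.Countable := (aux_countable_atoms νX).union (aux_countable_atoms νY)
    set a : ℕ → ℝ := fun i => -M' - h + i*h with hadef
    have hchoice : ∀ i : ℕ, ∃ x, x ∈ Set.Ioo (a i) (a i + h) ∧ x ∉ D := fun i =>
      aux_exists_nonatom hD (lt_add_of_pos_right _ hh)
    choose t ht htD using hchoice
    have ha_succ : ∀ i : ℕ, a (i+1) = a i + h := by
      intro i; simp only [hadef]; push_cast; ring
    have hmono : StrictMono t := by
      apply strictMono_nat_of_lt_succ
      intro i
      have h1 := (ht i).2
      have h2 := (ht (i+1)).1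
      rw [ha_succ i] at h2
      linarith
    have hgap : ∀ i, t (i+1) - t i < 2*h := by
      intro i
      have h1 := (ht i).1
      have h2 := (ht (i+1)).2
      rw [ha_succ i] at h2
      linarith
    set k : ℕ := ⌈(2*M' + h)/h⌉₊ with hkdef
    have hkh1 : 2*M' + h ≤ (k:ℝ)*h := by
      have h1 := Nat.le_ceil ((2*M'+h)/h)
      have h2 : ((2*M'+h)/h)*h = 2*M'+h := by field_simp
      calc 2*M'+h = ((2*M'+h)/h)*h := h2.symm
        _ ≤ (k:ℝ)*h := mul_le_mul_of_nonneg_right h1 hh.le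
    have hkh2 : (k:ℝ)*h ≤ 2*M' + 1 := by
      have h0 : (0:ℝ) ≤ (2*M'+h)/h := by positivity
      have h3 : (k:ℝ) < (2*M'+h)/h + 1 := Nat.ceil_lt_add_one h0
      have h4 : (k:ℝ)*h < ((2*M'+h)/h + 1)*h := mul_lt_mul_of_pos_right h3 hh
      have h5 : ((2*M'+h)/h + 1)*h = 2*M' + h + h := by
        rw [add_mul, div_mul_cancel₀ _ hh.ne', one_mul]
      linarith
    have ha0 : a 0 = -M' - h := by simp [hadef]
    have ht0 : t 0 < -M' ∧ -M'-1 ≤ t 0 := by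
      have h1 := (ht 0).1; have h2 := (ht 0).2
      rw [ha0] at h1 h2
      constructor <;> linarith
    have htk : M' < t k ∧ t k ≤ M' + 1 := by
      have h1 := (ht k).1; have h2 := (ht k).2
      have hak : a k = -M' - h + (k:ℝ)*h := rfl
      rw [hak] at h1 h2
      constructor <;> linarith
    have htmem : ∀ i, i ≤ k → t i ∈ Set.Icc (-M'-1) (M'+1) := by
      intro i hik
      constructor
      · exact le_trans ht0.2 (hmono.monotone (Nat.zero_le i))
      · exact le_trans (hmono.monotone hik) htk.2
    -- cells
    set A : ℕ → Set ℝ := fun i => Set.Ico (t i) (t (i+1)) with hAdef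
    have hAm : ∀ i, MeasurableSet (A i) := fun i => measurableSet_Ico
    have hAfr : ∀ i, νX (frontier (A i)) = 0 ∧ νY (frontier (A i)) = 0 := by
      intro i
      have hlt : t i < t (i+1) := hmono (Nat.lt_succ_self i)
      have hfr : frontier (A i) = {t i, t (i+1)} := frontier_Ico hlt
      have hti := htD i
      have hti1 := htD (i+1)
      simp only [hDdef, Set.mem_union, Set.mem_setOf_eq, not_or, not_not] at hti hti1
      rw [hfr, Set.insert_eq]
      exact ⟨measure_union_null hti.1 hti1.1, measure_union_null hti.2 hti1.2⟩
    have hdisj : ∀ i j x, x ∈ A i → x ∈ A j → i = j := by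
      intro i j x hi hj
      by_contra hne
      rcases Nat.lt_or_ge i j with hij | hij
      · have hle : t (i+1) ≤ t j := hmono.monotone (Nat.succ_le_of_lt hij)
        exact absurd (hi.2.trans_le (hle.trans hj.1)) (lt_irrefl x)
      · have hij' : j < i := lt_of_le_of_ne hij (Ne.symm hne)
        have hle : t (j+1) ≤ t i := hmono.monotone (Nat.succ_le_of_lt hij')
        exact absurd (hj.2.trans_le (hle.trans hi.1)) (lt_irrefl x)
    -- approximating simple function
    set c : ℕ → ℕ → ℝ := fun i j => f (t i, t j) with hcdef
    have hcb : ∀ i j, |c i j| ≤ C := fun i j => hfb _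
    set ind : Set ℝ → ℝ → ℝ := fun S x => S.indicator (fun _ => (1:ℝ)) x with hinddef
    have hind_mem : ∀ S x, x ∈ S → ind S x = 1 := by
      intro S x hx; simp only [hinddef]; rw [Set.indicator_of_mem hx]
    have hind_not : ∀ S x, x ∉ S → ind S x = 0 := by
      intro S x hx; simp only [hinddef]; rw [Set.indicator_of_notMem hx]
    have hind_nonneg : ∀ S x, 0 ≤ ind S x := by
      intro S x
      by_cases hx : x ∈ S
      · rw [hind_mem S x hx]; norm_num
      · rw [hind_not S x hx]
    set sval : ℝ → ℝ → ℝ := fun x y =>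
      ∑ i ∈ Finset.range k, ∑ j ∈ Finset.range k, c i j * (ind (A i) x * ind (A j) y)
      with hsvaldef
    have hcollapse : ∀ x y i j, i < k → j < k → x ∈ A i → y ∈ A j → sval x y = c i j := by
      intro x y i j hik hjk hxi hyj
      simp only [hsvaldef]
      rw [Finset.sum_eq_single_of_mem i (Finset.mem_range.2 hik)]
      · rw [Finset.sum_eq_single_of_mem j (Finset.mem_range.2 hjk)]
        · rw [hind_mem _ _ hxi, hind_mem _ _ hyj]; ring
        · intro j' _ hj'
          rw [hind_not _ _ (fun hy => hj' (hdisj j' j y hy hyj))]; ring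
      · intro i' _ hi'
        have h0 : ind (A i') x = 0 := hind_not _ _ (fun hx => hi' (hdisj i' i x hx hxi))
        apply Finset.sum_eq_zero; intro j' _; rw [h0]; ring
    have hsbound : ∀ x y, |sval x y| ≤ C := by
      intro x y
      by_cases hx : ∃ i, i < k ∧ x ∈ A i
      · obtain ⟨i, hik, hxi⟩ := hx
        by_cases hy : ∃ j, j < k ∧ y ∈ A j
        · obtain ⟨j, hjk, hyj⟩ := hy
          rw [hcollapse x y i j hik hjk hxi hyj]; exact hcb i j
        · push_neg at hy
          have h0 : sval x y = 0 := by
            simp only [hsvaldef]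
            apply Finset.sum_eq_zero; intro i' _
            apply Finset.sum_eq_zero; intro j' hj'
            rw [hind_not _ _ (hy j' (Finset.mem_range.1 hj'))]; ring
          rw [h0]; simpa using hC
      · push_neg at hx
        have h0 : sval x y = 0 := by
          simp only [hsvaldef]
          apply Finset.sum_eq_zero; intro i' hi'
          apply Finset.sum_eq_zero; intro j' _
          rw [hind_not _ _ (hx i' (Finset.mem_range.1 hi'))]; ring
        rw [h0]; simpa using hC
    have hgood : ∀ x y, |x| ≤ M' → |y| ≤ M' → |f (x, y) - sval x y| ≤ ε/8 := by
      intro x y hx hy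
      have hx1 : -M' ≤ x := (abs_le.1 hx).1
      have hx2 : x ≤ M' := (abs_le.1 hx).2
      have hy1 : -M' ≤ y := (abs_le.1 hy).1
      have hy2 : y ≤ M' := (abs_le.1 hy).2
      obtain ⟨i, hik, hxi⟩ := aux_cover hmono ((ht0.1.trans_le hx1).le) (hx2.trans_lt htk.1)
      obtain ⟨j, hjk, hyj⟩ := aux_cover hmono ((ht0.1.trans_le hy1).le) (hy2.trans_lt htk.1)
      rw [hcollapse x y i j hik hjk hxi hyj]
      have hmemxy : (x, y) ∈ K := by
        simp only [hKdef, Set.mem_prod, Set.mem_Icc]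
        exact ⟨⟨by linarith, by linarith⟩, ⟨by linarith, by linarith⟩⟩
      have hmemt : ((t i, t j) : ℝ × ℝ) ∈ K := by
        simp only [hKdef, Set.mem_prod]
        exact ⟨htmem i (le_of_lt hik), htmem j (le_of_lt hjk)⟩
      have hdist : dist ((x, y) : ℝ × ℝ) ((t i, t j) : ℝ × ℝ) < δ' := by
        rw [Prod.dist_eq]
        apply max_lt
        · rw [Real.dist_eq, abs_of_nonneg (by linarith [hxi.1] : (0:ℝ) ≤ x - t i)]
          have hg := hgap i
          have := hxi.2
          linarith
        · rw [Real.dist_eq, abs_of_nonneg (by linarith [hyj.1] : (0:ℝ) ≤ y - t j)]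
          have hg := hgap j
          have := hyj.2
          linarith
      have hres := hδ' (x, y) hmemxy ((t i, t j)) hmemt hdist
      rw [Real.dist_eq] at hres
      simp only [hcdef]
      exact hres.le
    have hptw : ∀ x y, |f (x, y) - sval x y| ≤ ε/8 + 2*C*(ind B x) + 2*C*(ind B y) := by
      intro x y
      by_cases hx : M' < |x|
      · have h1 : ind B x = 1 := hind_mem _ _ hx
        have hb : |f (x,y) - sval x y| ≤ 2*C := by
          calc |f (x,y) - sval x y| ≤ |f (x,y)| + |sval x y| := habs _ _
            _ ≤ C + C := add_le_add (hfb _) (hsbound x y)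
            _ = 2*C := by ring
        rw [h1]
        have h2 : 0 ≤ 2*C*(ind B y) := mul_nonneg (by linarith) (hind_nonneg B y)
        linarith
      · by_cases hy : M' < |y|
        · have h1 : ind B y = 1 := hind_mem _ _ hy
          have hb : |f (x,y) - sval x y| ≤ 2*C := by
            calc |f (x,y) - sval x y| ≤ |f (x,y)| + |sval x y| := habs _ _
              _ ≤ C + C := add_le_add (hfb _) (hsbound x y)
              _ = 2*C := by ring
          rw [h1]
          have h2 : 0 ≤ 2*C*(ind B x) := mul_nonneg (by linarith) (hind_nonneg B x)
          linarith
        · push_neg at hx hy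
          have hnx : x ∉ B := by
            simp only [hBdef, Set.mem_setOf_eq]; exact not_lt.2 hx
          have hny : y ∉ B := by
            simp only [hBdef, Set.mem_setOf_eq]; exact not_lt.2 hy
          rw [hind_not _ _ hnx, hind_not _ _ hny]
          have := hgood x y hx hy
          linarith
    -- integral identities
    have hheq : ∀ n i j, (fun ω => ind (A i) (X n ω) * ind (A j) (Y n ω))
        = Set.indicator (X n ⁻¹' A i ∩ Y n ⁻¹' A j) (fun _ => (1:ℝ)) := by
      intro n i j
      funext ω
      by_cases h1 : X n ω ∈ A i <;> by_cases h2 : Y n ω ∈ A j <;>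
        simp [hinddef, Set.indicator_apply, h1, h2, Set.mem_preimage]
    have hSmeas : ∀ n i j, MeasurableSet (X n ⁻¹' A i ∩ Y n ⁻¹' A j) := fun n i j =>
      ((hXmeas n) (hAm i)).inter ((hYmeas n) (hAm j))
    have hfunμ : ∀ n, (fun ω => sval (X n ω) (Y n ω))
        = fun ω => ∑ i ∈ Finset.range k, ∑ j ∈ Finset.range k,
            c i j * Set.indicator (X n ⁻¹' A i ∩ Y n ⁻¹' A j) (fun _ => (1:ℝ)) ω := by
      intro n
      funext ω
      simp only [hsvaldef]
      refine Finset.sum_congr rfl fun i _ => Finset.sum_congr rfl fun j _ => ?_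
      rw [congrFun (hheq n i j) ω]
    have hIμ : ∀ n, ∫ ω, sval (X n ω) (Y n ω) ∂μ
        = ∑ i ∈ Finset.range k, ∑ j ∈ Finset.range k,
            c i j * (μ (X n ⁻¹' A i ∩ Y n ⁻¹' A j)).toReal := by
      intro n
      rw [hfunμ n]
      rw [integral_finset_sum _ (fun i _ => integrable_finset_sum _
        (fun j _ => (((integrable_const (1:ℝ)).indicator (hSmeas n i j)).const_mul _)))]
      refine Finset.sum_congr rfl fun i _ => ?_
      rw [integral_finset_sum _
        (fun j _ => (((integrable_const (1:ℝ)).indicator (hSmeas n i j)).const_mul _))]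
      refine Finset.sum_congr rfl fun j _ => ?_
      rw [integral_const_mul, integral_indicator_const _ (hSmeas n i j)]
      simp [Measure.real]
    have hfunν : (fun p : ℝ × ℝ => sval p.1 p.2)
        = fun p => ∑ i ∈ Finset.range k, ∑ j ∈ Finset.range k,
            c i j * Set.indicator (A i ×ˢ A j) (fun _ => (1:ℝ)) p := by
      funext p
      simp only [hsvaldef]
      refine Finset.sum_congr rfl fun i _ => Finset.sum_congr rfl fun j _ => ?_
      by_cases h1 : p.1 ∈ A i <;> by_cases h2 : p.2 ∈ A j <;>
        simp [hinddef, Set.indicator_apply, h1, h2, Set.mem_prod]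
    have hprodmeas : ∀ i j, MeasurableSet (A i ×ˢ A j) := fun i j => (hAm i).prod (hAm j)
    have hIν : ∫ p, sval p.1 p.2 ∂(νX.prod νY)
        = ∑ i ∈ Finset.range k, ∑ j ∈ Finset.range k,
            c i j * ((νX (A i)).toReal * (νY (A j)).toReal) := by
      rw [hfunν]
      rw [integral_finset_sum _ (fun i _ => integrable_finset_sum _
        (fun j _ => (((integrable_const (1:ℝ)).indicator (hprodmeas i j)).const_mul _)))]
      refine Finset.sum_congr rfl fun i _ => ?_
      rw [integral_finset_sum _
        (fun j _ => (((integrable_const (1:ℝ)).indicator (hprodmeas i j)).const_mul _))]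
      refine Finset.sum_congr rfl fun j _ => ?_
      rw [integral_const_mul, integral_indicator_const _ (hprodmeas i j), measureReal_def,
        Measure.prod_prod, ENNReal.toReal_mul]
      simp
    -- integrability
    have hintf : ∀ n, Integrable (fun ω => f (X n ω, Y n ω)) μ := by
      intro n
      refine aux_integrable_of_bounded μ ?_ (fun ω => hfb _)
      exact (f.continuous.measurable.comp ((hXmeas n).prodMk (hYmeas n))).aestronglyMeasurable
    have hints : ∀ n, Integrable (fun ω => sval (X n ω) (Y n ω)) μ := by
      intro n
      rw [hfunμ n]
      exact integrable_finset_sum _ (fun i _ => integrable_finset_sum _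
        (fun j _ => (((integrable_const (1:ℝ)).indicator (hSmeas n i j)).const_mul _)))
    have hintfν : Integrable (fun p : ℝ × ℝ => f p) (νX.prod νY) := f.integrable _
    have hintsν : Integrable (fun p : ℝ × ℝ => sval p.1 p.2) (νX.prod νY) := by
      rw [hfunν]
      exact integrable_finset_sum _ (fun i _ => integrable_finset_sum _
        (fun j _ => (((integrable_const (1:ℝ)).indicator (hprodmeas i j)).const_mul _)))
    -- bound: μ side
    have hboundμ : ∀ n, |(∫ ω, f (X n ω, Y n ω) ∂μ) - ∫ ω, sval (X n ω) (Y n ω) ∂μ|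
        ≤ ε/8 + 2*C*(μ (X n ⁻¹' B)).toReal + 2*C*(μ (Y n ⁻¹' B)).toReal := by
      intro n
      have hSm : MeasurableSet (X n ⁻¹' B) := (hXmeas n) hBmeas
      have hTm : MeasurableSet (Y n ⁻¹' B) := (hYmeas n) hBmeas
      have hb := aux_int_bound μ hSm hTm (ε/8) (2*C)
      rw [← hb]
      refine aux_abs_integral_diff_le μ (hintf n) (hints n) ?_ ?_
      · exact ((integrable_const _).add
          (((integrable_const (1:ℝ)).indicator hSm).const_mul _)).add
          (((integrable_const (1:ℝ)).indicator hTm).const_mul _)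
      · intro ω
        have hq := hptw (X n ω) (Y n ω)
        have hcomp1 : (X n ⁻¹' B).indicator (fun _ => (1:ℝ)) ω = ind B (X n ω) := by
          by_cases hmem : X n ω ∈ B
          · rw [Set.indicator_of_mem (Set.mem_preimage.2 hmem), hind_mem _ _ hmem]
          · rw [Set.indicator_of_notMem (fun hc => hmem (Set.mem_preimage.1 hc)),
              hind_not _ _ hmem]
        have hcomp2 : (Y n ⁻¹' B).indicator (fun _ => (1:ℝ)) ω = ind B (Y n ω) := by
          by_cases hmem : Y n ω ∈ B
          · rw [Set.indicator_of_mem (Set.mem_preimage.2 hmem), hind_mem _ _ hmem]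
          · rw [Set.indicator_of_notMem (fun hc => hmem (Set.mem_preimage.1 hc)),
              hind_not _ _ hmem]
        rw [hcomp1, hcomp2]
        exact hq
    -- bound: ν side
    have hboundν : |(∫ p, f p ∂(νX.prod νY)) - ∫ p, sval p.1 p.2 ∂(νX.prod νY)|
        ≤ ε/8 + 2*C*(νX B).toReal + 2*C*(νY B).toReal := by
      have hSm : MeasurableSet (Prod.fst ⁻¹' B : Set (ℝ×ℝ)) := hBmeas.preimage measurable_fst
      have hTm : MeasurableSet (Prod.snd ⁻¹' B : Set (ℝ×ℝ)) := hBmeas.preimage measurable_snd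
      have hb := aux_int_bound (νX.prod νY) hSm hTm (ε/8) (2*C)
      have hmS : ((νX.prod νY) (Prod.fst ⁻¹' B)) = νX B := by
        have hpu : (Prod.fst ⁻¹' B : Set (ℝ×ℝ)) = B ×ˢ Set.univ := (Set.prod_univ).symm
        rw [hpu, Measure.prod_prod, measure_univ, mul_one]
      have hmT : ((νX.prod νY) (Prod.snd ⁻¹' B)) = νY B := by
        have hpu : (Prod.snd ⁻¹' B : Set (ℝ×ℝ)) = Set.univ ×ˢ B := (Set.univ_prod).symm
        rw [hpu, Measure.prod_prod, measure_univ, one_mul]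
      rw [hmS, hmT] at hb
      rw [← hb]
      refine aux_abs_integral_diff_le _ hintfν hintsν ?_ ?_
      · exact ((integrable_const _).add
          (((integrable_const (1:ℝ)).indicator hSm).const_mul _)).add
          (((integrable_const (1:ℝ)).indicator hTm).const_mul _)
      · intro p
        have hq := hptw p.1 p.2
        have hcomp1 : (Prod.fst ⁻¹' B : Set (ℝ×ℝ)).indicator (fun _ => (1:ℝ)) p
            = ind B p.1 := by
          by_cases hmem : p.1 ∈ B
          · rw [Set.indicator_of_mem (Set.mem_preimage.2 hmem), hind_mem _ _ hmem]
          · rw [Set.indicator_of_notMem (fun hc => hmem (Set.mem_preimage.1 hc)),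
              hind_not _ _ hmem]
        have hcomp2 : (Prod.snd ⁻¹' B : Set (ℝ×ℝ)).indicator (fun _ => (1:ℝ)) p
            = ind B p.2 := by
          by_cases hmem : p.2 ∈ B
          · rw [Set.indicator_of_mem (Set.mem_preimage.2 hmem), hind_mem _ _ hmem]
          · rw [Set.indicator_of_notMem (fun hc => hmem (Set.mem_preimage.1 hc)),
              hind_not _ _ hmem]
        rw [hcomp1, hcomp2]
        simpa using hq
    -- asymptotic independence step
    set ε'' := (ε/8) / ((k:ℝ)*(k:ℝ)*C + 1) with hε''def
    have hε''pos : 0 < ε'' := div_pos (by linarith) (by positivity)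
    obtain ⟨N2, hN2⟩ := hai ε'' hε''pos
    have hstep2 : ∀ n, n ≥ N2 →
        |(∑ i ∈ Finset.range k, ∑ j ∈ Finset.range k,
            c i j * (μ (X n ⁻¹' A i ∩ Y n ⁻¹' A j)).toReal)
          - ∑ i ∈ Finset.range k, ∑ j ∈ Finset.range k,
            c i j * ((μ (X n ⁻¹' A i)).toReal * (μ (Y n ⁻¹' A j)).toReal)| ≤ ε/8 := by
      intro n hn
      have hterm : ∀ i j, |c i j * (μ (X n ⁻¹' A i ∩ Y n ⁻¹' A j)).toReal
          - c i j * ((μ (X n ⁻¹' A i)).toReal * (μ (Y n ⁻¹' A j)).toReal)| ≤ C * ε'' := by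
        intro i j
        rw [← mul_sub, abs_mul]
        exact mul_le_mul (hcb i j) (hN2 n hn (A i) (A j) (hAm i) (hAm j)) (abs_nonneg _) hC
      have h1 : (∑ i ∈ Finset.range k, ∑ j ∈ Finset.range k,
            c i j * (μ (X n ⁻¹' A i ∩ Y n ⁻¹' A j)).toReal)
          - ∑ i ∈ Finset.range k, ∑ j ∈ Finset.range k,
            c i j * ((μ (X n ⁻¹' A i)).toReal * (μ (Y n ⁻¹' A j)).toReal)
          = ∑ i ∈ Finset.range k, ∑ j ∈ Finset.range k,
            (c i j * (μ (X n ⁻¹' A i ∩ Y n ⁻¹' A j)).toReal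
              - c i j * ((μ (X n ⁻¹' A i)).toReal * (μ (Y n ⁻¹' A j)).toReal)) := by
        rw [← Finset.sum_sub_distrib]
        exact Finset.sum_congr rfl fun i _ => by rw [← Finset.sum_sub_distrib]
      rw [h1]
      refine le_trans (Finset.abs_sum_le_sum_abs _ _) ?_
      refine le_trans (Finset.sum_le_sum (fun i _ => Finset.abs_sum_le_sum_abs _ _)) ?_
      refine le_trans (Finset.sum_le_sum
        (fun i _ => Finset.sum_le_sum (fun j _ => hterm i j))) ?_
      rw [Finset.sum_const, Finset.sum_const, Finset.card_range, nsmul_eq_mul, nsmul_eq_mul]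
      have hle : (k:ℝ)*((k:ℝ)*(C*ε'')) ≤ ((k:ℝ)*(k:ℝ)*C + 1)*ε'' := by nlinarith [hε''pos.le]
      have heq : ((k:ℝ)*(k:ℝ)*C + 1)*ε'' = ε/8 := by
        rw [hε''def]; field_simp
      calc (k:ℝ)*((k:ℝ)*(C*ε'')) ≤ ((k:ℝ)*(k:ℝ)*C + 1)*ε'' := hle
        _ = ε/8 := heq
    -- portmanteau step
    have hPstep : Tendsto (fun n => ∑ i ∈ Finset.range k, ∑ j ∈ Finset.range k,
        c i j * ((μ (X n ⁻¹' A i)).toReal * (μ (Y n ⁻¹' A j)).toReal)) atTop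
        (𝓝 (∑ i ∈ Finset.range k, ∑ j ∈ Finset.range k,
          c i j * ((νX (A i)).toReal * (νY (A j)).toReal))) := by
      refine tendsto_finset_sum _ fun i _ => tendsto_finset_sum _ fun j _ => ?_
      exact ((hportX (A i) (hAm i) (hAfr i).1).mul (hportY (A j) (hAm j) (hAfr j).2)).const_mul _
    have hE3 : ∀ᶠ n in atTop, |(∑ i ∈ Finset.range k, ∑ j ∈ Finset.range k,
        c i j * ((μ (X n ⁻¹' A i)).toReal * (μ (Y n ⁻¹' A j)).toReal))
        - ∑ i ∈ Finset.range k, ∑ j ∈ Finset.range k,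
          c i j * ((νX (A i)).toReal * (νY (A j)).toReal)| < ε/8 := by
      have hball := hPstep (Metric.ball_mem_nhds _ (show (0:ℝ) < ε/8 by linarith))
      filter_upwards [hball] with n hn
      rw [← Real.dist_eq]
      exact Metric.mem_ball.1 hn
    -- assemble
    have hfinal : ∀ᶠ n in atTop,
        dist (∫ ω, f (X n ω, Y n ω) ∂μ) (∫ p, f p ∂(νX.prod νY)) < ε := by
      filter_upwards [htailX, htailY, hE3, eventually_ge_atTop N2] with n h1 h2 h3 h4
      rw [Real.dist_eq]
      have e1 := hboundμ n
      rw [hIμ n] at e1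
      have e2 := hstep2 n h4
      have e4 := hboundν
      rw [hIν] at e4
      have hbX : 2*C*(μ (X n ⁻¹' B)).toReal ≤ ε/16 := by
        have := mul_le_mul_of_nonneg_left h1 (show (0:ℝ) ≤ 2*C by linarith)
        calc 2*C*(μ (X n ⁻¹' B)).toReal ≤ 2*C*(2*δ) := this
          _ = 4*(C*δ) := by ring
          _ ≤ 4*(ε/64) := by linarith
          _ = ε/16 := by ring
      have hbY : 2*C*(μ (Y n ⁻¹' B)).toReal ≤ ε/16 := by
        have := mul_le_mul_of_nonneg_left h2 (show (0:ℝ) ≤ 2*C by linarith)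
        calc 2*C*(μ (Y n ⁻¹' B)).toReal ≤ 2*C*(2*δ) := this
          _ = 4*(C*δ) := by ring
          _ ≤ 4*(ε/64) := by linarith
          _ = ε/16 := by ring
      have hbX' : 2*C*(νX B).toReal ≤ ε/16 := by
        have h5 : (νX B).toReal ≤ 2*δ := by linarith
        have := mul_le_mul_of_nonneg_left h5 (show (0:ℝ) ≤ 2*C by linarith)
        calc 2*C*(νX B).toReal ≤ 2*C*(2*δ) := this
          _ = 4*(C*δ) := by ring
          _ ≤ 4*(ε/64) := by linarith
          _ = ε/16 := by ring
      have hbY' : 2*C*(νY B).toReal ≤ ε/16 := by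
        have h5 : (νY B).toReal ≤ 2*δ := by linarith
        have := mul_le_mul_of_nonneg_left h5 (show (0:ℝ) ≤ 2*C by linarith)
        calc 2*C*(νY B).toReal ≤ 2*C*(2*δ) := this
          _ = 4*(C*δ) := by ring
          _ ≤ 4*(ε/64) := by linarith
          _ = ε/16 := by ring
      set a1 := ∫ ω, f (X n ω, Y n ω) ∂μ
      set a2 := ∑ i ∈ Finset.range k, ∑ j ∈ Finset.range k,
        c i j * (μ (X n ⁻¹' A i ∩ Y n ⁻¹' A j)).toReal
      set a3 := ∑ i ∈ Finset.range k, ∑ j ∈ Finset.range k,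
        c i j * ((μ (X n ⁻¹' A i)).toReal * (μ (Y n ⁻¹' A j)).toReal)
      set a4 := ∑ i ∈ Finset.range k, ∑ j ∈ Finset.range k,
        c i j * ((νX (A i)).toReal * (νY (A j)).toReal)
      set a5 := ∫ p, f p ∂(νX.prod νY)
      have t1 : |a1 - a5| ≤ |a1 - a2| + |a2 - a5| := abs_sub_le _ _ _
      have t2 : |a2 - a5| ≤ |a2 - a3| + |a3 - a5| := abs_sub_le _ _ _
      have t3 : |a3 - a5| ≤ |a3 - a4| + |a4 - a5| := abs_sub_le _ _ _
      have e4' : |a4 - a5| ≤ ε/8 + ε/16 + ε/16 := by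
        rw [abs_sub_comm]
        linarith
      linarith
    exact eventually_atTop.1 hfinal
  refine ⟨key, ?_⟩
  intro g
  have h2 := key (g.compContinuous ⟨fun p : ℝ × ℝ => p.1 * p.2,
    continuous_fst.mul continuous_snd⟩)
  simpa [BoundedContinuousFunction.coe_compContinuous, ContinuousMap.coe_mk,
    Function.comp] using h2
end

section
/- In the explosive PAR(1) model with |φ| > 1, conditionally on the event {X_0 + ζ ≠ 0}, the least squares estimator â_r = (∑_{j=0}^{n-1} X_{jP+r-1} X_{jP+r}) / (∑_{j=0}^{n-1} X_{jP+r-1}²) converges almost surely to a_r as n → ∞, for each r = 1,…,P. -/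
open MeasureTheory Filter Topology

private lemma lemG {q : ℝ} (hq : 1 < q) {s : ℕ → ℝ} {T : ℝ}
    (hs : Tendsto s atTop (𝓝 T)) :
    Tendsto (fun n => (∑ j ∈ Finset.range n, q ^ j * s j) / q ^ n)
      atTop (𝓝 (T / (q - 1))) := by
  have hq0 : (0:ℝ) < q := lt_trans one_pos hq
  have hqi : q⁻¹ < 1 := inv_lt_one_of_one_lt₀ hq
  have hqi0 : (0:ℝ) ≤ q⁻¹ := by positivity
  obtain ⟨B, hB⟩ : ∃ B, ∀ j, |s j| ≤ B := by
    obtain ⟨B, hB⟩ := (hs.abs.bddAbove_range)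
    exact ⟨B, fun j => hB ⟨j, rfl⟩⟩
  set f : ℕ → ℕ → ℝ := fun n i => if i < n then q⁻¹ ^ (i+1) * s (n - 1 - i) else 0 with hf
  have key : ∀ n, (∑ j ∈ Finset.range n, q ^ j * s j) / q ^ n = ∑' i, f n i := by
    intro n
    rw [tsum_eq_sum (s := Finset.range n)
      (fun i hi => by simp [hf, Finset.mem_range.not.mp hi])]
    have : ∀ i ∈ Finset.range n, f n i = (fun j => q ^ j * s j / q ^ n) (n - 1 - i) := by
      intro i hi
      have hi' : i < n := Finset.mem_range.mp hi
      have hsum : (n - 1 - i) + (i + 1) = n := by omega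
      have : q ^ n = q ^ (n - 1 - i) * q ^ (i + 1) := by rw [← pow_add, hsum]
      simp only [hf, if_pos hi', this]
      field_simp
      rw [one_div, inv_pow, mul_comm, ← mul_assoc, mul_inv_cancel₀ (pow_ne_zero _ hq0.ne'), one_mul]
    rw [Finset.sum_congr rfl this, Finset.sum_range_reflect (fun j => q ^ j * s j / q ^ n) n,
      Finset.sum_div]
  have hbound : Summable (fun i : ℕ => q⁻¹ ^ (i+1) * B) :=
    ((summable_geometric_of_lt_one hqi0 hqi).mul_right B).comp_injective
      (add_left_injective 1)
  have hlim : ∀ i : ℕ, Tendsto (fun n => f n i) atTop (𝓝 (q⁻¹ ^ (i+1) * T)) := by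
    intro i
    have h1 : Tendsto (fun n : ℕ => s (n - 1 - i)) atTop (𝓝 T) := by
      have he : (fun n : ℕ => s (n - 1 - i)) = s ∘ (fun n => n - (1 + i)) := by
        funext n; simp [Nat.sub_sub]
      rw [he]
      exact hs.comp (tendsto_sub_atTop_nat (1 + i))
    have h2 := h1.const_mul (q⁻¹ ^ (i+1))
    refine h2.congr' ?_
    filter_upwards [eventually_gt_atTop i] with n hn
    simp [hf, hn]
  have hb : ∀ᶠ n in atTop, ∀ i, ‖f n i‖ ≤ q⁻¹ ^ (i+1) * B := by
    refine Eventually.of_forall fun n i => ?_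
    by_cases h : i < n
    · simp only [hf, if_pos h, norm_mul, Real.norm_eq_abs, abs_pow, abs_inv, abs_of_pos hq0]
      exact mul_le_mul_of_nonneg_left (hB _) (by positivity)
    · simp only [hf, if_neg h, norm_zero]
      have : (0:ℝ) ≤ B := le_trans (abs_nonneg _) (hB 0)
      positivity
  have main := tendsto_tsum_of_dominated_convergence hbound hlim hb
  have htsum : ∑' i : ℕ, q⁻¹ ^ (i+1) * T = T / (q - 1) := by
    have he : ∑' i : ℕ, q⁻¹ ^ (i+1) * T = ∑' i : ℕ, q⁻¹ ^ i * (q⁻¹ * T) := by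
      congr 1; funext i; rw [pow_succ]; ring
    rw [he, tsum_mul_right, tsum_geometric_of_lt_one hqi0 hqi]
    have hq1 : q - 1 ≠ 0 := by linarith
    have e1 : 1 - q⁻¹ = (q-1)/q := by field_simp
    rw [e1, inv_div, div_mul_eq_mul_div, div_eq_div_iff (by linarith) hq1]
    field_simp
  rw [← htsum]
  exact main.congr (fun n => (key n).symm)

private lemma iterRec {a x v : ℕ → ℝ} (h : ∀ k, x (k+1) = a (k+1) * x k + v (k+1)) (k : ℕ) :
    ∀ m, x (k + m) = (∏ s ∈ Finset.Icc 1 m, a (k+s)) * x k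
      + ∑ s ∈ Finset.Icc 1 m, (∏ j ∈ Finset.Icc (s+1) m, a (k+j)) * v (k+s) := by
  intro m
  induction m with
  | zero => simp
  | succ m ih =>
    have h1 : x (k + (m+1)) = a (k + (m+1)) * x (k+m) + v (k + (m+1)) := by
      have := h (k + m)
      rw [show k + (m+1) = k + m + 1 by ring]
      exact this
    rw [h1, ih,
      Finset.prod_Icc_succ_top (Nat.le_add_left 1 m) (f := fun s => a (k+s)),
      Finset.sum_Icc_succ_top (Nat.le_add_left 1 m)]
    have hIccEmpty : Finset.Icc (m+1+1) (m+1) = (∅ : Finset ℕ) := Finset.Icc_eq_empty (by omega)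
    have hterm : ∀ s ∈ Finset.Icc 1 m,
        (∏ j ∈ Finset.Icc (s+1) (m+1), a (k+j)) * v (k+s)
          = a (k + (m+1)) * ((∏ j ∈ Finset.Icc (s+1) m, a (k+j)) * v (k+s)) := by
      intro s hs
      have hsm : s + 1 ≤ m + 1 := by
        have := (Finset.mem_Icc.mp hs).2; omega
      rw [Finset.prod_Icc_succ_top hsm]
      ring
    rw [Finset.sum_congr rfl hterm, hIccEmpty, ← Finset.mul_sum]
    simp
    ring


/-- strong consistency, Theorem 1: conditionally on {X_0 + ζ ≠ 0},
the least squares estimator â_r converges almost surely to a_r. -/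
theorem stmt15 {Ω : Type*} [MeasurableSpace Ω] (μ : Measure Ω) [IsProbabilityMeasure μ]
    (P : ℕ) (hP : 1 ≤ P) (a : ℕ → ℝ) (hper : ∀ k, a (k + P) = a k)
    (φ : ℝ) (hφdef : φ = ∏ j ∈ Finset.Icc 1 P, a j) (hφ : 1 < |φ|)
    (u : ℕ → Ω → ℝ) (humeas : ∀ k, Measurable (u k)) (huL2 : ∀ k, MemLp (u k) 2 μ)
    (hucent : ∀ k, ∫ ω, u k ω ∂μ = 0)
    (hpd : ∀ m : ℕ,
      Measure.map (fun ω => fun i : Fin m => u ((i : ℕ) + P) ω) μ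
        = Measure.map (fun ω => fun i : Fin m => u (i : ℕ) ω) μ)
    (X : ℕ → Ω → ℝ) (hX0 : MemLp (X 0) 2 μ)
    (hrec : ∀ k ω, X (k + 1) ω = a (k + 1) * X k ω + u (k + 1) ω)
    (U : ℕ → ℕ → Ω → ℝ)
    (hU : ∀ n r ω, U n r ω
      = ∑ s ∈ Finset.Icc 1 r, (∏ j ∈ Finset.Icc (s + 1) r, a j) * u (n * P + s) ω)
    (Z : ℕ → Ω → ℝ)
    (hZ : ∀ n ω, Z n ω = ∑ l ∈ Finset.range (n + 1), (φ ^ (l + 1))⁻¹ * U l P ω)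
    (ζ : Ω → ℝ)
    (hζ : ∀ᵐ ω ∂μ, Tendsto (fun n => Z n ω) atTop (𝓝 (ζ ω))) :
    ∀ r : ℕ, 1 ≤ r → r ≤ P →
      ∀ᵐ ω ∂μ, X 0 ω + ζ ω ≠ 0 →
        Tendsto (fun n =>
            (∑ j ∈ Finset.range n, X (j * P + r - 1) ω * X (j * P + r) ω)
              / ∑ j ∈ Finset.range n, (X (j * P + r - 1) ω) ^ 2)
          atTop (𝓝 (a r)) := by
  intro r hr1 hrP
  -- basic facts
  have hφ0 : φ ≠ 0 := by
    intro h; rw [h, abs_zero] at hφ; linarith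
  have ha : ∀ s, 1 ≤ s → s ≤ P → a s ≠ 0 := by
    intro s h1 h2 h0
    exact hφ0 (hφdef.trans (Finset.prod_eq_zero (Finset.mem_Icc.mpr ⟨h1, h2⟩) h0))
  have haper : ∀ l s, a (l * P + s) = a s := by
    intro l
    induction l with
    | zero => simp
    | succ l ih =>
      intro s
      have he : (l+1) * P + s = (l * P + s) + P := by ring
      rw [he, hper, ih]
  -- one-period recursion
  have hXP : ∀ l ω, X ((l+1) * P) ω = φ * X (l * P) ω + U l P ω := by
    intro l ω
    have := iterRec (a := a) (x := fun k => X k ω) (v := fun k => u k ω)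
      (fun k => hrec k ω) (l * P) P
    rw [show (l+1) * P = l * P + P by ring, this, hU]
    congr 1
    · congr 1
      rw [hφdef]
      exact Finset.prod_congr rfl fun s _ => haper l s
    · refine Finset.sum_congr rfl fun s _ => ?_
      congr 1
      exact Finset.prod_congr rfl fun j _ => haper l j
  have hXn : ∀ n ω, X ((n+1) * P) ω = φ^(n+1) * (X 0 ω + Z n ω) := by
    intro n ω
    induction n with
    | zero =>
      rw [hXP 0 ω, hZ 0 ω]
      simp only [Finset.range_one, Finset.sum_singleton, zero_mul, pow_one]
      field_simp
      simp
      field_simp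
    | succ n ih =>
      rw [hXP (n+1) ω, ih, hZ (n+1) ω, Finset.sum_range_succ, ← hZ n ω]
      have hpow : φ ^ (n+1+1) ≠ 0 := pow_ne_zero _ hφ0
      field_simp
      ring
  -- equal laws along periods
  have hmapP : ∀ k, Measure.map (u (k + P)) μ = Measure.map (u k) μ := by
    intro k
    have hF : Measurable (fun ω => fun i : Fin (k+1) => u ((i:ℕ) + P) ω) :=
      measurable_pi_lambda _ (fun i => humeas _)
    have hG : Measurable (fun ω => fun i : Fin (k+1) => u (i:ℕ) ω) :=
      measurable_pi_lambda _ (fun i => humeas _)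
    have := congrArg (Measure.map (fun g : Fin (k+1) → ℝ => g ⟨k, Nat.lt_succ_self k⟩)) (hpd (k+1))
    rwa [Measure.map_map (measurable_pi_apply _) hF,
      Measure.map_map (measurable_pi_apply _) hG] at this
  have hmap : ∀ j k, Measure.map (u (j * P + k)) μ = Measure.map (u k) μ := by
    intro j
    induction j with
    | zero => simp
    | succ j ih =>
      intro k
      have he : (j+1) * P + k = (j * P + k) + P := by ring
      rw [he, hmapP, ih]
  have hsn : ∀ j k, eLpNorm (u (j * P + k)) 2 μ = eLpNorm (u k) 2 μ := by
    intro j k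
    have h1 : eLpNorm (id : ℝ → ℝ) 2 (Measure.map (u (j * P + k)) μ)
        = eLpNorm (id : ℝ → ℝ) 2 (Measure.map (u k) μ) := by rw [hmap]
    rwa [eLpNorm_map_measure aestronglyMeasurable_id (humeas _).aemeasurable,
      eLpNorm_map_measure aestronglyMeasurable_id (humeas _).aemeasurable] at h1
  -- Borel-Cantelli
  set ρ : ℝ := (1 + |φ|) / 2 with hρdef
  have hρ1 : 1 < ρ := by rw [hρdef]; linarith
  have hρφ : ρ < |φ| := by rw [hρdef]; linarith
  have hρ0 : (0:ℝ) < ρ := by linarith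
  have hBC : ∀ k, ∀ᵐ ω ∂μ, ∀ᶠ j in atTop, |u (j * P + k) ω| < ρ ^ j := by
    intro k
    set x : ENNReal := ((ENNReal.ofReal ρ)⁻¹) ^ 2 with hxdef
    set S : ENNReal := eLpNorm (u k) 2 μ with hSdef
    have hS : S ^ 2 ≠ ⊤ := by
      exact ENNReal.pow_ne_top (huL2 k).2.ne
    have hx1 : x < 1 := by
      rw [hxdef]
      have : (ENNReal.ofReal ρ)⁻¹ < 1 :=
        ENNReal.inv_lt_one.mpr (by
          rw [← ENNReal.ofReal_one]
          exact ENNReal.ofReal_lt_ofReal_iff_of_nonneg (by norm_num) |>.mpr hρ1)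
      exact pow_lt_one₀ zero_le this (by norm_num)
    have hEbound : ∀ j : ℕ, μ {ω | ρ ^ j ≤ |u (j * P + k) ω|} ≤ x ^ j * S ^ 2 := by
      intro j
      have hε0 : (ENNReal.ofReal (ρ ^ j)) ≠ 0 :=
        (ENNReal.ofReal_pos.mpr (pow_pos hρ0 j)).ne'
      have hM := meas_ge_le_mul_pow_eLpNorm_enorm (μ := μ) (p := 2) two_ne_zero ENNReal.ofNat_ne_top
        (humeas (j * P + k)).aestronglyMeasurable hε0 (fun h => absurd h ENNReal.ofReal_ne_top)
      have hsub : {ω | ρ ^ j ≤ |u (j * P + k) ω|}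
          ⊆ {ω | ENNReal.ofReal (ρ ^ j) ≤ ‖u (j * P + k) ω‖ₑ} := by
        intro ω hω
        rw [Set.mem_setOf_eq, Real.enorm_eq_ofReal_abs]
        exact ENNReal.ofReal_le_ofReal hω
      refine (measure_mono hsub).trans (hM.trans (le_of_eq ?_))
      rw [hsn j k, ← hSdef]
      have h2 : ((2:ENNReal).toReal) = ((2:ℕ):ℝ) := by norm_num
      rw [h2, ENNReal.rpow_natCast, ENNReal.rpow_natCast]
      congr 1
      rw [hxdef, ENNReal.ofReal_pow hρ0.le, ENNReal.inv_pow, ← pow_mul, ← pow_mul, mul_comm j 2]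
  -- summable bound
    have hsum : (∑' j, μ {ω | ρ ^ j ≤ |u (j * P + k) ω|}) ≠ ⊤ := by
      refine ne_top_of_le_ne_top ?_ (ENNReal.tsum_le_tsum hEbound)
      rw [ENNReal.tsum_mul_right, ENNReal.tsum_geometric]
      exact ENNReal.mul_ne_top (ENNReal.inv_ne_top.mpr (by
        rw [← pos_iff_ne_zero, tsub_pos_iff_lt]; exact hx1)) hS
    filter_upwards [MeasureTheory.ae_eventually_notMem hsum] with ω hω
    exact hω.mono fun j hj => not_le.mp hj
  -- pointwise part
  filter_upwards [hζ, ae_all_iff.mpr hBC] with ω hZω hBCω hc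
  set c : ℝ := X 0 ω + ζ ω with hcdef
  set A : ℝ := ∏ s ∈ Finset.Icc 1 (r-1), a s with hAdef
  have hA : A ≠ 0 := by
    rw [hAdef, Finset.prod_ne_zero_iff]
    intro s hs
    have := Finset.mem_Icc.mp hs
    exact ha s this.1 (by omega)
  have hw : Tendsto (fun j => X (j * P) ω / φ ^ j) atTop (𝓝 c) := by
    have h1 : ∀ n : ℕ, X ((n+1) * P) ω / φ ^ (n+1) = X 0 ω + Z n ω := by
      intro n
      rw [hXn n ω]
      field_simp
    have h2 : Tendsto (fun n : ℕ => X ((n+1) * P) ω / φ ^ (n+1)) atTop (𝓝 c) := by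
      simp only [h1, hcdef]
      exact tendsto_const_nhds.add hZω
    exact (tendsto_add_atTop_iff_nat 1).mp h2
  have hudiv : ∀ k, Tendsto (fun j : ℕ => u (j * P + k) ω / φ ^ j) atTop (𝓝 0) := by
    intro k
    have hρφ' : ρ / |φ| < 1 := (div_lt_one (by positivity)).mpr hρφ
    refine squeeze_zero_norm' ?_
      (tendsto_pow_atTop_nhds_zero_of_lt_one (by positivity) hρφ')
    filter_upwards [hBCω k] with j hj
    rw [norm_div, Real.norm_eq_abs, Real.norm_eq_abs, abs_pow, div_pow]
    exact (div_le_div_iff_of_pos_right (by positivity)).mpr hj.le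
  set x : ℕ → ℝ := fun j => X (j * P + (r-1)) ω with hxdef
  have hxdecomp : ∀ j, x j = A * X (j * P) ω
      + ∑ s ∈ Finset.Icc 1 (r-1), (∏ t ∈ Finset.Icc (s+1) (r-1), a t) * u (j * P + s) ω := by
    intro j
    have h1 := iterRec (a := a) (x := fun k => X k ω) (v := fun k => u k ω)
      (fun k => hrec k ω) (j * P) (r-1)
    rw [hxdef]
    simp only [h1]
    congr 1
    · congr 1
      exact Finset.prod_congr rfl fun s _ => haper j s
    · refine Finset.sum_congr rfl fun s _ => ?_
      congr 1
      refine Finset.prod_congr rfl fun t _ => haper j t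
  have hxlim : Tendsto (fun j => x j / φ ^ j) atTop (𝓝 (A * c)) := by
    have he : ∀ j : ℕ, x j / φ ^ j = A * (X (j * P) ω / φ ^ j)
        + ∑ s ∈ Finset.Icc 1 (r-1),
            (∏ t ∈ Finset.Icc (s+1) (r-1), a t) * (u (j * P + s) ω / φ ^ j) := by
      intro j
      rw [hxdecomp j, add_div, Finset.sum_div, mul_div_assoc]
      congr 1
      exact Finset.sum_congr rfl fun s _ => mul_div_assoc _ _ _
    simp only [he]
    have h0 : Tendsto (fun j : ℕ => ∑ s ∈ Finset.Icc 1 (r-1),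
        (∏ t ∈ Finset.Icc (s+1) (r-1), a t) * (u (j * P + s) ω / φ ^ j)) atTop (𝓝 0) := by
      have := tendsto_finset_sum (Finset.Icc 1 (r-1))
        (fun s _ => ((hudiv s).const_mul (∏ t ∈ Finset.Icc (s+1) (r-1), a t)))
      simpa using this
    simpa using (hw.const_mul A).add h0
  have hyrel : ∀ j, X (j * P + r) ω = a r * x j + u (j * P + r) ω := by
    intro j
    have he : j * P + r = (j * P + (r-1)) + 1 := by omega
    rw [he, hrec]
    have he2 : j * P + (r-1) + 1 = j * P + r := by omega
    rw [he2, haper j r]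
  have hidx : ∀ j : ℕ, j * P + r - 1 = j * P + (r-1) := by intro j; omega
  -- q = φ²
  set q : ℝ := φ ^ 2 with hqdef
  have hq : 1 < q := by
    have h2 : |φ| ^ 2 = φ ^ 2 := sq_abs φ
    nlinarith [abs_nonneg φ]
  have hq0 : q ≠ 0 := by nlinarith
  have hφj : ∀ j : ℕ, (φ:ℝ) ^ j ≠ 0 := fun j => pow_ne_zero _ hφ0
  have hqj : ∀ j : ℕ, q ^ j = (φ ^ j) ^ 2 := by
    intro j; rw [hqdef, ← pow_mul, ← pow_mul, mul_comm]
  have hDen : Tendsto (fun n => (∑ j ∈ Finset.range n, x j ^ 2) / q ^ n) atTop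
      (𝓝 ((A * c) ^ 2 / (q - 1))) := by
    have hlem := lemG hq (hxlim.pow 2)
    refine hlem.congr fun n => ?_
    congr 1
    refine Finset.sum_congr rfl fun j _ => ?_
    rw [hqj j, div_pow]
    field_simp
  have hNum : Tendsto (fun n => (∑ j ∈ Finset.range n, x j * u (j * P + r) ω) / q ^ n) atTop
      (𝓝 0) := by
    have hmul : Tendsto (fun j => (x j / φ ^ j) * (u (j * P + r) ω / φ ^ j)) atTop
        (𝓝 ((A * c) * 0)) := hxlim.mul (hudiv r)
    have hlem := lemG hq hmul
    rw [mul_zero, zero_div] at hlem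
    refine hlem.congr fun n => ?_
    congr 1
    refine Finset.sum_congr rfl fun j _ => ?_
    rw [hqj j]
    field_simp
  have hL : (A * c) ^ 2 / (q - 1) ≠ 0 :=
    div_ne_zero (pow_ne_zero 2 (mul_ne_zero hA hc)) (by linarith)
  have hratio : Tendsto (fun n =>
      ((a r * (∑ j ∈ Finset.range n, x j ^ 2) + ∑ j ∈ Finset.range n, x j * u (j * P + r) ω) / q ^ n)
        / ((∑ j ∈ Finset.range n, x j ^ 2) / q ^ n)) atTop (𝓝 (a r)) := by
    have hnum : Tendsto (fun n =>
        (a r * (∑ j ∈ Finset.range n, x j ^ 2) + ∑ j ∈ Finset.range n, x j * u (j * P + r) ω) / q ^ n)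
        atTop (𝓝 (a r * ((A * c) ^ 2 / (q - 1)) + 0)) := by
      have := (hDen.const_mul (a r)).add hNum
      refine this.congr fun n => ?_
      rw [add_div, mul_div_assoc]
    have := hnum.div hDen hL
    rw [add_zero, mul_div_assoc, div_self hL, mul_one] at this
    exact this
  refine hratio.congr fun n => ?_
  have hqn : q ^ n ≠ 0 := pow_ne_zero _ hq0
  have hNeq : ∑ j ∈ Finset.range n, X (j * P + r - 1) ω * X (j * P + r) ω
      = a r * (∑ j ∈ Finset.range n, x j ^ 2) + ∑ j ∈ Finset.range n, x j * u (j * P + r) ω := by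
    rw [Finset.mul_sum, ← Finset.sum_add_distrib]
    refine Finset.sum_congr rfl fun j _ => ?_
    rw [hidx j, hyrel j, hxdef]
    ring
  have hDeq : ∑ j ∈ Finset.range n, (X (j * P + r - 1) ω) ^ 2 = ∑ j ∈ Finset.range n, x j ^ 2 := by
    refine Finset.sum_congr rfl fun j _ => ?_
    rw [hidx j, hxdef]
  rw [div_div_div_comm, div_self hqn, div_one, hNeq, hDeq]
end

section
/- In the explosive PAR(1) model with |φ| > 1, for each r = 1,…,P, φ^{-2n} C_n^{(r)} → 0 almost surely and in L¹, where C_n^{(r)} = ∑_{j=0}^{n-1} X_{jP+r-1} u_{jP+r}. -/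
open MeasureTheory Filter Topology Finset

private lemma aux_unroll {Ω : Type*} (a : ℕ → ℝ) (u X : ℕ → Ω → ℝ)
    (hrec : ∀ k ω, X (k + 1) ω = a (k + 1) * X k ω + u (k + 1) ω) (m q : ℕ) (ω : Ω) :
    X (m + q) ω = (∏ i ∈ Finset.Icc 1 q, a (m + i)) * X m ω
      + ∑ i ∈ Finset.Icc 1 q, (∏ l ∈ Finset.Icc (i+1) q, a (m + l)) * u (m + i) ω := by
  induction q with
  | zero => simp
  | succ q ih =>
    have h1 : m + (q+1) = (m + q) + 1 := by ring
    rw [h1, hrec, ih, Finset.prod_Icc_succ_top (Nat.le_add_left 1 q),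
      Finset.sum_Icc_succ_top (Nat.le_add_left 1 q)]
    have hc : ∀ i ∈ Finset.Icc 1 q, (∏ l ∈ Finset.Icc (i+1) (q+1), a (m + l)) * u (m+i) ω
        = a (m + (q+1)) * ((∏ l ∈ Finset.Icc (i+1) q, a (m + l)) * u (m+i) ω) := by
      intro i hi
      rw [Finset.prod_Icc_succ_top (by simp at hi; omega : i + 1 ≤ q + 1)]
      ring
    rw [Finset.sum_congr rfl hc, ← Finset.mul_sum]
    have : Finset.Icc (q+1+1) (q+1) = ∅ := by
      rw [Finset.Icc_eq_empty_iff]; omega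
    rw [this]
    simp only [Finset.prod_empty, one_mul]
    ring_nf

private lemma aux_shift (P : ℕ) (a : ℕ → ℝ) (hper : ∀ k, a (k + P) = a k) :
    ∀ j m, a (m + j * P) = a m := by
  intro j
  induction j with
  | zero => simp
  | succ j ih => intro m; rw [show m + (j+1)*P = (m + j*P) + P by ring, hper, ih]

private lemma aux_mod (P : ℕ) (hP : 1 ≤ P) (a : ℕ → ℝ) (hper : ∀ k, a (k + P) = a k) (t : ℕ) :
    a t = a (t % P) := by
  conv_lhs => rw [show t = t % P + (t / P) * P by rw [Nat.mod_add_div']]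
  rw [aux_shift P a hper]

private lemma aux_prod_window (P : ℕ) (hP : 1 ≤ P) (a : ℕ → ℝ)
    (hper : ∀ k, a (k + P) = a k) (φ : ℝ) (hφdef : φ = ∏ j ∈ Finset.Icc 1 P, a j)
    (hφ0 : φ ≠ 0) : ∀ m, ∏ i ∈ Finset.Icc 1 P, a (m + i) = φ := by
  have hne : ∀ t ∈ Finset.Icc 1 P, a t ≠ 0 := by
    intro t ht h0
    exact hφ0 (by rw [hφdef]; exact Finset.prod_eq_zero ht h0)
  have hne' : ∀ t, a (t + 1) ≠ 0 := by
    intro t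
    rw [aux_mod P hP a hper]
    rcases Nat.eq_zero_or_pos ((t+1) % P) with h | h
    · rw [h, show a 0 = a (0 + P) from (hper 0).symm, zero_add]
      exact hne P (by simp [hP])
    · exact hne _ (Finset.mem_Icc.2 ⟨h, le_of_lt (Nat.mod_lt _ (by omega))⟩)
  intro m
  induction m with
  | zero => simpa using hφdef.symm
  | succ m ih =>
    have key : (∏ i ∈ Finset.Icc 1 P, a (m + 1 + i)) * a (m + 1)
        = φ * a (m + 1) := by
      have h1 : ∏ i ∈ Finset.Icc 1 P, a (m + 1 + i)
          = ∏ i ∈ Finset.Icc 2 (P+1), a (m + i) := by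
        rw [show (2:ℕ) = 1 + 1 from rfl, ← Finset.map_add_right_Icc 1 P 1, Finset.prod_map]
        apply Finset.prod_congr rfl
        intro i _
        simp [addRightEmbedding]
        ring_nf
      have h2 : (∏ i ∈ Finset.Icc 2 (P+1), a (m + i)) * a (m + 1)
          = ∏ i ∈ Finset.Icc 1 (P+1), a (m + i) := by
        have : Finset.Icc 1 (P+1) = insert 1 (Finset.Icc 2 (P+1)) := by
          ext x; simp [Finset.mem_Icc]; omega
        rw [this, Finset.prod_insert (by simp)]
        ring
      have h3 : ∏ i ∈ Finset.Icc 1 (P+1), a (m + i)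
          = (∏ i ∈ Finset.Icc 1 P, a (m + i)) * a (m + (P+1)) := by
        rw [Finset.prod_Icc_succ_top (by omega : 1 ≤ P + 1)]
      have h4 : a (m + (P+1)) = a (m + 1) := by
        rw [show m + (P+1) = (m+1) + P by ring, hper]
      rw [h1, h2, h3, h4, ih]
    exact mul_right_cancel₀ (hne' m) key

/-- first part of Lemma 2: φ^{-2n} C_n^{(r)} → 0 a.s. and in L¹, where
C_n^{(r)} = ∑_{j=0}^{n-1} X_{jP+r-1} u_{jP+r}. -/
theorem stmt16 {Ω : Type*} [MeasurableSpace Ω] (μ : Measure Ω) [IsProbabilityMeasure μ]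
    (P : ℕ) (hP : 1 ≤ P) (a : ℕ → ℝ) (hper : ∀ k, a (k + P) = a k)
    (φ : ℝ) (hφdef : φ = ∏ j ∈ Finset.Icc 1 P, a j) (hφ : 1 < |φ|)
    (u : ℕ → Ω → ℝ) (humeas : ∀ k, Measurable (u k)) (huL2 : ∀ k, MemLp (u k) 2 μ)
    (hucent : ∀ k, ∫ ω, u k ω ∂μ = 0)
    (hpd : ∀ m : ℕ,
      Measure.map (fun ω => fun i : Fin m => u ((i : ℕ) + P) ω) μ
        = Measure.map (fun ω => fun i : Fin m => u (i : ℕ) ω) μ)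
    (X : ℕ → Ω → ℝ) (hX0 : MemLp (X 0) 2 μ)
    (hrec : ∀ k ω, X (k + 1) ω = a (k + 1) * X k ω + u (k + 1) ω) :
    ∀ r : ℕ, 1 ≤ r → r ≤ P →
      (∀ᵐ ω ∂μ, Tendsto
          (fun n => ((φ ^ 2) ^ n)⁻¹ *
            ∑ j ∈ Finset.range n, X (j * P + r - 1) ω * u (j * P + r) ω)
          atTop (𝓝 0)) ∧
      Tendsto (fun n => ∫ ω,
          |((φ ^ 2) ^ n)⁻¹ *
            ∑ j ∈ Finset.range n, X (j * P + r - 1) ω * u (j * P + r) ω| ∂μ)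
        atTop (𝓝 0) := by
  intro r hr1 hrP
  have hφ0 : φ ≠ 0 := by
    intro h; rw [h, abs_zero] at hφ; exact absurd hφ (by norm_num)
  have haprod := aux_prod_window P hP a hper φ hφdef hφ0
  -- X k is in L²
  have hXL2 : ∀ k, MemLp (X k) 2 μ := by
    intro k
    induction k with
    | zero => exact hX0
    | succ k ih =>
      have hXe : X (k+1) = fun ω => a (k+1) * X k ω + u (k+1) ω := funext (hrec k)
      rw [hXe]
      exact (ih.const_mul _).add (huL2 _)
  -- eLpNorm of u is periodic
  have hushiftP : ∀ k, eLpNorm (u (k + P)) 2 μ = eLpNorm (u k) 2 μ := by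
    intro k
    set g : (Fin (k+1) → ℝ) → ℝ := fun v => v ⟨k, k.lt_succ_self⟩ with hg
    have hgm : Measurable g := measurable_pi_apply _
    have hf1 : Measurable (fun ω => fun i : Fin (k+1) => u ((i : ℕ) + P) ω) :=
      measurable_pi_lambda _ (fun i => humeas _)
    have hf2 : Measurable (fun ω => fun i : Fin (k+1) => u (i : ℕ) ω) :=
      measurable_pi_lambda _ (fun i => humeas _)
    have e1 : eLpNorm g 2 (Measure.map (fun ω => fun i : Fin (k+1) => u ((i : ℕ) + P) ω) μ)
        = eLpNorm (u (k + P)) 2 μ := by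
      rw [eLpNorm_map_measure hgm.aestronglyMeasurable hf1.aemeasurable]; rfl
    have e2 : eLpNorm g 2 (Measure.map (fun ω => fun i : Fin (k+1) => u (i : ℕ) ω) μ)
        = eLpNorm (u k) 2 μ := by
      rw [eLpNorm_map_measure hgm.aestronglyMeasurable hf2.aemeasurable]; rfl
    rw [← e1, ← e2, hpd (k+1)]
  have hushift : ∀ j m, eLpNorm (u (m + j * P)) 2 μ = eLpNorm (u m) 2 μ := by
    intro j
    induction j with
    | zero => simp
    | succ j ih =>
      intro m
      rw [show m + (j+1)*P = (m + j*P) + P by ring, hushiftP, ih]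
  have humod : ∀ k, eLpNorm (u k) 2 μ = eLpNorm (u (k % P)) 2 μ := by
    intro k
    conv_lhs => rw [show k = k % P + (k / P) * P by rw [Nat.mod_add_div']]
    rw [hushift]
  -- uniform bounds
  set B : ℝ := 1 + ∑ i ∈ Finset.range P, |a i| with hBdef
  have hB1 : (1:ℝ) ≤ B := by
    have : (0:ℝ) ≤ ∑ i ∈ Finset.range P, |a i| :=
      Finset.sum_nonneg fun i _ => abs_nonneg _
    simp [hBdef]; linarith
  have hBa : ∀ t, |a t| ≤ B := by
    intro t
    rw [aux_mod P hP a hper t]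
    have hmem : t % P ∈ Finset.range P := Finset.mem_range.2 (Nat.mod_lt _ (by omega))
    have := Finset.single_le_sum (f := fun i => |a i|) (fun i _ => abs_nonneg _) hmem
    simp [hBdef]; linarith
  have hB0 : (0:ℝ) ≤ B := by linarith
  have hprodB : ∀ m i : ℕ, |∏ l ∈ Finset.Icc (i+1) P, a (m + l)| ≤ B ^ P := by
    intro m i
    rw [Finset.abs_prod]
    calc ∏ l ∈ Finset.Icc (i+1) P, |a (m + l)| ≤ ∏ l ∈ Finset.Icc (i+1) P, B :=
          Finset.prod_le_prod (fun l _ => abs_nonneg _) (fun l _ => hBa _)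
      _ = B ^ (Finset.Icc (i+1) P).card := by rw [Finset.prod_const]
      _ ≤ B ^ P := by
          apply pow_le_pow_right₀ hB1
          rw [Nat.card_Icc]; omega
  set Usum : ENNReal := ∑ t ∈ Finset.range P, eLpNorm (u t) 2 μ with hUdef
  have hUt : Usum ≠ ⊤ := by
    rw [hUdef]
    exact (ENNReal.sum_lt_top.2 fun t _ => (huL2 t).eLpNorm_lt_top).ne
  have huU : ∀ k, eLpNorm (u k) 2 μ ≤ Usum := by
    intro k
    rw [humod k, hUdef]
    exact Finset.single_le_sum (f := fun t => eLpNorm (u t) 2 μ) (fun t _ => bot_le)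
      (Finset.mem_range.2 (Nat.mod_lt _ (by omega)))
  set D : ENNReal := (P : ENNReal) * (ENNReal.ofReal (B ^ P) * Usum) with hDdef
  have hDt : D ≠ ⊤ := by
    rw [hDdef]
    exact ENNReal.mul_ne_top (by simp) (ENNReal.mul_ne_top ENNReal.ofReal_ne_top hUt)
  -- the noise accumulated over one period
  set W : ℕ → Ω → ℝ := fun j ω => ∑ i ∈ Finset.Icc 1 P,
      (∏ l ∈ Finset.Icc (i+1) P, a (j * P + r - 1 + l)) * u (j * P + r - 1 + i) ω with hWdef
  have hWm : ∀ j, MemLp (W j) 2 μ := by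
    intro j
    have : W j = ∑ i ∈ Finset.Icc 1 P, (fun ω =>
        (∏ l ∈ Finset.Icc (i+1) P, a (j * P + r - 1 + l)) * u (j * P + r - 1 + i) ω) := by
      ext ω; simp [hWdef]
    rw [this]
    exact memLp_finset_sum' _ fun i _ => (huL2 _).const_mul _
  have hWb : ∀ j, eLpNorm (W j) 2 μ ≤ D := by
    intro j
    have he : W j = ∑ i ∈ Finset.Icc 1 P, (fun ω =>
        (∏ l ∈ Finset.Icc (i+1) P, a (j * P + r - 1 + l)) * u (j * P + r - 1 + i) ω) := by
      ext ω; simp [hWdef]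
    rw [he]
    calc eLpNorm (∑ i ∈ Finset.Icc 1 P, (fun ω =>
        (∏ l ∈ Finset.Icc (i+1) P, a (j * P + r - 1 + l)) * u (j * P + r - 1 + i) ω)) 2 μ
        ≤ ∑ i ∈ Finset.Icc 1 P, eLpNorm (fun ω =>
            (∏ l ∈ Finset.Icc (i+1) P, a (j * P + r - 1 + l)) * u (j * P + r - 1 + i) ω) 2 μ :=
          eLpNorm_sum_le (fun i _ => ((huL2 _).const_mul _).1) one_le_two
      _ ≤ ∑ i ∈ Finset.Icc 1 P, ENNReal.ofReal (B ^ P) * Usum := by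
          apply Finset.sum_le_sum
          intro i _
          have hsm : (fun ω => (∏ l ∈ Finset.Icc (i+1) P, a (j * P + r - 1 + l))
              * u (j * P + r - 1 + i) ω)
              = (∏ l ∈ Finset.Icc (i+1) P, a (j * P + r - 1 + l)) • u (j * P + r - 1 + i) := by
            ext ω; simp [smul_eq_mul]
          rw [hsm, eLpNorm_const_smul]
          apply mul_le_mul'
          · rw [Real.enorm_eq_ofReal_abs]
            exact ENNReal.ofReal_le_ofReal (hprodB _ _)
          · exact huU _
      _ = (P : ENNReal) * (ENNReal.ofReal (B ^ P) * Usum) := by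
          rw [Finset.sum_const, Nat.card_Icc, nsmul_eq_mul]
          norm_num
      _ = D := hDdef.symm
  -- one-period recursion
  have hYrec : ∀ j ω, X ((j+1) * P + r - 1) ω = φ * X (j * P + r - 1) ω + W j ω := by
    intro j ω
    have h := aux_unroll a u X hrec (j * P + r - 1) P ω
    have hidx : j * P + r - 1 + P = (j+1) * P + r - 1 := by
      rw [show (j+1) * P = j * P + P by ring]
      generalize j * P = t
      omega
    rw [hidx] at h
    rw [h, haprod, hWdef]
  -- growth bound on X along the subsequence
  set pφ : ENNReal := ENNReal.ofReal |φ| with hpφdef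
  have hpφ1 : 1 ≤ pφ := by
    rw [hpφdef]
    exact ENNReal.one_le_ofReal.2 hφ.le
  have hpφt : pφ ≠ ⊤ := ENNReal.ofReal_ne_top
  have hnn : ‖φ‖ₑ = pφ := by
    rw [hpφdef, Real.enorm_eq_ofReal_abs]
  set C : ENNReal := eLpNorm (X (r-1)) 2 μ + D with hCdef
  have hCt : C ≠ ⊤ := by
    rw [hCdef]
    exact ENNReal.add_ne_top.2 ⟨(hXL2 _).eLpNorm_lt_top.ne, hDt⟩
  have hXb : ∀ j : ℕ, eLpNorm (X (j * P + r - 1)) 2 μ ≤ C * (j+1 : ℕ) * pφ ^ j := by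
    intro j
    induction j with
    | zero =>
      simp only [zero_mul, zero_add, pow_zero, mul_one, Nat.cast_one]
      exact le_self_add
    | succ j ih =>
      have hXe : X ((j+1) * P + r - 1) = fun ω => φ * X (j * P + r - 1) ω + W j ω :=
        funext (hYrec j)
      have hsm : (fun ω => φ * X (j * P + r - 1) ω) = φ • X (j * P + r - 1) := by
        ext ω; simp [smul_eq_mul]
      calc eLpNorm (X ((j+1) * P + r - 1)) 2 μ
          ≤ eLpNorm (fun ω => φ * X (j * P + r - 1) ω) 2 μ + eLpNorm (W j) 2 μ := by
            rw [hXe]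
            exact eLpNorm_add_le ((hXL2 _).const_mul φ).1 (hWm j).1 one_le_two
        _ = pφ * eLpNorm (X (j * P + r - 1)) 2 μ + eLpNorm (W j) 2 μ := by
            rw [hsm, eLpNorm_const_smul, hnn]
        _ ≤ pφ * (C * (j+1 : ℕ) * pφ ^ j) + D := add_le_add (mul_le_mul_right ih _) (hWb j)
        _ ≤ pφ * (C * (j+1 : ℕ) * pφ ^ j) + C * pφ ^ (j+1) := by
            apply add_le_add le_rfl
            calc D ≤ C := by rw [hCdef]; exact le_add_self
              _ = C * 1 := (mul_one C).symm
              _ ≤ C * pφ ^ (j+1) := mul_le_mul_right (Left.one_le_pow_of_le hpφ1 _) _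
        _ = C * (j+1+1 : ℕ) * pφ ^ (j+1) := by
            push_cast
            ring
  -- per-term L¹ bound
  set Ur : ENNReal := eLpNorm (u r) 2 μ with hUrdef
  have hur : ∀ j, eLpNorm (u (j * P + r)) 2 μ = Ur := by
    intro j; rw [show j * P + r = r + j * P by ring, hushift]
  set g : ℕ → Ω → ℝ := fun j ω => X (j * P + r - 1) ω * u (j * P + r) ω with hgdef
  have hpqr : (1 : ENNReal) / 1 = 1 / 2 + 1 / 2 := by
    rw [one_div_one, ENNReal.add_halves]
  have hgmem : ∀ j, MemLp (g j) 1 μ := by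
    intro j
    have hge : g j = (X (j * P + r - 1)) • (u (j * P + r)) := by
      ext ω; simp [hgdef, smul_eq_mul]
    rw [hge]
    exact MemLp.smul (huL2 _) (hXL2 _)
  have hgint : ∀ j, Integrable (g j) μ := fun j => memLp_one_iff_integrable.1 (hgmem j)
  have hgb : ∀ j, eLpNorm (g j) 1 μ ≤ C * (j+1:ℕ) * pφ ^ j * Ur := by
    intro j
    have hge : g j = (X (j * P + r - 1)) • (u (j * P + r)) := by
      ext ω; simp [hgdef, smul_eq_mul]
    calc eLpNorm (g j) 1 μ
        ≤ eLpNorm (X (j * P + r - 1)) 2 μ * eLpNorm (u (j * P + r)) 2 μ := by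
          rw [hge]
          exact eLpNorm_smul_le_mul_eLpNorm (huL2 _).1 (hXL2 _).1
      _ ≤ (C * (j+1:ℕ) * pφ ^ j) * Ur := by rw [hur]; exact mul_le_mul_left (hXb j) _
  -- partial sums
  set S : ℕ → Ω → ℝ := fun n ω => ∑ j ∈ Finset.range n, g j ω with hSdef
  have hSint : ∀ n, Integrable (S n) μ := fun n => integrable_finset_sum _ (fun j _ => hgint j)
  set K : ENNReal := C * Ur with hKdef
  have hKt : K ≠ ⊤ := ENNReal.mul_ne_top hCt ((huL2 r).eLpNorm_lt_top.ne)
  have hSb : ∀ n : ℕ, eLpNorm (S n) 1 μ ≤ K * (n:ℕ) * (n:ℕ) * pφ ^ n := by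
    intro n
    have he : S n = ∑ j ∈ Finset.range n, g j := by ext ω; simp [hSdef]
    calc eLpNorm (S n) 1 μ ≤ ∑ j ∈ Finset.range n, eLpNorm (g j) 1 μ := by
          rw [he]; exact eLpNorm_sum_le (fun j _ => (hgint j).1) le_rfl
      _ ≤ ∑ _j ∈ Finset.range n, K * (n:ℕ) * pφ ^ n := by
          apply Finset.sum_le_sum
          intro j hj
          have hjn : j < n := Finset.mem_range.1 hj
          calc eLpNorm (g j) 1 μ ≤ C * (j+1:ℕ) * pφ ^ j * Ur := hgb j
            _ ≤ C * (n:ℕ) * pφ ^ n * Ur := by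
                apply mul_le_mul_left
                exact mul_le_mul' (mul_le_mul_right (Nat.cast_le.2 (by omega)) _)
                  (pow_le_pow_right' hpφ1 hjn.le)
            _ = K * (n:ℕ) * pφ ^ n := by rw [hKdef]; ring
      _ = (n:ℕ) * (K * (n:ℕ) * pφ ^ n) := by
          rw [Finset.sum_const, Finset.card_range, nsmul_eq_mul]
      _ = K * (n:ℕ) * (n:ℕ) * pφ ^ n := by ring
  -- real-valued bound on ∫ |S n|
  have hφpos : (0:ℝ) < |φ| := lt_trans one_pos hφ
  set KR : ℝ := K.toReal with hKRdef
  have hKR0 : 0 ≤ KR := ENNReal.toReal_nonneg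
  have hSreal : ∀ n : ℕ, ∫ ω, |S n ω| ∂μ ≤ KR * (n:ℝ) * (n:ℝ) * |φ| ^ n := by
    intro n
    have h1 : ∫ ω, |S n ω| ∂μ = (eLpNorm (S n) 1 μ).toReal := by
      rw [eLpNorm_one_eq_lintegral_enorm, ← integral_norm_eq_lintegral_enorm (hSint n).1]
      simp [Real.norm_eq_abs]
    have hfin : K * (n:ℕ) * (n:ℕ) * pφ ^ n ≠ ⊤ :=
      ENNReal.mul_ne_top (ENNReal.mul_ne_top (ENNReal.mul_ne_top hKt
        (ENNReal.natCast_ne_top n)) (ENNReal.natCast_ne_top n)) (ENNReal.pow_ne_top hpφt)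
    have h2 : (eLpNorm (S n) 1 μ).toReal ≤ (K * (n:ℕ) * (n:ℕ) * pφ ^ n).toReal :=
      ENNReal.toReal_mono hfin (hSb n)
    have h3 : (K * (n:ℕ) * (n:ℕ) * pφ ^ n).toReal = KR * (n:ℝ) * (n:ℝ) * |φ| ^ n := by
      have hpt : pφ.toReal = |φ| := by
        rw [hpφdef]; exact ENNReal.toReal_ofReal (abs_nonneg φ)
      simp [hKRdef, ENNReal.toReal_mul, ENNReal.toReal_pow, hpt]
    rw [h1]
    rw [h3] at h2
    exact h2
  -- bound on the normalized quantity
  set s : ℝ := |φ|⁻¹ with hsdef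
  have hs0 : 0 < s := inv_pos.2 hφpos
  have hs1 : |s| < 1 := by
    rw [hsdef, abs_inv, abs_abs]
    exact inv_lt_one_of_one_lt₀ hφ
  have hkey : ∀ n : ℕ, |((φ^2)^n)⁻¹| * |φ| ^ n = s ^ n := by
    intro n
    rw [abs_inv, abs_pow, abs_pow, sq_abs, ← inv_pow, ← mul_pow]
    congr 1
    rw [hsdef, sq]
    field_simp
    exact sq_abs φ
  have hFb : ∀ n : ℕ, (∫ ω, |((φ^2)^n)⁻¹ * S n ω| ∂μ) ≤ KR * ((n:ℝ)^2 * s ^ n) := by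
    intro n
    have h1 : ∀ ω, |((φ^2)^n)⁻¹ * S n ω| = |((φ^2)^n)⁻¹| * |S n ω| := fun ω => abs_mul _ _
    calc (∫ ω, |((φ^2)^n)⁻¹ * S n ω| ∂μ)
        = |((φ^2)^n)⁻¹| * ∫ ω, |S n ω| ∂μ := by
          simp_rw [h1]; rw [integral_const_mul]
      _ ≤ |((φ^2)^n)⁻¹| * (KR * (n:ℝ) * (n:ℝ) * |φ| ^ n) :=
          mul_le_mul_of_nonneg_left (hSreal n) (abs_nonneg _)
      _ = KR * (n:ℝ)^2 * (|((φ^2)^n)⁻¹| * |φ| ^ n) := by ring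
      _ = KR * ((n:ℝ)^2 * s ^ n) := by rw [hkey n]; ring
  have hlim : Tendsto (fun n : ℕ => KR * ((n:ℝ)^2 * s ^ n)) atTop (𝓝 0) := by
    have h := (tendsto_pow_const_mul_const_pow_of_abs_lt_one 2 hs1).const_mul KR
    simpa using h
  constructor
  · -- almost sure convergence
    set F : ℕ → Ω → ℝ := fun n ω => ((φ^2)^n)⁻¹ * S n ω with hFdef
    have hFint : ∀ n, Integrable (F n) μ := fun n => (hSint n).const_mul _
    have hbseq_nonneg : ∀ n : ℕ, (0:ℝ) ≤ KR * ((n:ℝ)^2 * s ^ n) := by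
      intro n
      have := pow_nonneg hs0.le n
      positivity
    have hbsum : Summable (fun n : ℕ => KR * ((n:ℝ)^2 * s ^ n)) := by
      apply Summable.mul_left
      have := summable_pow_mul_geometric_of_norm_lt_one 2
        (show ‖s‖ < 1 by rwa [Real.norm_eq_abs])
      simpa using this
    have hlin : ∀ n, (∫⁻ ω, ‖F n ω‖₊ ∂μ) ≤ ENNReal.ofReal (KR * ((n:ℝ)^2 * s ^ n)) := by
      intro n
      change (∫⁻ ω, ‖F n ω‖ₑ ∂μ) ≤ _
      rw [← ofReal_integral_norm_eq_lintegral_enorm (hFint n)]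
      apply ENNReal.ofReal_le_ofReal
      calc ∫ ω, ‖F n ω‖ ∂μ = ∫ ω, |F n ω| ∂μ := by simp [Real.norm_eq_abs]
        _ ≤ KR * ((n:ℝ)^2 * s ^ n) := hFb n
    have htsum : (∑' n, ∫⁻ ω, ‖F n ω‖₊ ∂μ) < ⊤ := by
      calc (∑' n, ∫⁻ ω, ‖F n ω‖₊ ∂μ)
          ≤ ∑' n : ℕ, ENNReal.ofReal (KR * ((n:ℝ)^2 * s ^ n)) := ENNReal.tsum_le_tsum hlin
        _ = ENNReal.ofReal (∑' n : ℕ, KR * ((n:ℝ)^2 * s ^ n)) :=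
            (ENNReal.ofReal_tsum_of_nonneg hbseq_nonneg hbsum).symm
        _ < ⊤ := ENNReal.ofReal_lt_top
    have hmeas : ∀ n, AEMeasurable (fun ω => (‖F n ω‖₊ : ENNReal)) μ :=
      fun n => (hFint n).1.enorm
    have hlt : (∫⁻ ω, ∑' n, (‖F n ω‖₊ : ENNReal) ∂μ) < ⊤ := by
      rw [lintegral_tsum hmeas]
      exact htsum
    have hae : ∀ᵐ ω ∂μ, (∑' n, (‖F n ω‖₊ : ENNReal)) < ⊤ :=
      ae_lt_top' (AEMeasurable.ennreal_tsum hmeas) hlt.ne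
    filter_upwards [hae] with ω hω
    have hsumm : Summable (fun n => ‖F n ω‖₊) :=
      ENNReal.tsum_coe_ne_top_iff_summable.1 hω.ne
    have hsummR : Summable (fun n => ‖F n ω‖) := by
      have := NNReal.summable_coe.2 hsumm
      simpa [coe_nnnorm] using this
    have htend : Tendsto (fun n => ‖F n ω‖) atTop (𝓝 0) := hsummR.tendsto_atTop_zero
    have : Tendsto (fun n => F n ω) atTop (𝓝 0) :=
      tendsto_zero_iff_norm_tendsto_zero.2 htend
    simpa [hFdef, hSdef, hgdef] using this
  · -- L¹ convergence
    apply squeeze_zero (fun n => integral_nonneg fun ω => abs_nonneg _) _ hlim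
    intro n
    simpa [hSdef, hgdef] using hFb n
end
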